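/- arXiv:1909.08995 — 8 statements merged into one kernel-verified Lean document; each statement's English description precedes it below -/
import Mathlib

section
/- Let Ω₁,…,Ωₙ (n≥2) be subsets of a normed vector space X and x̄ ∈ ∩_{i=1}^n Ωᵢ. Then the collection {Ω₁,…,Ωₙ} is stationary at x̄ if and only if for every ε>0 there exist a number ρ ∈ (0,ε) and vectors a₁,…,a_{n−1} ∈ X with max_{1≤i≤n−1}‖aᵢ‖ < ερ and ∩_{i=1}^{n−1}(Ωᵢ−aᵢ) ∩ Ωₙ ∩ B_ρ(x̄) = ∅. -/
lemma fin_ciSup_lt_iff {k : ℕ} [NeZero k] (a : Fin k → ℝ) {c : ℝ} :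
    (⨆ i, a i) < c ↔ ∀ i, a i < c := by
  constructor
  · intro h i
    exact lt_of_le_of_lt (le_ciSup (Set.Finite.bddAbove (Set.finite_range a)) i) h
  · intro h
    obtain ⟨i, hi⟩ := exists_eq_ciSup_of_finite (f := a)
    rw [← hi]; exact h i

/-- stationarity of a collection of `m+1 = n ≥ 2` sets at `xbar` is
equivalent to its asymmetric version where only the first `n-1` sets are translated. -/
theorem stmt2 {X : Type*} [NormedAddCommGroup X] [NormedSpace ℝ X] {m : ℕ} (hm : 1 ≤ m)
    (Ω : Fin (m + 1) → Set X) (xbar : X) (hxbar : ∀ i, xbar ∈ Ω i) :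
    (∀ ε > (0 : ℝ), ∃ ρ : ℝ, 0 < ρ ∧ ρ < ε ∧ ∃ a : Fin (m + 1) → X,
        (⨆ i, ‖a i‖) < ε * ρ ∧
        (⋂ i, (fun z => z - a i) '' Ω i) ∩ Metric.ball xbar ρ = ∅) ↔
    (∀ ε > (0 : ℝ), ∃ ρ : ℝ, 0 < ρ ∧ ρ < ε ∧ ∃ a : Fin m → X,
        (⨆ i, ‖a i‖) < ε * ρ ∧
        ((⋂ i : Fin m, (fun z => z - a i) '' Ω i.castSucc) ∩ Ω (Fin.last m)) ∩
          Metric.ball xbar ρ = ∅) := by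
  have : NeZero m := ⟨by omega⟩
  constructor
  · intro H ε hε
    set ε' : ℝ := min (ε / 8) (1 / 2) with hε'def
    have hε'pos : 0 < ε' := lt_min (by linarith) (by norm_num)
    have hε'le : ε' ≤ ε / 8 := min_le_left _ _
    have hε'half : ε' ≤ 1 / 2 := min_le_right _ _
    obtain ⟨ρ, hρ0, hρε', a, hsup, hempty⟩ := H ε' hε'pos
    have hnorm : ∀ i, ‖a i‖ < ε' * ρ := (fin_ciSup_lt_iff _).mp hsup
    refine ⟨ρ * (1 - ε'), by nlinarith, by nlinarith, fun i => a i.castSucc - a (Fin.last m), ?_, ?_⟩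
    · rw [fin_ciSup_lt_iff]
      intro i
      calc ‖a i.castSucc - a (Fin.last m)‖ ≤ ‖a i.castSucc‖ + ‖a (Fin.last m)‖ :=
            norm_sub_le _ _
        _ < ε' * ρ + ε' * ρ := add_lt_add (hnorm _) (hnorm _)
        _ < ε * (ρ * (1 - ε')) := by
            nlinarith [mul_pos hε hρ0, mul_le_mul_of_nonneg_right hε'le hρ0.le,
              mul_le_mul_of_nonneg_left hε'half (mul_pos hε hρ0).le]
    · rw [Set.eq_empty_iff_forall_notMem]
      rintro x ⟨⟨hx1, hx2⟩, hxb⟩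
      rw [Set.mem_iInter] at hx1
      rw [Set.eq_empty_iff_forall_notMem] at hempty
      apply hempty (x - a (Fin.last m))
      constructor
      · rw [Set.mem_iInter]
        intro i
        induction i using Fin.lastCases with
        | last => exact ⟨x, hx2, rfl⟩
        | cast j =>
          obtain ⟨y, hy, hyx⟩ := hx1 j
          refine ⟨y, hy, ?_⟩
          simp only at hyx ⊢
          rw [← hyx]; abel
      · rw [Metric.mem_ball] at hxb ⊢
        calc dist (x - a (Fin.last m)) xbar ≤ dist x xbar + ‖a (Fin.last m)‖ := by
              rw [dist_eq_norm, dist_eq_norm]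
              have : x - a (Fin.last m) - xbar = (x - xbar) + (-(a (Fin.last m))) := by abel
              rw [this]
              simpa using norm_add_le (x - xbar) (-(a (Fin.last m)))
          _ < ρ * (1 - ε') + ε' * ρ := add_lt_add hxb (hnorm _)
          _ = ρ := by ring
  · intro H ε hε
    obtain ⟨ρ, hρ0, hρε, a, hsup, hempty⟩ := H ε hε
    have hnorm : ∀ i, ‖a i‖ < ε * ρ := (fin_ciSup_lt_iff _).mp hsup
    refine ⟨ρ, hρ0, hρε, Fin.snoc a 0, ?_, ?_⟩
    · rw [fin_ciSup_lt_iff]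
      intro i
      induction i using Fin.lastCases with
      | last => simp [Fin.snoc_last]; positivity
      | cast j => rw [Fin.snoc_castSucc]; exact hnorm j
    · rw [Set.eq_empty_iff_forall_notMem]
      rintro x ⟨hx1, hxb⟩
      rw [Set.mem_iInter] at hx1
      rw [Set.eq_empty_iff_forall_notMem] at hempty
      apply hempty x
      refine ⟨⟨Set.mem_iInter.mpr fun j => ?_, ?_⟩, hxb⟩
      · have := hx1 j.castSucc
        rwa [Fin.snoc_castSucc] at this
      · have := hx1 (Fin.last m)
        rw [Fin.snoc_last] at this
        obtain ⟨y, hy, hyx⟩ := this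
        simp only [sub_zero] at hyx
        rwa [← hyx]
end

section
/- Let Ω₁,…,Ωₙ (n≥2) be subsets of a normed vector space X and x̄ ∈ ∩_{i=1}^n Ωᵢ. Then the collection {Ω₁,…,Ωₙ} is approximately stationary at x̄ if and only if for every ε>0 there exist a number ρ ∈ (0,ε), points ωᵢ ∈ Ωᵢ ∩ B_ε(x̄) (i=1,…,n) and vectors a₁,…,a_{n−1} ∈ X with max_{1≤i≤n−1}‖aᵢ‖ < ερ and ∩_{i=1}^{n−1}(Ωᵢ−ωᵢ−aᵢ) ∩ (Ωₙ−ωₙ) ∩ (ρ𝔹) = ∅, where 𝔹 is the open unit ball of X. -/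
/-- approximate stationarity of a collection of `m+1 = n ≥ 2` sets at `xbar`
is equivalent to its asymmetric version where only the first `n-1` (shifted) sets are
translated. -/
theorem stmt3 {X : Type*} [NormedAddCommGroup X] [NormedSpace ℝ X] {m : ℕ} (hm : 1 ≤ m)
    (Ω : Fin (m + 1) → Set X) (xbar : X) (hxbar : ∀ i, xbar ∈ Ω i) :
    (∀ ε > (0 : ℝ), ∃ ρ : ℝ, 0 < ρ ∧ ρ < ε ∧ ∃ ω : Fin (m + 1) → X,
        (∀ i, ω i ∈ Ω i ∩ Metric.ball xbar ε) ∧ ∃ a : Fin (m + 1) → X,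
        (⨆ i, ‖a i‖) < ε * ρ ∧
        (⋂ i, (fun z => z - ω i - a i) '' Ω i) ∩ Metric.ball (0 : X) ρ = ∅) ↔
    (∀ ε > (0 : ℝ), ∃ ρ : ℝ, 0 < ρ ∧ ρ < ε ∧ ∃ ω : Fin (m + 1) → X,
        (∀ i, ω i ∈ Ω i ∩ Metric.ball xbar ε) ∧ ∃ a : Fin m → X,
        (⨆ i, ‖a i‖) < ε * ρ ∧
        ((⋂ i : Fin m, (fun z => z - ω i.castSucc - a i) '' Ω i.castSucc) ∩
            ((fun z => z - ω (Fin.last m)) '' Ω (Fin.last m))) ∩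
          Metric.ball (0 : X) ρ = ∅) := by
  constructor
  · -- full → asymmetric
    intro h ε hε
    set ε' : ℝ := min ε 1 / 4 with hε'def
    have hε'pos : 0 < ε' := by
      have : 0 < min ε 1 := lt_min hε one_pos
      positivity
    have hε'le1 : ε' ≤ 1/4 := by
      have := min_le_right ε 1
      rw [hε'def]; linarith
    have hε'leε : ε' ≤ ε/4 := by
      have := min_le_left ε 1
      rw [hε'def]; linarith
    haveI : Nonempty (Fin m) := ⟨⟨0, hm⟩⟩
    obtain ⟨ρ, hρ0, hρε', ω, hω, a, hsup, hempty⟩ := h ε' hε'pos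
    have hbdd : BddAbove (Set.range fun i => ‖a i‖) :=
      Set.Finite.bddAbove (Set.finite_range _)
    have hai : ∀ i, ‖a i‖ < ε' * ρ := fun i =>
      lt_of_le_of_lt (le_ciSup hbdd i) hsup
    set L : ℝ := ‖a (Fin.last m)‖ with hL
    have hLnn : 0 ≤ L := norm_nonneg _
    have hLlt : L < ε' * ρ := hai (Fin.last m)
    have hρ'pos : 0 < ρ - L := by nlinarith
    refine ⟨ρ - L, hρ'pos, ?_, ω, fun i => ⟨(hω i).1, ?_⟩,
      fun i => a i.castSucc - a (Fin.last m), ?_, ?_⟩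
    · linarith
    · have := (hω i).2
      rw [Metric.mem_ball] at this ⊢
      linarith
    · -- sup bound
      have hle : (⨆ i : Fin m, ‖a i.castSucc - a (Fin.last m)‖) ≤ ε' * ρ + L := by
        apply ciSup_le
        intro i
        have := norm_sub_le (a i.castSucc) (a (Fin.last m))
        have h2 := (hai i.castSucc).le
        linarith
      have hlt : ε' * ρ + L < ε * (ρ - L) := by nlinarith
      linarith
    · -- emptiness
      rw [Set.eq_empty_iff_forall_notMem]
      intro z hz
      obtain ⟨⟨hz1, hz2⟩, hz3⟩ := hz
      rw [Set.mem_iInter] at hz1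
      have hyball : z - a (Fin.last m) ∈ Metric.ball (0 : X) ρ := by
        rw [Metric.mem_ball, dist_zero_right] at hz3 ⊢
        have := norm_sub_le z (a (Fin.last m))
        linarith
      have hymem : z - a (Fin.last m) ∈ ⋂ i, (fun z => z - ω i - a i) '' Ω i := by
        rw [Set.mem_iInter]
        intro i
        induction i using Fin.lastCases with
        | last =>
          obtain ⟨w, hw, hwz⟩ := hz2
          exact ⟨w, hw, by simp only at hwz ⊢; rw [← hwz]⟩
        | cast j =>
          obtain ⟨w, hw, hwz⟩ := hz1 j
          refine ⟨w, hw, ?_⟩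
          simp only at hwz ⊢
          rw [← hwz]; abel
      exact Set.eq_empty_iff_forall_notMem.mp hempty _ ⟨hymem, hyball⟩
  · -- asymmetric → full
    intro h ε hε
    obtain ⟨ρ, hρ0, hρε, ω, hω, a, hsup, hempty⟩ := h ε hε
    have hbdd : BddAbove (Set.range fun i => ‖a i‖) :=
      Set.Finite.bddAbove (Set.finite_range _)
    haveI : Nonempty (Fin m) := ⟨⟨0, hm⟩⟩
    have hSnn : 0 ≤ ⨆ i : Fin m, ‖a i‖ :=
      le_trans (norm_nonneg (a ⟨0, hm⟩)) (le_ciSup hbdd ⟨0, hm⟩)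
    refine ⟨ρ, hρ0, hρε, ω, hω, Fin.snoc a 0, ?_, ?_⟩
    · have hle : (⨆ i : Fin (m + 1), ‖(Fin.snoc a 0 : Fin (m+1) → X) i‖) ≤ ⨆ i : Fin m, ‖a i‖ := by
        apply ciSup_le
        intro i
        induction i using Fin.lastCases with
        | last => simpa [Fin.snoc_last] using hSnn
        | cast j => rw [Fin.snoc_castSucc]; exact le_ciSup hbdd j
      linarith
    · rw [Set.eq_empty_iff_forall_notMem]
      intro z hz
      obtain ⟨hz1, hz3⟩ := hz
      rw [Set.mem_iInter] at hz1
      have h1 : z ∈ ⋂ i : Fin m, (fun z => z - ω i.castSucc - a i) '' Ω i.castSucc := by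
        rw [Set.mem_iInter]
        intro j
        have := hz1 j.castSucc
        rwa [Fin.snoc_castSucc] at this
      have h2 : z ∈ (fun z => z - ω (Fin.last m)) '' Ω (Fin.last m) := by
        have := hz1 (Fin.last m)
        rw [Fin.snoc_last] at this
        obtain ⟨w, hw, hwz⟩ := this
        exact ⟨w, hw, by simp only at hwz ⊢; rw [← hwz]; abel⟩
      exact Set.eq_empty_iff_forall_notMem.mp hempty z ⟨⟨h1, h2⟩, hz3⟩
end

section
/- Let X be a metric space, ψ: X → ℝ∪{+∞}, φ: ℝ → ℝ∪{+∞}, x ∈ dom ψ with ψ(x) ∈ dom φ. Suppose φ is nondecreasing on ℝ and differentiable at ψ(x), and either φ'(ψ(x)) > 0 or |∇ψ|(x) < +∞. Then |∇(φ∘ψ)|(x) = φ'(ψ(x))·|∇ψ|(x). -/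
open Filter
open scoped Topology ENNReal

/-- The (local) slope of an extended-real-valued function `ψ : X → ℝ ∪ {+∞}` at `x`:
`|∇ψ|(x) = limsup_{u→x, u≠x} [ψ(x)−ψ(u)]₊ / d(x,u)`, with value `+∞` if `ψ x = +∞`. -/
noncomputable def slopeE {X : Type*} [MetricSpace X] (ψ : X → EReal) (x : X) : ℝ≥0∞ :=
  if ψ x = ⊤ then ⊤
  else Filter.limsup (fun u => ENNReal.ofReal ((ψ x - ψ u).toReal / dist x u)) (𝓝[≠] x)

private lemma qzero {p q : EReal} {d : ℝ} (hp : p ≠ ⊤) (hp' : p ≠ ⊥) (hpq : p ≤ q)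
    (hd : 0 ≤ d) : ENNReal.ofReal ((p - q).toReal / d) = 0 := by
  rcases eq_or_ne q ⊤ with hq | hq
  · simp [hq, EReal.sub_top]
  · have hq' : q ≠ ⊥ := fun h => hp' (by simpa [h, le_bot_iff] using hpq)
    rw [EReal.toReal_sub hp hp' hq hq']
    have h1 : p.toReal - q.toReal ≤ 0 := sub_nonpos.mpr (EReal.toReal_le_toReal hpq hp' hq)
    exact ENNReal.ofReal_eq_zero.mpr (div_nonpos_iff.mpr (Or.inr ⟨h1, hd⟩))


set_option maxHeartbeats 2000000 in
/-- slope chain rule: if `φ : ℝ → ℝ ∪ {+∞}` is nondecreasing and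
differentiable at `ψ x` (a point of its domain, with derivative `c`), and either
`c > 0` or `|∇ψ|(x) < +∞`, then `|∇(φ∘ψ)|(x) = φ'(ψ x) · |∇ψ|(x)`. Here the
composition is understood with `(φ∘ψ)(u) = +∞` whenever `ψ u = +∞`. -/
theorem stmt4 {X : Type*} [MetricSpace X] (ψ : X → EReal) (φ : ℝ → EReal) (x : X)
    (hψbot : ∀ u, ψ u ≠ ⊥) (hψx : ψ x ≠ ⊤)
    (hφbot : ∀ t, φ t ≠ ⊥) (hφx : φ ((ψ x).toReal) ≠ ⊤)
    (hφmono : Monotone φ)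
    (c : ℝ)
    (hφfin : ∀ᶠ t in 𝓝 ((ψ x).toReal), φ t ≠ ⊤)
    (hderiv : HasDerivAt (fun t => (φ t).toReal) c ((ψ x).toReal))
    (hcond : 0 < c ∨ slopeE ψ x ≠ ⊤) :
    slopeE (fun u => if ψ u = ⊤ then (⊤ : EReal) else φ ((ψ u).toReal)) x =
      ENNReal.ofReal c * slopeE ψ x := by
  classical
  set a : ℝ := (ψ x).toReal with ha
  set F : X → EReal := fun u => if ψ u = ⊤ then (⊤ : EReal) else φ ((ψ u).toReal) with hF
  have hFx : F x = φ a := by simp only [hF, if_neg hψx]; rfl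
  set l := 𝓝[≠] x with hl
  set G : X → ℝ≥0∞ := fun u => ENNReal.ofReal ((ψ x - ψ u).toReal / dist x u) with hG
  set GF : X → ℝ≥0∞ := fun u => ENNReal.ofReal ((φ a - F u).toReal / dist x u) with hGF
  have hSψ : slopeE ψ x = limsup G l := by rw [slopeE, if_neg hψx]
  have hSF : slopeE F x = limsup GF l := by
    rw [slopeE, if_neg (show F x ≠ ⊤ by rw [hFx]; exact hφx)]
    simp only [hFx]; rfl
  -- basic facts
  have hdist : ∀ r : ℝ, 0 < r → ∀ᶠ u in l, dist x u < r := by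
    intro r hr
    exact eventually_nhdsWithin_of_eventually_nhds
      (Metric.eventually_nhds_iff.mpr ⟨r, hr, fun y hy => by rwa [dist_comm] at hy⟩)
  have hts : ∀ u, ψ u < ψ x →
      ψ u ≠ ⊤ ∧ (ψ u).toReal < a ∧ (ψ x - ψ u).toReal = a - (ψ u).toReal := by
    intro u h
    have hu' : ψ u ≠ ⊤ := by
      intro hh
      rw [hh] at h
      exact not_top_lt h
    refine ⟨hu', ?_, ?_⟩
    · have h2 := h
      rw [← EReal.coe_toReal hu' (hψbot u), ← EReal.coe_toReal hψx (hψbot x)] at h2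
      exact EReal.coe_lt_coe_iff.mp h2
    · rw [EReal.toReal_sub hψx (hψbot x) hu' (hψbot u)]
  have hc0 : 0 ≤ c := by
    have hs := hasDerivAt_iff_tendsto_slope.mp hderiv
    have hs' : Tendsto (slope (fun t => (φ t).toReal) a) (𝓝[>] a) (𝓝 c) :=
      hs.mono_left (nhdsWithin_mono _ fun t ht => ht.ne')
    refine ge_of_tendsto hs' ?_
    filter_upwards [eventually_nhdsWithin_of_eventually_nhds (s := Set.Ioi a) hφfin,
      self_mem_nhdsWithin] with t htfin hta
    rw [slope_def_field]
    have h1 : (φ a).toReal ≤ (φ t).toReal :=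
      EReal.toReal_le_toReal (hφmono (le_of_lt hta)) (hφbot a) htfin
    have h2 : (0:ℝ) ≤ t - a := by have := hta.out; linarith
    exact div_nonneg (by linarith) h2
  have hpack : ∀ ε : ℝ, 0 < ε → ∃ δ : ℝ, 0 < δ ∧ ∀ t : ℝ, |t - a| < δ →
      φ t ≠ ⊤ ∧ |(φ t).toReal - (φ a).toReal - (t - a) * c| ≤ ε * |t - a| := by
    intro ε hε
    have h1 := (hasDerivAt_iff_isLittleO.mp hderiv).def hε
    have h2 := hφfin.and h1
    rw [Metric.eventually_nhds_iff] at h2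
    obtain ⟨δ, hδ, hh⟩ := h2
    refine ⟨δ, hδ, fun t hts' => ?_⟩
    have h3 := hh (show dist t a < δ by rwa [Real.dist_eq])
    refine ⟨h3.1, ?_⟩
    simpa [Real.norm_eq_abs, smul_eq_mul] using h3.2
  rw [hSF, hSψ]
  rcases eq_or_ne (limsup G l) ⊤ with hL | hL
  · -- top case
    have hc : 0 < c := by
      rcases hcond with h | h
      · exact h
      · exact absurd (hSψ.trans hL) h
    rw [hL, ENNReal.mul_top (by simpa [ENNReal.ofReal_pos] using hc : ENNReal.ofReal c ≠ 0)]
    by_contra hne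
    obtain ⟨δ, hδ, hP⟩ := hpack (c / 2) (by linarith)
    set b := limsup GF l with hb
    set B : ℝ := (b + 1).toReal with hB
    have hB0 : (0:ℝ) ≤ B := ENNReal.toReal_nonneg
    have hb1 : b + 1 = ENNReal.ofReal B :=
      (ENNReal.ofReal_toReal (by simp [hne])).symm
    set K : ℝ := 2 * B / c + 1 with hK
    have hK1 : (1:ℝ) ≤ K := le_add_of_nonneg_left (by positivity)
    have hfreq : ∃ᶠ u in l, ENNReal.ofReal K < G u := by
      by_contra hcon
      rw [not_frequently] at hcon
      have h1 : limsup G l ≤ ENNReal.ofReal K :=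
        limsup_le_of_le (by isBoundedDefault) (hcon.mono fun u h => not_lt.mp h)
      rw [hL] at h1
      exact ENNReal.ofReal_ne_top (top_le_iff.mp h1)
    set m : ℝ := c / 2 * (δ / 2) with hm
    have hm0 : 0 < m := by positivity
    have hev : ∀ᶠ u in l, dist x u < m / (B + 1) ∧ u ∈ ({x}ᶜ : Set X) :=
      (hdist _ (by positivity)).and self_mem_nhdsWithin
    have hfr2 := hfreq.and_eventually hev
    have hcontra : b + 1 ≤ limsup GF l := by
      apply le_limsup_of_frequently_le'
      refine hfr2.mono ?_
      rintro u ⟨hGK, hdm, hu⟩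
      rw [hb1]
      have hd0 : 0 < dist x u :=
        dist_pos.mpr fun hxe => hu (Set.mem_singleton_iff.mpr hxe.symm)
      have hlt : ψ u < ψ x := by
        by_contra hge
        have hGz : G u = 0 := qzero hψx (hψbot x) (not_lt.mp hge) dist_nonneg
        rw [hGz] at hGK
        exact absurd hGK (by simp)
      obtain ⟨hu', htlt, hsub⟩ := hts u hlt
      set t := (ψ u).toReal with htdef
      have hGua : G u = ENNReal.ofReal ((a - t) / dist x u) := by simp only [hG, hsub]
      have hKd : K < (a - t) / dist x u := by
        rw [hGua] at hGK
        exact (ENNReal.ofReal_lt_ofReal_iff (div_pos (by linarith) hd0)).mp hGK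
      have hφt : φ t ≠ ⊤ := fun hh => hφx (top_le_iff.mp (hh ▸ hφmono htlt.le))
      have hFu : F u = φ t := if_neg hu'
      have hGFu : GF u = ENNReal.ofReal (((φ a).toReal - (φ t).toReal) / dist x u) := by
        simp only [hGF, hFu, EReal.toReal_sub hφx (hφbot a) hφt (hφbot t)]
      rw [hGFu]
      apply ENNReal.ofReal_le_ofReal
      rcases lt_or_ge (a - t) δ with hcase | hcase
      · -- near case
        have hnear : |t - a| < δ := by
          rw [abs_of_nonpos (by linarith)]; linarith
        have hPt := hP t hnear
        have habs : |t - a| = a - t := by rw [abs_of_nonpos (by linarith)]; ring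
        rw [habs] at hPt
        rcases abs_le.mp hPt.2 with ⟨hb1', hb2'⟩
        have hq2 : c / 2 * (a - t) ≤ (φ a).toReal - (φ t).toReal := by nlinarith
        have hstep : B < c / 2 * ((a - t) / dist x u) := by
          have h5 : c / 2 * K ≤ c / 2 * ((a - t) / dist x u) :=
            mul_le_mul_of_nonneg_left hKd.le (by linarith)
          have h6 : B < c / 2 * K := by
            rw [hK, mul_add, mul_div_assoc']
            have : c / 2 * (2 * B) / c = B := by field_simp
            rw [this]
            linarith
          linarith
        have h7 : c / 2 * ((a - t) / dist x u) ≤ ((φ a).toReal - (φ t).toReal) / dist x u := by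
          rw [mul_div_assoc']
          exact div_le_div_of_nonneg_right hq2 hd0.le
        linarith
      · -- far case : t ≤ a - δ
        set t' : ℝ := a - δ / 2 with ht'
        have hPt' := hP t' (by rw [ht']; rw [show a - δ / 2 - a = -(δ/2) by ring, abs_neg,
          abs_of_nonneg (by linarith)]; linarith)
        have hmono' : (φ t).toReal ≤ (φ t').toReal :=
          EReal.toReal_le_toReal (hφmono (by rw [ht']; linarith)) (hφbot t) hPt'.1
        have habs' : |t' - a| = δ / 2 := by
          rw [ht', show a - δ / 2 - a = -(δ/2) by ring, abs_neg, abs_of_nonneg (by linarith)]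
        rw [habs'] at hPt'
        rcases abs_le.mp hPt'.2 with ⟨hb1', hb2'⟩
        have ht'a : t' - a = -(δ / 2) := by rw [ht']; ring
        rw [ht'a] at hb1' hb2'
        have h2 : m ≤ (φ a).toReal - (φ t').toReal := by rw [hm]; nlinarith
        have h3 : m ≤ (φ a).toReal - (φ t).toReal := by linarith
        have hstep : B < m / dist x u := by
          rw [lt_div_iff₀ hd0]
          have h8 := (lt_div_iff₀ (by linarith : (0:ℝ) < B + 1)).mp hdm
          nlinarith
        have h9 : m / dist x u ≤ ((φ a).toReal - (φ t).toReal) / dist x u :=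
          div_le_div_of_nonneg_right h3 hd0.le
        linarith
    exact (ENNReal.lt_add_right hne one_ne_zero).not_ge hcontra
  · -- finite case
    have key : ∀ ε : ℝ, 0 < ε →
        limsup GF l ≤ ENNReal.ofReal (c + ε) * limsup G l ∧
        ENNReal.ofReal (c - ε) * limsup G l ≤ limsup GF l := by
      intro ε hε
      obtain ⟨δ, hδ, hP⟩ := hpack ε hε
      set M : ℝ := (limsup G l + 1).toReal with hM
      have hM0 : (0:ℝ) ≤ M := ENNReal.toReal_nonneg
      have hev1 : ∀ᶠ u in l, G u < limsup G l + 1 :=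
        eventually_lt_of_limsup_lt (ENNReal.lt_add_right hL one_ne_zero)
      have hev2 : ∀ᶠ u in l, dist x u < δ / (M + 1) :=
        hdist _ (div_pos hδ (by linarith))
      have hub : ∀ᶠ u in l, GF u ≤ ENNReal.ofReal (c + ε) * G u ∧
          ENNReal.ofReal (c - ε) * G u ≤ GF u := by
        filter_upwards [hev1, hev2, self_mem_nhdsWithin] with u h1 h2 hu
        have hd0 : 0 < dist x u :=
          dist_pos.mpr fun hxe => hu (Set.mem_singleton_iff.mpr hxe.symm)
        rcases le_or_gt (ψ x) (ψ u) with h | h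
        · have hGz : G u = 0 := qzero hψx (hψbot x) h dist_nonneg
          have hle' : (φ a : EReal) ≤ F u := by
            rcases eq_or_ne (ψ u) ⊤ with hh | hh
            · simp [hF, hh]
            · have h3 : a ≤ (ψ u).toReal := EReal.toReal_le_toReal h (hψbot x) hh
              simp only [hF, if_neg hh]
              exact hφmono h3
          have hFz : GF u = 0 := qzero hφx (hφbot a) hle' dist_nonneg
          simp [hGz, hFz]
        · obtain ⟨hu', htlt, hsub⟩ := hts u h
          set t := (ψ u).toReal with htdef
          -- |t - a| < δ
          have hGua : G u = ENNReal.ofReal ((a - t) / dist x u) := by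
            simp only [hG, hsub]
          have hnear : |t - a| < δ := by
            have hr0 : (0:ℝ) ≤ (a - t)/dist x u := div_nonneg (by linarith) hd0.le
            have h4 : limsup G l + 1 = ENNReal.ofReal M :=
              (ENNReal.ofReal_toReal (by simp [hL])).symm
            rw [hGua, h4, ENNReal.ofReal_lt_ofReal_iff_of_nonneg hr0] at h1
            have h5 : a - t < M * dist x u := by
              have := (div_lt_iff₀ hd0).mp h1
              linarith
            have h6 : M * dist x u ≤ M * (δ / (M + 1)) :=
              mul_le_mul_of_nonneg_left h2.le hM0
            have h7 : M * (δ / (M + 1)) < δ := by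
              rw [mul_div_assoc'] 
              rw [div_lt_iff₀ (by linarith : (0:ℝ) < M + 1)]
              nlinarith
            rw [abs_of_nonpos (by linarith)]
            linarith
          have hFu : F u = φ t := if_neg hu'
          have hPt := hP t hnear
          have hsubF : (φ a - F u).toReal = (φ a).toReal - (φ t).toReal := by
            rw [hFu]; exact EReal.toReal_sub hφx (hφbot a) hPt.1 (hφbot t)
          have habs : |t - a| = a - t := by
            rw [abs_of_nonpos (by linarith)]; ring
          rw [habs] at hPt
          rcases abs_le.mp hPt.2 with ⟨hb1, hb2⟩
          have hq1 : (φ a).toReal - (φ t).toReal ≤ (c + ε) * (a - t) := by nlinarith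
          have hq2 : (c - ε) * (a - t) ≤ (φ a).toReal - (φ t).toReal := by nlinarith
          have hGFu : GF u = ENNReal.ofReal (((φ a).toReal - (φ t).toReal) / dist x u) := by
            simp only [hGF, hsubF]
          constructor
          · rw [hGFu, hGua, ← ENNReal.ofReal_mul (by linarith : (0:ℝ) ≤ c + ε)]
            apply ENNReal.ofReal_le_ofReal
            rw [← mul_div_assoc]
            exact div_le_div_of_nonneg_right hq1 hd0.le
          · rcases le_or_gt (c - ε) 0 with hce | hce
            · rw [ENNReal.ofReal_eq_zero.mpr hce, zero_mul]
              exact zero_le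
            · rw [hGFu, hGua, ← ENNReal.ofReal_mul hce.le]
              apply ENNReal.ofReal_le_ofReal
              rw [← mul_div_assoc]
              exact div_le_div_of_nonneg_right hq2 hd0.le
      constructor
      · calc limsup GF l ≤ limsup (fun u => ENNReal.ofReal (c + ε) * G u) l :=
              limsup_le_limsup (hub.mono fun u h => h.1)
          _ = ENNReal.ofReal (c + ε) * limsup G l :=
              ENNReal.limsup_const_mul_of_ne_top ENNReal.ofReal_ne_top
      · calc ENNReal.ofReal (c - ε) * limsup G l
            = limsup (fun u => ENNReal.ofReal (c - ε) * G u) l :=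
              (ENNReal.limsup_const_mul_of_ne_top ENNReal.ofReal_ne_top).symm
          _ ≤ limsup GF l := limsup_le_limsup (hub.mono fun u h => h.2)
    apply le_antisymm
    · have ht1 : Tendsto (fun ε : ℝ => ENNReal.ofReal (c + ε) * limsup G l) (𝓝[>] 0)
          (𝓝 (ENNReal.ofReal c * limsup G l)) := by
        apply ENNReal.Tendsto.mul_const _ (Or.inr hL)
        have : Tendsto (fun ε : ℝ => c + ε) (𝓝[>] 0) (𝓝 c) := by
          have h0 : Tendsto (fun ε : ℝ => c + ε) (𝓝 0) (𝓝 (c + 0)) :=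
            (continuous_const.add continuous_id).tendsto 0
          rw [add_zero] at h0
          exact h0.mono_left nhdsWithin_le_nhds
        exact (ENNReal.continuous_ofReal.tendsto c).comp this
      refine ge_of_tendsto ht1 ?_
      filter_upwards [self_mem_nhdsWithin] with ε hε
      exact (key ε hε).1
    · have ht2 : Tendsto (fun ε : ℝ => ENNReal.ofReal (c - ε) * limsup G l) (𝓝[>] 0)
          (𝓝 (ENNReal.ofReal c * limsup G l)) := by
        apply ENNReal.Tendsto.mul_const _ (Or.inr hL)
        have : Tendsto (fun ε : ℝ => c - ε) (𝓝[>] 0) (𝓝 c) := by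
          have h0 : Tendsto (fun ε : ℝ => c - ε) (𝓝 0) (𝓝 (c - 0)) :=
            (continuous_const.sub continuous_id).tendsto 0
          rw [sub_zero] at h0
          exact h0.mono_left nhdsWithin_le_nhds
        exact (ENNReal.continuous_ofReal.tendsto c).comp this
      refine le_of_tendsto ht2 ?_
      filter_upwards [self_mem_nhdsWithin] with ε hε
      exact (key ε hε).2
end

section
/- Let X be a normed vector space, n ≥ 2, a₁,…,a_{n−1} ∈ X, and let f: Xⁿ → ℝ₊ be defined by f(u₁,…,uₙ) := max_{1≤i≤n−1}‖uᵢ−aᵢ−uₙ‖. Let x₁,…,xₙ ∈ X with max_{1≤i≤n−1}‖xᵢ−aᵢ−xₙ‖ > 0. Then the convex subdifferential of f at (x₁,…,xₙ) equals the set of all (x₁*,…,xₙ*) ∈ (X*)ⁿ such that Σ_{i=1}^n xᵢ* = 0, Σ_{i=1}^{n−1}‖xᵢ*‖ = 1, and Σ_{i=1}^{n−1}⟨xᵢ*, xᵢ−aᵢ−xₙ⟩ = max_{1≤i≤n−1}‖xᵢ−aᵢ−xₙ‖. -/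
/-- representation of the convex subdifferential of
`f(u₁,…,uₙ) = max_{1≤i≤n−1} ‖uᵢ − aᵢ − uₙ‖` on `Xⁿ` (with the maximum norm) at a
point where `f > 0`.  The dual of `Xⁿ` is identified with `(X*)ⁿ` via
`⟨(x₁*,…,xₙ*),(u₁,…,uₙ)⟩ = Σᵢ ⟨xᵢ*, uᵢ⟩`. -/
theorem stmt5 {X : Type*} [NormedAddCommGroup X] [NormedSpace ℝ X] {m : ℕ} (hm : 1 ≤ m)
    (a : Fin m → X) (x : Fin (m + 1) → X)
    (hx : 0 < ⨆ i : Fin m, ‖x i.castSucc - a i - x (Fin.last m)‖) :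
    {g : Fin (m + 1) → (X →L[ℝ] ℝ) |
        ∀ u : Fin (m + 1) → X,
          (⨆ i : Fin m, ‖u i.castSucc - a i - u (Fin.last m)‖) -
              (⨆ i : Fin m, ‖x i.castSucc - a i - x (Fin.last m)‖) -
              (∑ i, g i (u i - x i)) ≥ 0} =
    {g : Fin (m + 1) → (X →L[ℝ] ℝ) |
        (∑ i, g i) = 0 ∧ (∑ i : Fin m, ‖g i.castSucc‖) = 1 ∧
        (∑ i : Fin m, g i.castSucc (x i.castSucc - a i - x (Fin.last m))) =
          ⨆ i : Fin m, ‖x i.castSucc - a i - x (Fin.last m)‖} := by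
  have hne : Nonempty (Fin m) := ⟨⟨0, hm⟩⟩
  have hbdd : ∀ (f : Fin m → ℝ), BddAbove (Set.range f) :=
    fun f => (Set.finite_range f).bddAbove
  have hle_sup : ∀ (f : Fin m → ℝ) (i : Fin m), f i ≤ ⨆ j, f j :=
    fun f i => le_ciSup (hbdd f) i
  set v : Fin m → X := fun i => x i.castSucc - a i - x (Fin.last m) with hv
  set Fx : ℝ := ⨆ i : Fin m, ‖v i‖ with hFx
  ext g
  simp only [Set.mem_setOf_eq]
  constructor
  · intro hg
    have key : ∀ u : Fin (m+1) → X,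
        (∑ i, g i (u i - x i)) ≤
          (⨆ i : Fin m, ‖u i.castSucc - a i - u (Fin.last m)‖) - Fx := by
      intro u; linarith [hg u]
    -- (a) sum of g is 0
    have hsum0 : (∑ i, g i) = 0 := by
      ext c
      have e1 : ∀ (c : X), (∑ i, g i c) ≤ 0 := by
        intro c
        have h1 := key (fun i => x i + c)
        have e : ∀ i : Fin m, (x i.castSucc + c) - a i - (x (Fin.last m) + c) = v i := by
          intro i; simp [hv]; abel
        simp only [e, add_sub_cancel_left, ← hFx, sub_self] at h1
        exact h1
      have h1 := e1 c
      have h2 := e1 (-c)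
      simp only [map_neg, Finset.sum_neg_distrib] at h2
      have : (∑ i, g i c) = 0 := le_antisymm h1 (by linarith)
      simpa using this
    -- (b) the equality ∑ g i (v i) = Fx
    have hS : (∑ i : Fin m, g i.castSucc (v i)) = Fx := by
      set S : ℝ := ∑ i : Fin m, g i.castSucc (v i) with hSdef
      have keyt : ∀ t : ℝ, 0 ≤ t → (t - 1) * (Fx - S) ≥ 0 := by
        intro t ht
        have h1 := key (fun j => Fin.lastCases (x (Fin.last m))
          (fun i => a i + x (Fin.last m) + t • v i) j)
        simp only [Fin.lastCases_castSucc, Fin.lastCases_last] at h1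
        have e1 : ∀ i : Fin m, (a i + x (Fin.last m) + t • v i) - a i - x (Fin.last m)
            = t • v i := by intro i; abel
        simp only [e1] at h1
        have e2 : (⨆ i : Fin m, ‖t • v i‖) = t * Fx := by
          have en : ∀ i : Fin m, ‖t • v i‖ = t * ‖v i‖ := fun i => by
            rw [norm_smul, Real.norm_eq_abs, abs_of_nonneg ht]
          simp only [en]
          rw [hFx]
          exact (Real.mul_iSup_of_nonneg ht _).symm
        rw [e2] at h1
        have e3 : (∑ i : Fin (m+1), g i ((Fin.lastCases (x (Fin.last m))
            (fun i => a i + x (Fin.last m) + t • v i) : ∀ _ : Fin (m+1), X) i - x i))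
            = t * S - S := by
          rw [Fin.sum_univ_castSucc]
          simp only [Fin.lastCases_castSucc, Fin.lastCases_last, sub_self, map_zero, add_zero]
          have e5 : ∀ i : Fin m, g i.castSucc ((a i + x (Fin.last m) + t • v i) - x i.castSucc)
              = t * g i.castSucc (v i) - g i.castSucc (v i) := by
            intro i
            have e4 : (a i + x (Fin.last m) + t • v i) - x i.castSucc
                = t • v i - v i := by simp [hv]; abel
            rw [e4, map_sub, map_smul]; simp
          rw [Finset.sum_congr rfl fun i _ => e5 i, Finset.sum_sub_distrib, ← Finset.mul_sum]
        rw [e3] at h1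
        nlinarith
      have t0 := keyt 0 le_rfl
      have t2 := keyt 2 (by norm_num)
      nlinarith
    refine ⟨hsum0, ?_, hS⟩
    -- (c) sum of norms = 1
    have hge : (1 : ℝ) ≤ ∑ i : Fin m, ‖g i.castSucc‖ := by
      have h1 : Fx ≤ (∑ i : Fin m, ‖g i.castSucc‖) * Fx := by
        calc Fx = ∑ i : Fin m, g i.castSucc (v i) := hS.symm
        _ ≤ ∑ i : Fin m, ‖g i.castSucc‖ * Fx := by
            apply Finset.sum_le_sum
            intro i _
            calc g i.castSucc (v i) ≤ ‖g i.castSucc‖ * ‖v i‖ := by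
                  have h5 := (g i.castSucc).le_opNorm (v i)
                  rw [Real.norm_eq_abs] at h5
                  exact (le_abs_self _).trans h5
            _ ≤ ‖g i.castSucc‖ * Fx := by
                  refine mul_le_mul_of_nonneg_left ?_ (norm_nonneg _)
                  rw [hFx]; exact hle_sup (fun j => ‖v j‖) i
        _ = (∑ i : Fin m, ‖g i.castSucc‖) * Fx := by rw [Finset.sum_mul]
      nlinarith
    have hle : ∀ ε : ℝ, 0 < ε → (∑ i : Fin m, ‖g i.castSucc‖) ≤ 1 + m * ε := by
      intro ε hε
      choose h hh1 hh2 using fun i : Fin m =>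
        (g i.castSucc).exists_lt_apply_of_lt_opNorm
          (show ‖g i.castSucc‖ - ε < ‖g i.castSucc‖ by linarith)
      set h' : Fin m → X := fun i => if 0 ≤ g i.castSucc (h i) then h i else -(h i) with hh'
      have hh'norm : ∀ i, ‖h' i‖ < 1 := by
        intro i; by_cases hc : 0 ≤ g i.castSucc (h i) <;> simp [hh', hc, hh1 i]
      have hh'val : ∀ i, ‖g i.castSucc‖ - ε < g i.castSucc (h' i) := by
        intro i
        by_cases hc : 0 ≤ g i.castSucc (h i)
        · simpa [hh', hc, Real.norm_eq_abs, abs_of_nonneg hc] using hh2 i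
        · have h3 := hh2 i
          rw [Real.norm_eq_abs, abs_of_neg (lt_of_not_ge hc)] at h3
          simpa [hh', hc] using h3
      have h1 := key (fun j => Fin.lastCases (x (Fin.last m))
        (fun i => x i.castSucc + h' i) j)
      simp only [Fin.lastCases_castSucc, Fin.lastCases_last] at h1
      have e1 : ∀ i : Fin m, (x i.castSucc + h' i) - a i - x (Fin.last m) = v i + h' i := by
        intro i; simp [hv]; abel
      simp only [e1] at h1
      have e2 : (⨆ i : Fin m, ‖v i + h' i‖) ≤ Fx + 1 := by
        apply ciSup_le
        intro i
        calc ‖v i + h' i‖ ≤ ‖v i‖ + ‖h' i‖ := norm_add_le _ _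
        _ ≤ Fx + 1 := by
              refine add_le_add ?_ (hh'norm i).le
              rw [hFx]; exact hle_sup (fun j => ‖v j‖) i
      have e3 : (∑ i : Fin (m+1), g i ((Fin.lastCases (x (Fin.last m))
          (fun i => x i.castSucc + h' i) : ∀ _ : Fin (m+1), X) i - x i))
          = ∑ i : Fin m, g i.castSucc (h' i) := by
        rw [Fin.sum_univ_castSucc]
        simp [Fin.lastCases_castSucc, Fin.lastCases_last]
      rw [e3] at h1
      have e4 : (∑ i : Fin m, ‖g i.castSucc‖) - m * ε ≤ ∑ i : Fin m, g i.castSucc (h' i) := by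
        calc (∑ i : Fin m, ‖g i.castSucc‖) - m * ε
            = ∑ i : Fin m, (‖g i.castSucc‖ - ε) := by
              rw [Finset.sum_sub_distrib, Finset.sum_const, Finset.card_univ, Fintype.card_fin]
              simp [nsmul_eq_mul]
        _ ≤ ∑ i : Fin m, g i.castSucc (h' i) :=
              Finset.sum_le_sum fun i _ => (hh'val i).le
      linarith
    have hle1 : (∑ i : Fin m, ‖g i.castSucc‖) ≤ 1 := by
      refine le_of_forall_pos_le_add fun ε hε => ?_
      have hm' : (0:ℝ) < m := by exact_mod_cast hm
      have := hle (ε / m) (by positivity)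
      calc (∑ i : Fin m, ‖g i.castSucc‖) ≤ 1 + m * (ε / m) := this
      _ = 1 + ε := by field_simp
    linarith
  · rintro ⟨h0, h1, h2⟩
    intro u
    set w : Fin m → X := fun i => u i.castSucc - a i - u (Fin.last m) with hw
    have hlast : g (Fin.last m) (u (Fin.last m) - x (Fin.last m))
        = -∑ i : Fin m, g i.castSucc (u (Fin.last m) - x (Fin.last m)) := by
      have : (∑ i : Fin (m+1), g i) (u (Fin.last m) - x (Fin.last m)) = 0 := by rw [h0]; simp
      rw [Fin.sum_univ_castSucc] at this
      simp only [ContinuousLinearMap.add_apply, ContinuousLinearMap.sum_apply] at this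
      linarith
    have hsum : (∑ i : Fin (m+1), g i (u i - x i)) = (∑ i : Fin m, g i.castSucc (w i)) - Fx := by
      have e : ∀ i : Fin m, g i.castSucc (u i.castSucc - x i.castSucc) -
          g i.castSucc (u (Fin.last m) - x (Fin.last m)) =
          g i.castSucc (w i) - g i.castSucc (v i) := by
        intro i
        rw [← map_sub, ← map_sub]
        congr 1
        simp [hw, hv]; abel
      rw [Fin.sum_univ_castSucc, hlast, ← h2, ← sub_eq_add_neg, ← Finset.sum_sub_distrib,
        ← Finset.sum_sub_distrib]
      exact Finset.sum_congr rfl fun i _ => e i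
    rw [hsum]
    have hwle : (∑ i : Fin m, g i.castSucc (w i)) ≤ ⨆ i : Fin m, ‖w i‖ := by
      calc (∑ i : Fin m, g i.castSucc (w i)) ≤ ∑ i : Fin m, ‖g i.castSucc‖ * (⨆ i, ‖w i‖) := by
            apply Finset.sum_le_sum
            intro i _
            calc g i.castSucc (w i) ≤ ‖g i.castSucc‖ * ‖w i‖ := by
                  have h5 := (g i.castSucc).le_opNorm (w i)
                  rw [Real.norm_eq_abs] at h5
                  exact (le_abs_self _).trans h5
            _ ≤ ‖g i.castSucc‖ * ⨆ i, ‖w i‖ :=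
                  mul_le_mul_of_nonneg_left (hle_sup (fun j => ‖w j‖) i) (norm_nonneg _)
      _ = (∑ i : Fin m, ‖g i.castSucc‖) * ⨆ i, ‖w i‖ := by rw [Finset.sum_mul]
      _ = ⨆ i, ‖w i‖ := by rw [h1, one_mul]
    linarith
end

section
/- Let Ω₁,…,Ωₙ (n≥2) be closed subsets of a Banach space X, x̄ ∈ ∩_{i=1}^n Ωᵢ, a₁,…,a_{n−1} ∈ X, ε > 0 and φ ∈ 𝒞. Suppose ∩_{i=1}^{n−1}(Ωᵢ−aᵢ) ∩ Ωₙ = ∅ and φ(max_{1≤i≤n−1}‖aᵢ‖) < φ(d(Ω₁−a₁,…,Ω_{n−1}−a_{n−1},Ωₙ)) + ε. Then for any λ>0 and η>0 there exist points ωᵢ ∈ Ωᵢ ∩ B_λ(x̄) (i=1,…,n−1) and ωₙ ∈ Ωₙ ∩ B_η(x̄) such that: (a) 0 < max_{1≤i≤n−1}‖ωₙ+aᵢ−ωᵢ‖ ≤ max_{1≤i≤n−1}‖aᵢ‖; and (b) sup over all uᵢ ∈ Ωᵢ (i=1,…,n) with (u₁,…,uₙ) ≠ (ω₁,…,ωₙ)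 of [φ(max_{1≤i≤n−1}‖ωₙ+aᵢ−ωᵢ‖) − φ(max_{1≤i≤n−1}‖uₙ+aᵢ−uᵢ‖)] / ‖(u₁−ω₁,…,uₙ−ωₙ)‖_{λ,η} is strictly less than ε. -/
open Filter

/-- The nonintersect index `d(Ω₁,…,Ω_m,Ωₙ) = inf{ max_i ‖uₙ − uᵢ‖ : uᵢ ∈ Ωᵢ, uₙ ∈ Ωₙ }`. -/
noncomputable def nonintersectIndex {X : Type*} [NormedAddCommGroup X] {m : ℕ}
    (Ω : Fin m → Set X) (Ωn : Set X) : ℝ :=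
  sInf {r : ℝ | ∃ (u : Fin m → X) (un : X),
    (∀ i, u i ∈ Ω i) ∧ un ∈ Ωn ∧ r = ⨆ i, ‖un - u i‖}

lemma myEkeland {E : Type*} [MetricSpace E] [CompleteSpace E]
    (f : E → ℝ) (hf : Continuous f) (hB : ∀ x, 0 ≤ f x)
    (D : E → E → ℝ)
    (hsymm : ∀ x y, D x y = D y x) (hself : ∀ x, D x x = 0)
    (htri : ∀ x y z, D x z ≤ D x y + D y z)
    (C : ℝ) (hD2 : ∀ x y, D x y ≤ C * dist x y)
    (K : ℝ) (hK : 0 < K) (hD1 : ∀ x y, dist x y ≤ K * D x y)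
    (c r : ℝ) (hc : 0 < c) (x₀ : E) (hx₀ : ∀ x, f x₀ ≤ f x + c * r) :
    ∃ ω, D ω x₀ ≤ r ∧ f ω ≤ f x₀ ∧ ∀ u, f ω ≤ f u + c * D u ω := by
  have hD0 : ∀ x y, 0 ≤ D x y := by
    intro x y
    have h1 := htri x y x
    have h2 := hsymm y x
    have h3 := hself x
    linarith
  have hDcont : ∀ y, Continuous fun x => D x y := by
    intro y
    have hC0 : (0:ℝ) ≤ max C 0 := le_max_right _ _
    have key : ∀ x x', dist (D x y) (D x' y) ≤ max C 0 * dist x x' := by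
      intro x x'
      have h1 : D x y ≤ D x x' + D x' y := htri x x' y
      have h2 : D x' y ≤ D x' x + D x y := htri x' x y
      have h3 : D x x' ≤ C * dist x x' := hD2 x x'
      have h4 : D x' x ≤ C * dist x' x := hD2 x' x
      have h5 : C * dist x x' ≤ max C 0 * dist x x' :=
        mul_le_mul_of_nonneg_right (le_max_left _ _) dist_nonneg
      rw [dist_comm x' x] at h4
      rw [Real.dist_eq, abs_sub_le_iff]
      constructor <;> linarith
    exact (LipschitzWith.of_dist_le_mul (K := (max C 0).toNNReal) (fun x x' => by
      rw [Real.coe_toNNReal _ hC0]; exact key x x')).continuous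
  set S : E → Set E := fun y => {u | f u + c * D u y ≤ f y} with hS
  have hSself : ∀ y, y ∈ S y := by
    intro y; simp only [hS, Set.mem_setOf_eq, hself, mul_zero, add_zero, le_refl]
  have hSclosed : ∀ y, IsClosed (S y) :=
    fun y => isClosed_le (hf.add (continuous_const.mul (hDcont y))) continuous_const
  have hSmono : ∀ y z, y ∈ S z → S y ⊆ S z := by
    intro y z hyz u hu
    simp only [hS, Set.mem_setOf_eq] at *
    have := htri u y z
    nlinarith
  have hbdd : ∀ y, BddBelow (f '' S y) := by
    intro y; exact ⟨0, by rintro _ ⟨u, _, rfl⟩; exact hB u⟩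
  have hstep : ∀ (k : ℕ) (y : E), ∃ u, u ∈ S y ∧ f u ≤ sInf (f '' S y) + (1/2:ℝ)^k := by
    intro k y
    have hne : (f '' S y).Nonempty := ⟨f y, y, hSself y, rfl⟩
    obtain ⟨b, ⟨u, hu, rfl⟩, hb⟩ := Real.lt_sInf_add_pos hne
      (pow_pos (by norm_num : (0:ℝ) < 1/2) k)
    exact ⟨u, hu, hb.le⟩
  choose next hnextS hnextf using hstep
  set seq : ℕ → E := fun k => Nat.rec x₀ (fun k xk => next k xk) k with hseq
  have hseqS : ∀ k, seq (k+1) = next k (seq k) := fun k => rfl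
  have hmem : ∀ k j, k ≤ j → seq j ∈ S (seq k) := by
    intro k j hkj
    induction j, hkj using Nat.le_induction with
    | base => exact hSself _
    | succ j hj ih =>
      exact hSmono (seq j) (seq k) ih (by rw [hseqS]; exact hnextS j (seq j))
  have hfmono : ∀ k j, k ≤ j → f (seq j) + c * D (seq j) (seq k) ≤ f (seq k) :=
    fun k j h => hmem k j h
  have hanti : Antitone fun k => f (seq k) := by
    intro k j hkj
    have h1 := hfmono k j hkj
    have h2 := hD0 (seq j) (seq k)
    nlinarith
  have hbdd2 : BddBelow (Set.range fun k => f (seq k)) := ⟨0, by rintro _ ⟨k, rfl⟩; exact hB _⟩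
  set L := ⨅ k, f (seq k) with hLdef
  have hL : Tendsto (fun k => f (seq k)) atTop (nhds L) := tendsto_atTop_ciInf hanti hbdd2
  have hLle : ∀ k, L ≤ f (seq k) := fun k => ciInf_le hbdd2 k
  have hcauchy : CauchySeq seq := by
    rw [Metric.cauchySeq_iff']
    intro ε' hε'
    have hδ : (0:ℝ) < c * ε' / (2 * K) := by positivity
    obtain ⟨N, hN⟩ := (hL.eventually (gt_mem_nhds (by linarith : L < L + c * ε' / (2 * K)))).exists
    refine ⟨N, fun n hn => ?_⟩
    have h1 := hfmono N n hn
    have h2 := hD1 (seq n) (seq N)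
    have h3 := hLle n
    have h4 : c * D (seq n) (seq N) ≤ c * ε' / (2 * K) := by linarith
    have h4' : c * D (seq n) (seq N) ≤ c * (ε' / (2 * K)) := by
      rw [← mul_div_assoc]; exact h4
    have h5 : D (seq n) (seq N) ≤ ε' / (2 * K) := le_of_mul_le_mul_left h4' hc
    have h6 : K * D (seq n) (seq N) ≤ K * (ε' / (2 * K)) :=
      mul_le_mul_of_nonneg_left h5 hK.le
    have h7 : K * (ε' / (2 * K)) = ε' / 2 := by field_simp
    linarith
  obtain ⟨ω, hω⟩ := cauchySeq_tendsto_of_complete hcauchy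
  have hωS : ∀ k, ω ∈ S (seq k) := by
    intro k
    exact (hSclosed (seq k)).mem_of_tendsto hω
      (eventually_atTop.2 ⟨k, fun j hj => hmem k j hj⟩)
  have hω0 : f ω + c * D ω x₀ ≤ f x₀ := hωS 0
  have hDω0 : 0 ≤ D ω x₀ := hD0 _ _
  refine ⟨ω, ?_, by linarith [mul_nonneg hc.le hDω0], ?_⟩
  · have h1 := hx₀ ω
    have : c * D ω x₀ ≤ c * r := by linarith
    exact le_of_mul_le_mul_left this hc
  · intro u
    by_contra h
    push_neg at h
    have huS : ∀ k, u ∈ S (seq k) := by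
      intro k
      have hωk := hωS k
      simp only [hS, Set.mem_setOf_eq] at hωk ⊢
      have := htri u ω (seq k)
      nlinarith
    have hfu : ∀ k, f ω ≤ f u + (1/2:ℝ)^k := by
      intro k
      have h1 : f (seq (k+1)) ≤ sInf (f '' S (seq k)) + (1/2:ℝ)^k := by
        rw [hseqS]; exact hnextf k (seq k)
      have h2 : sInf (f '' S (seq k)) ≤ f u := csInf_le (hbdd _) ⟨u, huS k, rfl⟩
      have h3 := hωS (k+1)
      have h4 := hD0 ω (seq (k+1))
      simp only [hS, Set.mem_setOf_eq] at h3
      nlinarith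
    have hDuω := hD0 u ω
    have hlt : f u < f ω := by nlinarith
    obtain ⟨k, hk⟩ := exists_pow_lt_of_lt_one (by linarith : (0:ℝ) < f ω - f u)
      (by norm_num : (1/2:ℝ) < 1)
    have := hfu k
    linarith

/-- slope necessary conditions (global sup form) for the non-intersection
property `⋂ᵢ(Ωᵢ−aᵢ) ∩ Ωₙ = ∅`.  Here "sup … < ε" is expressed as: there is `c < ε`
bounding all the difference quotients (written in multiplied-out form with the
parametric norm `‖·‖_{λ,η}`). -/
theorem stmt6 {X : Type*} [NormedAddCommGroup X] [NormedSpace ℝ X] [CompleteSpace X]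
    {m : ℕ} (hm : 1 ≤ m) (Ω : Fin m → Set X) (Ωn : Set X)
    (hΩ : ∀ i, IsClosed (Ω i)) (hΩn : IsClosed Ωn)
    (xbar : X) (hxbar : ∀ i, xbar ∈ Ω i) (hxbarn : xbar ∈ Ωn)
    (a : Fin m → X) (ε : ℝ) (hε : 0 < ε)
    (φ : ℝ → ℝ) (hφmono : StrictMonoOn φ (Set.Ici 0))
    (hφcont : ContinuousOn φ (Set.Ici 0)) (hφ0 : φ 0 = 0)
    (hφtop : Tendsto φ atTop atTop)
    (hne : (⋂ i, (fun z => z - a i) '' Ω i) ∩ Ωn = ∅)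
    (hd : φ (⨆ i, ‖a i‖) <
      φ (nonintersectIndex (fun i => (fun z => z - a i) '' Ω i) Ωn) + ε) :
    ∀ lam > (0 : ℝ), ∀ eta > (0 : ℝ),
      ∃ (ω : Fin m → X) (ωn : X),
        (∀ i, ω i ∈ Ω i ∩ Metric.ball xbar lam) ∧ ωn ∈ Ωn ∩ Metric.ball xbar eta ∧
        0 < (⨆ i, ‖ωn + a i - ω i‖) ∧ (⨆ i, ‖ωn + a i - ω i‖) ≤ (⨆ i, ‖a i‖) ∧
        ∃ c < ε, ∀ (u : Fin m → X) (un : X), (∀ i, u i ∈ Ω i) → un ∈ Ωn →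
          ¬(u = ω ∧ un = ωn) →
          φ (⨆ i, ‖ωn + a i - ω i‖) - φ (⨆ i, ‖un + a i - u i‖) ≤
            c * max (⨆ i, lam⁻¹ * ‖u i - ω i‖) (eta⁻¹ * ‖un - ωn‖) := by
  intro lam hlam eta heta
  haveI : Nonempty (Fin m) := Fin.pos_iff_nonempty.mp hm
  have hbddA : ∀ h : Fin m → ℝ, BddAbove (Set.range h) := fun h => (Set.finite_range h).bddAbove
  set Sset : Set ((Fin m → X) × X) := {p | (∀ i, p.1 i ∈ Ω i) ∧ p.2 ∈ Ωn} with hSsetdef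
  have hSclosed : IsClosed Sset := by
    have h1 : {p : (Fin m → X) × X | ∀ i, p.1 i ∈ Ω i} = Prod.fst ⁻¹' Set.univ.pi Ω := by
      ext p; simp [Set.mem_pi]
    have h2 : Sset = {p : (Fin m → X) × X | ∀ i, p.1 i ∈ Ω i} ∩ Prod.snd ⁻¹' Ωn := rfl
    rw [h2, h1]
    exact ((isClosed_set_pi fun i _ => hΩ i).preimage continuous_fst).inter
      (hΩn.preimage continuous_snd)
  haveI : CompleteSpace Sset := hSclosed.completeSpace_coe
  -- basic norm/dist facts
  have hsub1 : ∀ p q : Sset, ∀ i, ‖p.1.1 i - q.1.1 i‖ ≤ dist p q := by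
    intro p q i
    rw [← dist_eq_norm]
    calc dist (p.1.1 i) (q.1.1 i) ≤ dist p.1.1 q.1.1 := dist_le_pi_dist _ _ i
      _ ≤ dist p.1 q.1 := by rw [Prod.dist_eq]; exact le_max_left _ _
      _ = dist p q := (Subtype.dist_eq p q).symm
  have hsub2 : ∀ p q : Sset, ‖p.1.2 - q.1.2‖ ≤ dist p q := by
    intro p q
    rw [← dist_eq_norm]
    calc dist p.1.2 q.1.2 ≤ dist p.1 q.1 := by rw [Prod.dist_eq]; exact le_max_right _ _
      _ = dist p q := (Subtype.dist_eq p q).symm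
  -- the function g
  have hgnn : ∀ p : Sset, 0 ≤ ⨆ i, ‖p.1.2 + a i - p.1.1 i‖ :=
    fun p => Real.iSup_nonneg fun i => norm_nonneg _
  have hglip : ∀ p q : Sset, (⨆ i, ‖p.1.2 + a i - p.1.1 i‖) ≤
      (⨆ i, ‖q.1.2 + a i - q.1.1 i‖) + 2 * dist p q := by
    intro p q
    refine ciSup_le fun i => ?_
    have h0 : p.1.2 + a i - p.1.1 i =
        (q.1.2 + a i - q.1.1 i) + ((p.1.2 - q.1.2) + (q.1.1 i - p.1.1 i)) := by abel
    have h1 : ‖p.1.2 + a i - p.1.1 i‖ ≤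
        ‖q.1.2 + a i - q.1.1 i‖ + (‖p.1.2 - q.1.2‖ + ‖q.1.1 i - p.1.1 i‖) := by
      rw [h0]
      exact (norm_add_le _ _).trans (add_le_add le_rfl (norm_add_le _ _))
    have h2 : ‖q.1.2 + a i - q.1.1 i‖ ≤ ⨆ j, ‖q.1.2 + a j - q.1.1 j‖ := by
      apply le_ciSup (hbddA _) i
    have h3 : ‖p.1.2 - q.1.2‖ ≤ dist p q := hsub2 p q
    have h4 : ‖q.1.1 i - p.1.1 i‖ ≤ dist p q := by
      rw [norm_sub_rev]; exact hsub1 p q i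
    linarith
  have hgcont : Continuous fun p : Sset => ⨆ i, ‖p.1.2 + a i - p.1.1 i‖ := by
    have key : ∀ p q : Sset, dist (⨆ i, ‖p.1.2 + a i - p.1.1 i‖)
        (⨆ i, ‖q.1.2 + a i - q.1.1 i‖) ≤ 2 * dist p q := by
      intro p q
      rw [Real.dist_eq, abs_sub_le_iff]
      constructor
      · linarith [hglip p q]
      · have := hglip q p; rw [dist_comm q p] at this; linarith
    exact (LipschitzWith.of_dist_le_mul (K := 2) fun p q => by
      simpa using key p q).continuous
  have hfcont : Continuous fun p : Sset => φ (⨆ i, ‖p.1.2 + a i - p.1.1 i‖) :=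
    hφcont.comp_continuous hgcont fun p => hgnn p
  have hmononn := hφmono.monotoneOn
  have hfnn : ∀ p : Sset, 0 ≤ φ (⨆ i, ‖p.1.2 + a i - p.1.1 i‖) := fun p => by
    rw [← hφ0]
    exact hmononn Set.self_mem_Ici (Set.mem_Ici.mpr (hgnn p)) (hgnn p)
  -- the nonintersect index
  have hd0nn : 0 ≤ nonintersectIndex (fun i => (fun z => z - a i) '' Ω i) Ωn := by
    apply Real.sInf_nonneg
    rintro r ⟨u, un, hu, hun, rfl⟩
    exact Real.iSup_nonneg fun i => norm_nonneg _
  have hd0le : ∀ p : Sset, nonintersectIndex (fun i => (fun z => z - a i) '' Ω i) Ωn ≤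
      ⨆ i, ‖p.1.2 + a i - p.1.1 i‖ := by
    intro p
    apply csInf_le
    · refine ⟨0, ?_⟩
      rintro r ⟨u, un, hu, hun, rfl⟩
      exact Real.iSup_nonneg fun i => norm_nonneg _
    · refine ⟨fun i => p.1.1 i - a i, p.1.2, fun i => ⟨p.1.1 i, p.2.1 i, rfl⟩, p.2.2, ?_⟩
      exact iSup_congr fun i => by simp only [sub_sub_eq_add_sub]
  have hφd0le : ∀ p : Sset, φ (nonintersectIndex (fun i => (fun z => z - a i) '' Ω i) Ωn) ≤
      φ (⨆ i, ‖p.1.2 + a i - p.1.1 i‖) := fun p =>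
    hmononn (Set.mem_Ici.mpr hd0nn) (Set.mem_Ici.mpr (hgnn p)) (hd0le p)
  -- the reference point
  have hx₀mem : ((fun _ => xbar, xbar) : (Fin m → X) × X) ∈ Sset := ⟨fun i => hxbar i, hxbarn⟩
  set x₀ : Sset := ⟨(fun _ => xbar, xbar), hx₀mem⟩ with hx₀def
  have hgx₀ : (⨆ i, ‖x₀.1.2 + a i - x₀.1.1 i‖) = ⨆ i, ‖a i‖ :=
    iSup_congr fun i => by rw [hx₀def]; show ‖xbar + a i - xbar‖ = ‖a i‖; rw [add_sub_cancel_left]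
  -- the constants
  set G := max (φ (⨆ i, ‖a i‖) -
    φ (nonintersectIndex (fun i => (fun z => z - a i) '' Ω i) Ωn)) 0 with hGdef
  have hG0 : 0 ≤ G := le_max_right _ _
  have hGε : G < ε := max_lt (by linarith) hε
  set c := (G + ε) / 2 with hcdef
  have hc0 : 0 < c := by rw [hcdef]; linarith
  have hGc : G < c := by rw [hcdef]; linarith
  have hcε : c < ε := by rw [hcdef]; linarith
  set r := G / c with hrdef
  have hr1 : r < 1 := (div_lt_one hc0).mpr hGc
  have hcr : c * r = G := by
    rw [hrdef, mul_comm, div_mul_cancel₀ _ hc0.ne']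
  have hx₀b : ∀ p : Sset, φ (⨆ i, ‖x₀.1.2 + a i - x₀.1.1 i‖) ≤
      φ (⨆ i, ‖p.1.2 + a i - p.1.1 i‖) + c * r := by
    intro p
    have h2 := hφd0le p
    have h3 : φ (⨆ i, ‖a i‖) -
        φ (nonintersectIndex (fun i => (fun z => z - a i) '' Ω i) Ωn) ≤ G := le_max_left _ _
    rw [hcr, hgx₀]
    linarith
  -- the parametric distance D
  have hlaminv : (0:ℝ) ≤ lam⁻¹ := inv_nonneg.mpr hlam.le
  have hetainv : (0:ℝ) ≤ eta⁻¹ := inv_nonneg.mpr heta.le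
  have hDsymm : ∀ p q : Sset,
      (max (⨆ i, lam⁻¹ * ‖p.1.1 i - q.1.1 i‖) (eta⁻¹ * ‖p.1.2 - q.1.2‖)) =
      (max (⨆ i, lam⁻¹ * ‖q.1.1 i - p.1.1 i‖) (eta⁻¹ * ‖q.1.2 - p.1.2‖)) := by
    intro p q
    rw [norm_sub_rev p.1.2]
    congr 1
    exact iSup_congr fun i => by rw [norm_sub_rev]
  have hDself : ∀ p : Sset,
      (max (⨆ i, lam⁻¹ * ‖p.1.1 i - p.1.1 i‖) (eta⁻¹ * ‖p.1.2 - p.1.2‖)) = 0 := by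
    intro p
    simp [ciSup_const]
  have hDnn : ∀ p q : Sset,
      0 ≤ max (⨆ i, lam⁻¹ * ‖p.1.1 i - q.1.1 i‖) (eta⁻¹ * ‖p.1.2 - q.1.2‖) := fun p q =>
    le_trans (mul_nonneg hetainv (norm_nonneg _)) (le_max_right _ _)
  have hDtri : ∀ p q s : Sset,
      (max (⨆ i, lam⁻¹ * ‖p.1.1 i - s.1.1 i‖) (eta⁻¹ * ‖p.1.2 - s.1.2‖)) ≤
      (max (⨆ i, lam⁻¹ * ‖p.1.1 i - q.1.1 i‖) (eta⁻¹ * ‖p.1.2 - q.1.2‖)) +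
      (max (⨆ i, lam⁻¹ * ‖q.1.1 i - s.1.1 i‖) (eta⁻¹ * ‖q.1.2 - s.1.2‖)) := by
    intro p q s
    apply max_le
    · refine ciSup_le fun i => ?_
      have h1 : ‖p.1.1 i - s.1.1 i‖ ≤ ‖p.1.1 i - q.1.1 i‖ + ‖q.1.1 i - s.1.1 i‖ := by
        have := dist_triangle (p.1.1 i) (q.1.1 i) (s.1.1 i)
        simpa [dist_eq_norm] using this
      have h4 : lam⁻¹ * ‖p.1.1 i - s.1.1 i‖ ≤
          lam⁻¹ * ‖p.1.1 i - q.1.1 i‖ + lam⁻¹ * ‖q.1.1 i - s.1.1 i‖ := by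
        rw [← mul_add]; exact mul_le_mul_of_nonneg_left h1 hlaminv
      have h2 : lam⁻¹ * ‖p.1.1 i - q.1.1 i‖ ≤
          max (⨆ j, lam⁻¹ * ‖p.1.1 j - q.1.1 j‖) (eta⁻¹ * ‖p.1.2 - q.1.2‖) :=
        le_trans (by apply le_ciSup (hbddA _) i) (le_max_left _ _)
      have h3 : lam⁻¹ * ‖q.1.1 i - s.1.1 i‖ ≤
          max (⨆ j, lam⁻¹ * ‖q.1.1 j - s.1.1 j‖) (eta⁻¹ * ‖q.1.2 - s.1.2‖) :=
        le_trans (by apply le_ciSup (hbddA _) i) (le_max_left _ _)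
      linarith
    · have h1 : ‖p.1.2 - s.1.2‖ ≤ ‖p.1.2 - q.1.2‖ + ‖q.1.2 - s.1.2‖ := by
        have := dist_triangle p.1.2 q.1.2 s.1.2
        simpa [dist_eq_norm] using this
      have h4 : eta⁻¹ * ‖p.1.2 - s.1.2‖ ≤
          eta⁻¹ * ‖p.1.2 - q.1.2‖ + eta⁻¹ * ‖q.1.2 - s.1.2‖ := by
        rw [← mul_add]; exact mul_le_mul_of_nonneg_left h1 hetainv
      have h2 : eta⁻¹ * ‖p.1.2 - q.1.2‖ ≤
          max (⨆ j, lam⁻¹ * ‖p.1.1 j - q.1.1 j‖) (eta⁻¹ * ‖p.1.2 - q.1.2‖) := le_max_right _ _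
      have h3 : eta⁻¹ * ‖q.1.2 - s.1.2‖ ≤
          max (⨆ j, lam⁻¹ * ‖q.1.1 j - s.1.1 j‖) (eta⁻¹ * ‖q.1.2 - s.1.2‖) := le_max_right _ _
      linarith
  have hD2 : ∀ p q : Sset,
      (max (⨆ i, lam⁻¹ * ‖p.1.1 i - q.1.1 i‖) (eta⁻¹ * ‖p.1.2 - q.1.2‖)) ≤
      max lam⁻¹ eta⁻¹ * dist p q := by
    intro p q
    apply max_le
    · refine ciSup_le fun i => ?_
      calc lam⁻¹ * ‖p.1.1 i - q.1.1 i‖ ≤ lam⁻¹ * dist p q :=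
            mul_le_mul_of_nonneg_left (hsub1 p q i) hlaminv
        _ ≤ max lam⁻¹ eta⁻¹ * dist p q :=
            mul_le_mul_of_nonneg_right (le_max_left _ _) dist_nonneg
    · calc eta⁻¹ * ‖p.1.2 - q.1.2‖ ≤ eta⁻¹ * dist p q :=
            mul_le_mul_of_nonneg_left (hsub2 p q) hetainv
        _ ≤ max lam⁻¹ eta⁻¹ * dist p q :=
            mul_le_mul_of_nonneg_right (le_max_right _ _) dist_nonneg
  have hK : (0:ℝ) < max lam eta := lt_max_of_lt_left hlam
  have hD1 : ∀ p q : Sset, dist p q ≤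
      max lam eta * max (⨆ i, lam⁻¹ * ‖p.1.1 i - q.1.1 i‖) (eta⁻¹ * ‖p.1.2 - q.1.2‖) := by
    intro p q
    have hKD : 0 ≤ max lam eta *
        max (⨆ i, lam⁻¹ * ‖p.1.1 i - q.1.1 i‖) (eta⁻¹ * ‖p.1.2 - q.1.2‖) :=
      mul_nonneg hK.le (hDnn p q)
    rw [Subtype.dist_eq, Prod.dist_eq]
    apply max_le
    · refine (dist_pi_le_iff hKD).mpr fun i => ?_
      rw [dist_eq_norm]
      have h1 : lam⁻¹ * ‖p.1.1 i - q.1.1 i‖ ≤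
          max (⨆ j, lam⁻¹ * ‖p.1.1 j - q.1.1 j‖) (eta⁻¹ * ‖p.1.2 - q.1.2‖) :=
        le_trans (by apply le_ciSup (hbddA _) i) (le_max_left _ _)
      have h2 : ‖p.1.1 i - q.1.1 i‖ = lam * (lam⁻¹ * ‖p.1.1 i - q.1.1 i‖) := by
        rw [← mul_assoc, mul_inv_cancel₀ hlam.ne', one_mul]
      calc ‖p.1.1 i - q.1.1 i‖ = lam * (lam⁻¹ * ‖p.1.1 i - q.1.1 i‖) := h2
        _ ≤ lam *
            max (⨆ j, lam⁻¹ * ‖p.1.1 j - q.1.1 j‖) (eta⁻¹ * ‖p.1.2 - q.1.2‖) :=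
            mul_le_mul_of_nonneg_left h1 hlam.le
        _ ≤ max lam eta *
            max (⨆ j, lam⁻¹ * ‖p.1.1 j - q.1.1 j‖) (eta⁻¹ * ‖p.1.2 - q.1.2‖) :=
            mul_le_mul_of_nonneg_right (le_max_left _ _) (hDnn p q)
    · rw [dist_eq_norm]
      have h1 : eta⁻¹ * ‖p.1.2 - q.1.2‖ ≤
          max (⨆ j, lam⁻¹ * ‖p.1.1 j - q.1.1 j‖) (eta⁻¹ * ‖p.1.2 - q.1.2‖) := le_max_right _ _
      have h2 : ‖p.1.2 - q.1.2‖ = eta * (eta⁻¹ * ‖p.1.2 - q.1.2‖) := by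
        rw [← mul_assoc, mul_inv_cancel₀ heta.ne', one_mul]
      calc ‖p.1.2 - q.1.2‖ = eta * (eta⁻¹ * ‖p.1.2 - q.1.2‖) := h2
        _ ≤ eta *
            max (⨆ j, lam⁻¹ * ‖p.1.1 j - q.1.1 j‖) (eta⁻¹ * ‖p.1.2 - q.1.2‖) :=
            mul_le_mul_of_nonneg_left h1 heta.le
        _ ≤ max lam eta *
            max (⨆ j, lam⁻¹ * ‖p.1.1 j - q.1.1 j‖) (eta⁻¹ * ‖p.1.2 - q.1.2‖) :=
            mul_le_mul_of_nonneg_right (le_max_right _ _) (hDnn p q)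
  -- apply Ekeland
  obtain ⟨ω, hωd, hωf, hωmin⟩ :=
    myEkeland (fun p : Sset => φ (⨆ i, ‖p.1.2 + a i - p.1.1 i‖)) hfcont hfnn
      (fun p q : Sset => max (⨆ i, lam⁻¹ * ‖p.1.1 i - q.1.1 i‖) (eta⁻¹ * ‖p.1.2 - q.1.2‖))
      hDsymm hDself hDtri _ hD2 _ hK hD1 c r hc0 x₀ hx₀b
  have hωd' : max (⨆ i, lam⁻¹ * ‖ω.1.1 i - xbar‖) (eta⁻¹ * ‖ω.1.2 - xbar‖) < 1 :=
    lt_of_le_of_lt hωd hr1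
  have hωf' : φ (⨆ i, ‖ω.1.2 + a i - ω.1.1 i‖) ≤ φ (⨆ i, ‖a i‖) := by
    have h1 : φ (⨆ i, ‖ω.1.2 + a i - ω.1.1 i‖) ≤ φ (⨆ i, ‖x₀.1.2 + a i - x₀.1.1 i‖) := hωf
    rwa [hgx₀] at h1
  refine ⟨ω.1.1, ω.1.2, fun i => ⟨ω.2.1 i, ?_⟩, ⟨ω.2.2, ?_⟩, ?_, ?_, c, hcε, ?_⟩
  · rw [Metric.mem_ball, dist_eq_norm]
    have h1 : lam⁻¹ * ‖ω.1.1 i - xbar‖ ≤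
        max (⨆ j, lam⁻¹ * ‖ω.1.1 j - xbar‖) (eta⁻¹ * ‖ω.1.2 - xbar‖) :=
      le_trans (by apply le_ciSup (hbddA _) i) (le_max_left _ _)
    have h2 := mul_lt_mul_of_pos_left (h1.trans_lt hωd') hlam
    rwa [mul_one, ← mul_assoc, mul_inv_cancel₀ hlam.ne', one_mul] at h2
  · rw [Metric.mem_ball, dist_eq_norm]
    have h1 : eta⁻¹ * ‖ω.1.2 - xbar‖ ≤
        max (⨆ j, lam⁻¹ * ‖ω.1.1 j - xbar‖) (eta⁻¹ * ‖ω.1.2 - xbar‖) := le_max_right _ _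
    have h2 := mul_lt_mul_of_pos_left (h1.trans_lt hωd') heta
    rwa [mul_one, ← mul_assoc, mul_inv_cancel₀ heta.ne', one_mul] at h2
  · by_contra hpos
    push_neg at hpos
    have hall : ∀ i, ω.1.2 + a i - ω.1.1 i = 0 := by
      intro i
      have h1 : ‖ω.1.2 + a i - ω.1.1 i‖ ≤ 0 := le_trans (by apply le_ciSup (hbddA _) i) hpos
      exact norm_le_zero_iff.mp h1
    have hmem2 : ω.1.2 ∈ (⋂ i, (fun z => z - a i) '' Ω i) ∩ Ωn := by
      refine ⟨Set.mem_iInter.mpr fun i => ⟨ω.1.1 i, ω.2.1 i, ?_⟩, ω.2.2⟩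
      have h2 : ω.1.2 + a i = ω.1.1 i := by
        have := hall i; rwa [sub_eq_zero] at this
      show ω.1.1 i - a i = ω.1.2
      rw [← h2, add_sub_cancel_right]
    rw [hne] at hmem2
    exact hmem2
  · exact (hφmono.le_iff_le (Set.mem_Ici.mpr (hgnn ω))
      (Set.mem_Ici.mpr (Real.iSup_nonneg fun i => norm_nonneg _))).mp hωf'
  · intro u un hu hun _
    have h : φ (⨆ i, ‖ω.1.2 + a i - ω.1.1 i‖) ≤ φ (⨆ i, ‖un + a i - u i‖) +
        c * max (⨆ i, lam⁻¹ * ‖u i - ω.1.1 i‖) (eta⁻¹ * ‖un - ω.1.2‖) :=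
      hωmin ⟨(u, un), hu, hun⟩
    linarith
end

section
/- Let Ω₁,…,Ωₙ (n≥2) be closed subsets of a Banach space X, x̄ ∈ ∩_{i=1}^n Ωᵢ, a₁,…,a_{n−1} ∈ X, ε > 0 and φ ∈ 𝒞. Suppose ∩_{i=1}^{n−1}(Ωᵢ−aᵢ) ∩ Ωₙ = ∅ and φ(max_{1≤i≤n−1}‖aᵢ‖) < φ(d(Ω₁−a₁,…,Ω_{n−1}−a_{n−1},Ωₙ)) + ε. Then for any λ>0 and η>0 there exist points ωᵢ ∈ Ωᵢ ∩ B_λ(x̄) (i=1,…,n−1) and ωₙ ∈ Ωₙ ∩ B_η(x̄) such that 0 < max_{1≤i≤n−1}‖ωₙ+aᵢ−ωᵢ‖ ≤ max_{1≤i≤n−1}‖aᵢ‖, the limsup over Ωᵢ ∋ uᵢ → ωᵢ (i=1,…,n), (u₁,…,uₙ) ≠ (ω₁,…,ωₙ), of [φ(max_{1≤i≤n−1}‖ωₙ+aᵢ−ωᵢ‖) − φ(max_{1≤i≤n−1}‖uₙ+aᵢ−uᵢ‖)] / ‖(u₁−ω₁,…,uₙ−ωₙ)‖_{λ,η} is strictly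 less than ε, and moreover, if φ is differentiable at max_{1≤i≤n−1}‖ωₙ+aᵢ−ωᵢ‖, then φ'(max_{1≤i≤n−1}‖ωₙ+aᵢ−ωᵢ‖) times the limsup over Ωᵢ ∋ uᵢ → ωᵢ (i=1,…,n), (u₁,…,uₙ) ≠ (ω₁,…,ωₙ), of [max_{1≤i≤n−1}‖ωₙ+aᵢ−ωᵢ‖ − max_{1≤i≤n−1}‖uₙ+aᵢ−uᵢ‖] / ‖(u₁−ω₁,…,uₙ−ωₙ)‖_{λ,η} is strictly less than ε (with the convention 0·(+∞)=0). -/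
open Filter

private lemma ekeland {M : Type*} [MetricSpace M] [CompleteSpace M]
    (f : M → ℝ) (hf : Continuous f) (hf0 : ∀ x, 0 ≤ f x)
    (x₀ : M) (σ : ℝ) (hσ : 0 < σ) :
    ∃ x, f x ≤ f x₀ ∧ σ * dist x x₀ ≤ f x₀ - f x ∧ ∀ y, f x ≤ f y + σ * dist x y := by
  set S : M → Set M := fun z => {y | f y + σ * dist y z ≤ f z} with hS
  have hSself : ∀ z, z ∈ S z := by
    intro z; simp [hS]
  have hbdd : ∀ z, BddBelow (f '' S z) := by
    intro z; exact ⟨0, fun r ⟨y, _, hy⟩ => hy ▸ hf0 y⟩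
  have choice : ∀ (k : ℕ) (z : M), ∃ y, y ∈ S z ∧ f y ≤ sInf (f '' S z) + (1/2 : ℝ)^k := by
    intro k z
    obtain ⟨r, ⟨y, hyS, rfl⟩, hr⟩ := Real.lt_sInf_add_pos (⟨f z, z, hSself z, rfl⟩ : (f '' S z).Nonempty)
      (pow_pos (by norm_num : (0:ℝ) < 1/2) k)
    exact ⟨y, hyS, hr.le⟩
  let x : ℕ → M := fun k => Nat.rec x₀ (fun k xk => Classical.choose (choice k xk)) k
  have hx0 : x 0 = x₀ := rfl
  have hspec : ∀ k, x (k+1) ∈ S (x k) ∧ f (x (k+1)) ≤ sInf (f '' S (x k)) + (1/2:ℝ)^k :=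
    fun k => Classical.choose_spec (choice k (x k))
  have h1 : ∀ k, f (x (k+1)) + σ * dist (x (k+1)) (x k) ≤ f (x k) := fun k => (hspec k).1
  have h2 : ∀ k, f (x (k+1)) ≤ sInf (f '' S (x k)) + (1/2:ℝ)^k := fun k => (hspec k).2
  have hmono : Antitone fun k => f (x k) := by
    apply antitone_nat_of_succ_le
    intro k
    have := h1 k
    nlinarith [dist_nonneg (x := x (k+1)) (y := x k), hσ.le]
  have hdist : ∀ k j, k ≤ j → σ * dist (x j) (x k) ≤ f (x k) - f (x j) := by
    intro k j hkj
    induction j, hkj using Nat.le_induction with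
    | base => simp
    | succ j hkj ih =>
      have htri : dist (x (j+1)) (x k) ≤ dist (x (j+1)) (x j) + dist (x j) (x k) :=
        dist_triangle _ _ _
      have := h1 j
      nlinarith [hσ.le]
  have hbdr : BddBelow (Set.range fun k => f (x k)) := ⟨0, fun r ⟨k, hk⟩ => hk ▸ hf0 _⟩
  set L : ℝ := ⨅ k, f (x k) with hLdef
  have hL : Tendsto (fun k => f (x k)) atTop (nhds L) := tendsto_atTop_ciInf hmono hbdr
  have hLle : ∀ k, L ≤ f (x k) := fun k => ciInf_le hbdr k
  have hcauchy : CauchySeq x := by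
    apply cauchySeq_of_le_tendsto_0 (fun N => (f (x N) - L) / σ)
    · intro n m N hn hm
      rcases le_total n m with h | h
      · rw [dist_comm]
        have := hdist n m h
        have h2 := hmono hn
        have h3 := hLle m
        rw [le_div_iff₀ hσ]; nlinarith
      · have := hdist m n h
        have h2 := hmono hm
        have h3 := hLle n
        rw [le_div_iff₀ hσ]; nlinarith
    · have : Tendsto (fun N => (f (x N) - L) / σ) atTop (nhds ((L - L)/σ)) :=
        (hL.sub tendsto_const_nhds).div_const σ
      simpa using this
  obtain ⟨xs, hxs⟩ := cauchySeq_tendsto_of_complete hcauchy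
  have hfxs : f xs = L := tendsto_nhds_unique ((hf.tendsto xs).comp hxs) hL
  have hdiststar : ∀ k, σ * dist xs (x k) ≤ f (x k) - f xs := by
    intro k
    have htend : Tendsto (fun j => σ * dist (x j) (x k)) atTop
        (nhds (σ * dist xs (x k))) := (hxs.dist tendsto_const_nhds).const_mul σ
    refine le_of_tendsto htend ?_
    filter_upwards [eventually_ge_atTop k] with j hj
    have := hdist k j hj
    have := hLle j
    rw [hfxs]; linarith
  refine ⟨xs, ?_, ?_, ?_⟩
  · rw [hfxs]; exact hLle 0
  · have := hdiststar 0; rwa [hx0] at this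
  · intro y
    by_contra hcon
    push_neg at hcon
    have hyS : ∀ k, y ∈ S (x k) := by
      intro k
      have htri : dist y (x k) ≤ dist y xs + dist xs (x k) := dist_triangle _ _ _
      have hb := hdiststar k
      simp only [hS, Set.mem_setOf_eq]
      rw [dist_comm y xs] at htri
      nlinarith [hσ.le]
    have hkey : ∀ k, f (x (k+1)) ≤ f y + (1/2:ℝ)^k := by
      intro k
      have : sInf (f '' S (x k)) ≤ f y := csInf_le (hbdd _) ⟨y, hyS k, rfl⟩
      linarith [h2 k]
    have htend1 : Tendsto (fun k => f (x (k+1))) atTop (nhds L) :=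
      hL.comp (tendsto_add_atTop_nat 1)
    have htend2 : Tendsto (fun k => f y + (1/2:ℝ)^k) atTop (nhds (f y + 0)) :=
      tendsto_const_nhds.add (tendsto_pow_atTop_nhds_zero_of_lt_one (by norm_num) (by norm_num))
    have : L ≤ f y + 0 := le_of_tendsto_of_tendsto' htend1 htend2 hkey
    rw [← hfxs] at this
    nlinarith [dist_nonneg (x := xs) (y := y), hσ.le]

set_option maxHeartbeats 1000000 in
/-- slope necessary conditions (limsup form) for the non-intersection
property `⋂ᵢ(Ωᵢ−aᵢ) ∩ Ωₙ = ∅`.  "limsup … < ε" is expressed as: there are `c < ε`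
and `δ > 0` bounding the difference quotients for all admissible points within
distance `δ`; the "moreover" part: if `φ` has derivative `c'` at the max value, then
`c' ·(limsup) < ε` with the convention `0·(+∞)=0`, encoded as
`c' = 0 ∨ ∃ d, c' * d < ε ∧ (the quotient is eventually ≤ d)`. -/
theorem stmt7 {X : Type*} [NormedAddCommGroup X] [NormedSpace ℝ X] [CompleteSpace X]
    {m : ℕ} (hm : 1 ≤ m) (Ω : Fin m → Set X) (Ωn : Set X)
    (hΩ : ∀ i, IsClosed (Ω i)) (hΩn : IsClosed Ωn)
    (xbar : X) (hxbar : ∀ i, xbar ∈ Ω i) (hxbarn : xbar ∈ Ωn)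
    (a : Fin m → X) (ε : ℝ) (hε : 0 < ε)
    (φ : ℝ → ℝ) (hφmono : StrictMonoOn φ (Set.Ici 0))
    (hφcont : ContinuousOn φ (Set.Ici 0)) (hφ0 : φ 0 = 0)
    (hφtop : Tendsto φ atTop atTop)
    (hne : (⋂ i, (fun z => z - a i) '' Ω i) ∩ Ωn = ∅)
    (hd : φ (⨆ i, ‖a i‖) <
      φ (nonintersectIndex (fun i => (fun z => z - a i) '' Ω i) Ωn) + ε) :
    ∀ lam > (0 : ℝ), ∀ eta > (0 : ℝ),
      ∃ (ω : Fin m → X) (ωn : X),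
        (∀ i, ω i ∈ Ω i ∩ Metric.ball xbar lam) ∧ ωn ∈ Ωn ∩ Metric.ball xbar eta ∧
        0 < (⨆ i, ‖ωn + a i - ω i‖) ∧ (⨆ i, ‖ωn + a i - ω i‖) ≤ (⨆ i, ‖a i‖) ∧
        (∃ c < ε, ∃ δ > (0 : ℝ), ∀ (u : Fin m → X) (un : X),
          (∀ i, u i ∈ Ω i) → un ∈ Ωn →
          (∀ i, ‖u i - ω i‖ < δ) → ‖un - ωn‖ < δ → ¬(u = ω ∧ un = ωn) →
          φ (⨆ i, ‖ωn + a i - ω i‖) - φ (⨆ i, ‖un + a i - u i‖) ≤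
            c * max (⨆ i, lam⁻¹ * ‖u i - ω i‖) (eta⁻¹ * ‖un - ωn‖)) ∧
        (∀ c' : ℝ, HasDerivAt φ c' (⨆ i, ‖ωn + a i - ω i‖) →
          c' = 0 ∨ ∃ d : ℝ, c' * d < ε ∧ ∃ δ > (0 : ℝ), ∀ (u : Fin m → X) (un : X),
            (∀ i, u i ∈ Ω i) → un ∈ Ωn →
            (∀ i, ‖u i - ω i‖ < δ) → ‖un - ωn‖ < δ → ¬(u = ω ∧ un = ωn) →
            (⨆ i, ‖ωn + a i - ω i‖) - (⨆ i, ‖un + a i - u i‖) ≤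
              d * max (⨆ i, lam⁻¹ * ‖u i - ω i‖) (eta⁻¹ * ‖un - ωn‖)) := by
  intro lam hlam eta heta
  haveI : Nonempty (Fin m) := ⟨⟨0, hm⟩⟩
  have hlam0 : lam ≠ 0 := ne_of_gt hlam
  have heta0 : eta ≠ 0 := ne_of_gt heta
  have hbdd : ∀ (h : Fin m → ℝ), BddAbove (Set.range h) := fun h => (Set.finite_range h).bddAbove
  -- facts about the nonintersect index
  set dI : ℝ := nonintersectIndex (fun i => (fun z => z - a i) '' Ω i) Ωn with hdIdef
  have hdIset : ∀ r ∈ {r : ℝ | ∃ (u : Fin m → X) (un : X),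
      (∀ i, u i ∈ (fun z => z - a i) '' Ω i) ∧ un ∈ Ωn ∧ r = ⨆ i, ‖un - u i‖}, 0 ≤ r := by
    rintro r ⟨u, un, hu, hun, rfl⟩
    exact Real.iSup_nonneg fun i => norm_nonneg _
  have hdI0 : 0 ≤ dI := Real.sInf_nonneg hdIset
  have hdIle : ∀ (u : Fin m → X) (un : X), (∀ i, u i ∈ Ω i) → un ∈ Ωn →
      dI ≤ ⨆ i, ‖un + a i - u i‖ := by
    intro u un hu hun
    apply csInf_le ⟨0, hdIset⟩
    refine ⟨fun i => u i - a i, un, fun i => ⟨u i, hu i, rfl⟩, hun, ?_⟩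
    have heq : ∀ i, un - (u i - a i) = un + a i - u i := fun i => by abel
    simp only [heq]
  -- φ facts
  have hmonole : ∀ {s t : ℝ}, 0 ≤ s → s ≤ t → φ s ≤ φ t := fun {s t} hs hst =>
    hφmono.monotoneOn (Set.mem_Ici.2 hs) (Set.mem_Ici.2 (hs.trans hst)) hst
  have hφnonneg : ∀ {t : ℝ}, 0 ≤ t → 0 ≤ φ t := fun {t} ht => by
    rw [← hφ0]; exact hmonole le_rfl ht
  -- the constraint set
  set C : Set ((Fin m → X) × X) := {p | (∀ i, lam • p.1 i ∈ Ω i) ∧ eta • p.2 ∈ Ωn} with hC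
  have hCclosed : IsClosed C := by
    have h1 : ∀ i : Fin m, IsClosed {p : (Fin m → X) × X | lam • p.1 i ∈ Ω i} := fun i =>
      (hΩ i).preimage (((continuous_apply i).comp continuous_fst).const_smul lam)
    have h2 : IsClosed {p : (Fin m → X) × X | eta • p.2 ∈ Ωn} :=
      hΩn.preimage (continuous_snd.const_smul eta)
    have heqC : C = (⋂ i, {p : (Fin m → X) × X | lam • p.1 i ∈ Ω i}) ∩
        {p | eta • p.2 ∈ Ωn} := by
      ext p; simp [hC, Set.mem_iInter]
    rw [heqC]; exact (isClosed_iInter h1).inter h2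
  haveI : CompleteSpace C := hCclosed.completeSpace_coe
  set g : (Fin m → X) × X → ℝ := fun p => ⨆ i, ‖eta • p.2 + a i - lam • p.1 i‖ with hg
  have hgcont : Continuous g := by
    have h1 : Continuous fun p : (Fin m → X) × X =>
        Finset.univ.sup' Finset.univ_nonempty (fun i => ‖eta • p.2 + a i - lam • p.1 i‖) := by
      rw [continuous_iff_continuousAt]
      intro p
      have hcont : ∀ i : Fin m, Continuous fun p : (Fin m → X) × X =>
          ‖eta • p.2 + a i - lam • p.1 i‖ := fun i =>
        (((continuous_snd.const_smul eta).add continuous_const).sub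
          (((continuous_apply i).comp continuous_fst).const_smul lam)).norm
      exact Filter.Tendsto.finset_sup'_nhds_apply Finset.univ_nonempty
        (fun i _ => (hcont i).tendsto p)
    have heqg : g = fun p => Finset.univ.sup' Finset.univ_nonempty
        (fun i => ‖eta • p.2 + a i - lam • p.1 i‖) := by
      funext p; rw [hg, Finset.sup'_univ_eq_ciSup]
    rw [heqg]; exact h1
  have hg0 : ∀ p, 0 ≤ g p := fun p => Real.iSup_nonneg fun i => norm_nonneg _
  set F : C → ℝ := fun p => φ (g p.1) with hF
  have hFcont : Continuous F :=
    hφcont.comp_continuous (hgcont.comp continuous_subtype_val) fun p => Set.mem_Ici.2 (hg0 p.1)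
  have hlowF : ∀ p : C, φ dI ≤ F p := by
    intro p
    have h1 : dI ≤ g p.1 := hdIle (fun i => lam • p.1.1 i) (eta • p.1.2) p.2.1 p.2.2
    exact hmonole hdI0 h1
  have hF0 : ∀ p : C, 0 ≤ F p := fun p => hφnonneg (hg0 p.1)
  -- base point
  have hp₀mem : ((fun _ => lam⁻¹ • xbar, eta⁻¹ • xbar) : (Fin m → X) × X) ∈ C := by
    constructor
    · intro i; rw [smul_inv_smul₀ hlam0]; exact hxbar i
    · rw [smul_inv_smul₀ heta0]; exact hxbarn
  set p₀ : C := ⟨(fun _ => lam⁻¹ • xbar, eta⁻¹ • xbar), hp₀mem⟩ with hp₀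
  have hgp₀ : g p₀.1 = ⨆ i, ‖a i‖ := by
    simp only [hg, hp₀, smul_inv_smul₀ hlam0, smul_inv_smul₀ heta0, add_sub_cancel_left]
  -- parameters
  set ε₀ : ℝ := max (φ (⨆ i, ‖a i‖) - φ dI) (ε/2) with hε₀def
  have hε₀pos : 0 < ε₀ := lt_max_of_lt_right (half_pos hε)
  have hε₀lt : ε₀ < ε := max_lt (by linarith) (half_lt_self hε)
  set σ : ℝ := (ε₀ + ε)/2 with hσdef
  have hσpos : 0 < σ := by rw [hσdef]; linarith
  have hσgt : ε₀ < σ := by rw [hσdef]; linarith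
  have hσlt : σ < ε := by rw [hσdef]; linarith
  obtain ⟨q, hq1, hq2, hq3⟩ := ekeland F hFcont hF0 p₀ σ hσpos
  -- the point
  have hFp₀ : F p₀ = φ (⨆ i, ‖a i‖) := by rw [hF]; simp only [hgp₀]
  have hqd1 : dist q p₀ < 1 := by
    have h1 : σ * dist q p₀ ≤ ε₀ := by
      have h2 := hlowF q
      have h3 : φ (⨆ i, ‖a i‖) - φ dI ≤ ε₀ := le_max_left _ _
      rw [hFp₀] at hq2; linarith
    nlinarith [dist_nonneg (x := q) (y := p₀)]
  have hcomp1 : ∀ i, dist (q.1.1 i) (lam⁻¹ • xbar) ≤ dist q p₀ := by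
    intro i
    rw [Subtype.dist_eq, Prod.dist_eq]
    exact le_trans (dist_le_pi_dist q.1.1 p₀.1.1 i) (le_max_left _ _)
  have hcomp2 : dist q.1.2 (eta⁻¹ • xbar) ≤ dist q p₀ := by
    rw [Subtype.dist_eq, Prod.dist_eq]
    exact le_max_right _ _
  -- the slope inequality from Ekeland
  have hslope : ∀ (u : Fin m → X) (un : X), (∀ i, u i ∈ Ω i) → un ∈ Ωn →
      φ (g q.1) - φ (⨆ i, ‖un + a i - u i‖) ≤
        σ * max (⨆ i, lam⁻¹ * ‖u i - lam • q.1.1 i‖) (eta⁻¹ * ‖un - eta • q.1.2‖) := by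
    intro u un hu hun
    have hymem : ((fun i => lam⁻¹ • u i, eta⁻¹ • un) : (Fin m → X) × X) ∈ C := by
      constructor
      · intro i; rw [smul_inv_smul₀ hlam0]; exact hu i
      · rw [smul_inv_smul₀ heta0]; exact hun
    set y : C := ⟨(fun i => lam⁻¹ • u i, eta⁻¹ • un), hymem⟩ with hy
    have hFy : F y = φ (⨆ i, ‖un + a i - u i‖) := by
      rw [hF]; simp only [hy, hg, smul_inv_smul₀ hlam0, smul_inv_smul₀ heta0]
    have hmax0 : (0:ℝ) ≤ max (⨆ i, lam⁻¹ * ‖u i - lam • q.1.1 i‖) (eta⁻¹ * ‖un - eta • q.1.2‖) :=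
      le_trans (mul_nonneg (by positivity) (norm_nonneg _)) (le_max_right _ _)
    have hdy : dist q y ≤ max (⨆ i, lam⁻¹ * ‖u i - lam • q.1.1 i‖) (eta⁻¹ * ‖un - eta • q.1.2‖) := by
      rw [Subtype.dist_eq, Prod.dist_eq]
      apply max_le_max
      · rw [dist_pi_le_iff (le_trans (Real.iSup_nonneg fun i =>
          mul_nonneg (by positivity) (norm_nonneg _)) (le_refl _))]
        intro i
        have heq : dist (q.1.1 i) (lam⁻¹ • u i) = lam⁻¹ * ‖u i - lam • q.1.1 i‖ := by
          rw [dist_eq_norm]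
          have h1 : q.1.1 i - lam⁻¹ • u i = lam⁻¹ • (lam • q.1.1 i - u i) := by
            rw [smul_sub, inv_smul_smul₀ hlam0]
          rw [h1, norm_smul, Real.norm_eq_abs, abs_of_pos (by positivity), norm_sub_rev]
        rw [heq]
        exact le_ciSup (f := fun i => lam⁻¹ * ‖u i - lam • q.1.1 i‖) (hbdd _) i
      · rw [dist_eq_norm]
        have h1 : q.1.2 - eta⁻¹ • un = eta⁻¹ • (eta • q.1.2 - un) := by
          rw [smul_sub, inv_smul_smul₀ heta0]
        rw [h1, norm_smul, Real.norm_eq_abs, abs_of_pos (by positivity), norm_sub_rev]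
    have h3 := hq3 y
    have h4 : σ * dist q y ≤ σ * max (⨆ i, lam⁻¹ * ‖u i - lam • q.1.1 i‖)
        (eta⁻¹ * ‖un - eta • q.1.2‖) := mul_le_mul_of_nonneg_left hdy hσpos.le
    have hFq : F q = φ (g q.1) := rfl
    rw [hFq, hFy] at h3
    linarith
  -- positivity of the max value
  have hpos : 0 < g q.1 := by
    have hex : ∃ i, eta • q.1.2 + a i - lam • q.1.1 i ≠ 0 := by
      by_contra hcon
      push_neg at hcon
      have hmem : eta • q.1.2 ∈ (⋂ i, (fun z => z - a i) '' Ω i) ∩ Ωn := by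
        refine ⟨Set.mem_iInter.2 fun i => ⟨lam • q.1.1 i, q.2.1 i, ?_⟩, q.2.2⟩
        have h := sub_eq_zero.1 (hcon i)
        simp only
        rw [← h]; abel
      rw [hne] at hmem; exact hmem
    obtain ⟨i, hi⟩ := hex
    calc (0:ℝ) < ‖eta • q.1.2 + a i - lam • q.1.1 i‖ := norm_pos_iff.2 hi
      _ ≤ g q.1 := le_ciSup (f := fun i => ‖eta • q.1.2 + a i - lam • q.1.1 i‖) (hbdd _) i
  have hub : g q.1 ≤ ⨆ i, ‖a i‖ := by
    rw [hFp₀] at hq1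
    have h1 : (0:ℝ) ≤ ⨆ i, ‖a i‖ := Real.iSup_nonneg fun i => norm_nonneg _
    exact (hφmono.le_iff_le (Set.mem_Ici.2 (hg0 q.1)) (Set.mem_Ici.2 h1)).1 hq1
  refine ⟨fun i => lam • q.1.1 i, eta • q.1.2, ?_, ?_, hpos, hub, ?_, ?_⟩
  · intro i
    refine ⟨q.2.1 i, ?_⟩
    rw [Metric.mem_ball, dist_eq_norm]
    have h1 : lam • q.1.1 i - xbar = lam • (q.1.1 i - lam⁻¹ • xbar) := by
      rw [smul_sub, smul_inv_smul₀ hlam0]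
    rw [h1, norm_smul, Real.norm_eq_abs, abs_of_pos hlam]
    have h2 : ‖q.1.1 i - lam⁻¹ • xbar‖ < 1 := by
      rw [← dist_eq_norm]; exact lt_of_le_of_lt (hcomp1 i) hqd1
    nlinarith
  · refine ⟨q.2.2, ?_⟩
    rw [Metric.mem_ball, dist_eq_norm]
    have h1 : eta • q.1.2 - xbar = eta • (q.1.2 - eta⁻¹ • xbar) := by
      rw [smul_sub, smul_inv_smul₀ heta0]
    rw [h1, norm_smul, Real.norm_eq_abs, abs_of_pos heta]
    have h2 : ‖q.1.2 - eta⁻¹ • xbar‖ < 1 := by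
      rw [← dist_eq_norm]; exact lt_of_le_of_lt hcomp2 hqd1
    nlinarith
  · exact ⟨σ, hσlt, 1, one_pos, fun u un hu hun _ _ _ => hslope u un hu hun⟩
  · intro c' hc'
    by_cases hc0 : c' = 0
    · exact Or.inl hc0
    right
    have hc'nonneg : 0 ≤ c' := by
      have h1 : Tendsto (slope φ (g q.1)) (nhdsWithin (g q.1) (Set.Ioi (g q.1))) (nhds c') := by
        have h2 := hasDerivAt_iff_tendsto_slope.1 hc'
        exact h2.mono_left (nhdsWithin_mono _ fun t ht => ht.ne')
      refine ge_of_tendsto h1 ?_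
      filter_upwards [self_mem_nhdsWithin] with t ht
      rw [slope_def_field]
      have h3 : φ (g q.1) ≤ φ t := hmonole hpos.le (le_of_lt ht)
      have h4 : g q.1 < t := ht
      exact div_nonneg (by linarith) (by linarith)
    have hc'pos : 0 < c' := lt_of_le_of_ne hc'nonneg (Ne.symm hc0)
    have hθlt : σ/ε < 1 := (div_lt_one hε).2 hσlt
    set κ : ℝ := (1 - σ/ε) * c' / 2 with hκdef
    have hκpos : 0 < κ := by
      rw [hκdef]
      exact div_pos (mul_pos (by linarith) hc'pos) two_pos
    have hκlt : κ < c' := by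
      rw [hκdef]
      nlinarith [hc'pos, hθlt, div_pos hσpos hε]
    have hlo := (hasDerivAt_iff_isLittleO.1 hc')
    have hev := hlo.def hκpos
    rw [Metric.eventually_nhds_iff] at hev
    obtain ⟨ρ', hρ'pos, hρ'⟩ := hev
    have hA : 0 < c' - κ := by linarith
    refine ⟨σ / (c' - κ), ?_, ρ'/3, by positivity, ?_⟩
    · rw [← mul_div_assoc, div_lt_iff₀ hA]
      have hεκ : ε * κ = (ε - σ) * c' / 2 := by
        rw [hκdef]; field_simp
      nlinarith [mul_pos hc'pos (sub_pos.2 hσlt)]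
    · intro u un hu hun hud hund hne'
      set t : ℝ := ⨆ i, ‖un + a i - u i‖ with htdef
      have hmax0 : (0:ℝ) ≤ max (⨆ i, lam⁻¹ * ‖u i - lam • q.1.1 i‖)
          (eta⁻¹ * ‖un - eta • q.1.2‖) :=
        le_trans (mul_nonneg (by positivity) (norm_nonneg _)) (le_max_right _ _)
      have hkey : ∀ i, |‖un + a i - u i‖ - ‖eta • q.1.2 + a i - lam • q.1.1 i‖| ≤ 2*(ρ'/3) := by
        intro i
        have h := abs_norm_sub_norm_le (un + a i - u i) (eta • q.1.2 + a i - lam • q.1.1 i)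
        have heq : (un + a i - u i) - (eta • q.1.2 + a i - lam • q.1.1 i) =
            (un - eta • q.1.2) - (u i - lam • q.1.1 i) := by abel
        rw [heq] at h
        have h2 := norm_sub_le (un - eta • q.1.2) (u i - lam • q.1.1 i)
        have h3 := hund
        have h4 := hud i
        have h5 : ‖-(u i - lam • q.1.1 i)‖ = ‖u i - lam • q.1.1 i‖ := norm_neg _
        calc |‖un + a i - u i‖ - ‖eta • q.1.2 + a i - lam • q.1.1 i‖|
            ≤ ‖(un - eta • q.1.2) - (u i - lam • q.1.1 i)‖ := h
          _ ≤ ‖un - eta • q.1.2‖ + ‖u i - lam • q.1.1 i‖ := norm_sub_le _ _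
          _ ≤ 2*(ρ'/3) := by linarith
      have htup : t ≤ g q.1 + 2*(ρ'/3) := by
        apply ciSup_le
        intro i
        have h1 := (abs_le.1 (hkey i)).2
        have h2 : ‖eta • q.1.2 + a i - lam • q.1.1 i‖ ≤ g q.1 :=
          le_ciSup (f := fun i => ‖eta • q.1.2 + a i - lam • q.1.1 i‖) (hbdd _) i
        linarith
      have htlow : g q.1 ≤ t + 2*(ρ'/3) := by
        apply ciSup_le
        intro i
        have h1 := (abs_le.1 (hkey i)).1
        have h2 : ‖un + a i - u i‖ ≤ t :=
          le_ciSup (f := fun i => ‖un + a i - u i‖) (hbdd _) i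
        linarith
      rcases le_or_gt (g q.1) t with hcase | hcase
      · have h1 : g q.1 - t ≤ 0 := by linarith
        exact h1.trans (mul_nonneg (div_nonneg hσpos.le hA.le) hmax0)
      · have hdist : dist t (g q.1) < ρ' := by
          rw [Real.dist_eq, abs_of_neg (by linarith : t - g q.1 < 0)]
          linarith
        have happrox := hρ' hdist
        simp only [smul_eq_mul, Real.norm_eq_abs] at happrox
        rw [abs_of_neg (by linarith : t - g q.1 < 0)] at happrox
        have hup := hslope u un hu hun
        have hlb : (c' - κ) * (g q.1 - t) ≤ φ (g q.1) - φ t := by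
          have h1 := (abs_le.1 happrox).2
          nlinarith
        rw [div_mul_eq_mul_div, le_div_iff₀ hA]
        nlinarith
end

section
/- Let Ω₁,…,Ωₙ (n≥2) be closed subsets of a Banach space X, ωᵢ ∈ Ωᵢ (i=1,…,n), ε > 0 and φ ∈ 𝒞. Suppose ∩_{i=1}^n Ωᵢ = ∅ and φ(max_{1≤i≤n−1}‖ωₙ−ωᵢ‖) < φ(d(Ω₁,…,Ωₙ)) + ε. Then for any λ > 0 and η > 0 there exist points ωᵢ' ∈ Ωᵢ ∩ B_λ(ωᵢ) (i=1,…,n−1) and ωₙ' ∈ Ωₙ ∩ B_η(ωₙ) such that: (a) 0 < max_{1≤i≤n−1}‖ωₙ'−ωᵢ'‖ ≤ max_{1≤i≤n−1}‖ωₙ−ωᵢ‖; and (b) sup over all uᵢ ∈ Ωᵢ (i=1,…,n) with (u₁,…,uₙ) ≠ (ω₁',…,ωₙ') of [φ(max_{1≤i≤n−1}‖ωₙ'−ωᵢ'‖) − φ(max_{1≤i≤n−1}‖uₙ−uᵢ‖)] / ‖(u₁−ω₁',…,uₙ−ωₙ')‖_{λ,η} is strictly less than ε. -/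
open Filter Topology

noncomputable def stmt9D {X : Type*} [NormedAddCommGroup X] {m : ℕ} (lam eta : ℝ)
    (p q : (Fin m → X) × X) : ℝ :=
  max (⨆ i, lam⁻¹ * ‖q.1 i - p.1 i‖) (eta⁻¹ * ‖q.2 - p.2‖)

section Dlemmas
variable {X : Type*} [NormedAddCommGroup X] {m : ℕ} [Nonempty (Fin m)]
  {lam eta : ℝ} (hlam : 0 < lam) (heta : 0 < eta) (p q r : (Fin m → X) × X)

lemma norm_sub_le₃ {Y : Type*} [NormedAddCommGroup Y] (a b c : Y) :
    ‖a - b‖ ≤ ‖a - c‖ + ‖c - b‖ := by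
  have h : a - b = (a - c) + (c - b) := by abel
  rw [h]; exact norm_add_le _ _

include heta in
lemma stmt9D_nonneg : 0 ≤ stmt9D lam eta p q :=
  le_trans (mul_nonneg (by positivity) (norm_nonneg _)) (le_max_right _ _)

lemma stmt9D_self : stmt9D lam eta p p = 0 := by
  simp [stmt9D, ciSup_const]

omit [Nonempty (Fin m)] in
lemma stmt9D_symm : stmt9D lam eta p q = stmt9D lam eta q p := by
  unfold stmt9D
  rw [iSup_congr fun i => by rw [norm_sub_rev (q.1 i)], norm_sub_rev q.2]

lemma stmt9D_fst_le (i : Fin m) : lam⁻¹ * ‖q.1 i - p.1 i‖ ≤ stmt9D lam eta p q :=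
  le_trans (le_ciSup (f := fun j => lam⁻¹ * ‖q.1 j - p.1 j‖)
    (Set.Finite.bddAbove (Set.finite_range _)) i) (le_max_left _ _)

omit [Nonempty (Fin m)] in
lemma stmt9D_snd_le : eta⁻¹ * ‖q.2 - p.2‖ ≤ stmt9D lam eta p q := le_max_right _ _

include hlam heta in
lemma stmt9D_triangle : stmt9D lam eta p r ≤ stmt9D lam eta p q + stmt9D lam eta q r := by
  apply max_le
  · apply ciSup_le
    intro i
    calc lam⁻¹ * ‖r.1 i - p.1 i‖ ≤ lam⁻¹ * (‖r.1 i - q.1 i‖ + ‖q.1 i - p.1 i‖) := by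
          have := norm_sub_le₃ (r.1 i) (p.1 i) (q.1 i)
          have h0 : (0:ℝ) ≤ lam⁻¹ := by positivity
          nlinarith
      _ = lam⁻¹ * ‖q.1 i - p.1 i‖ + lam⁻¹ * ‖r.1 i - q.1 i‖ := by ring
      _ ≤ _ := add_le_add (stmt9D_fst_le _ _ i) (stmt9D_fst_le _ _ i)
  · have h3 : eta⁻¹ * ‖r.2 - p.2‖ ≤ eta⁻¹ * (‖r.2 - q.2‖ + ‖q.2 - p.2‖) := by
      have := norm_sub_le₃ r.2 p.2 q.2
      have h0 : (0:ℝ) ≤ eta⁻¹ := by positivity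
      nlinarith
    refine h3.trans ?_
    have h4 : eta⁻¹ * (‖r.2 - q.2‖ + ‖q.2 - p.2‖)
        = eta⁻¹ * ‖q.2 - p.2‖ + eta⁻¹ * ‖r.2 - q.2‖ := by ring
    rw [h4]
    exact add_le_add (stmt9D_snd_le _ _) (stmt9D_snd_le _ _)

include hlam heta in
lemma stmt9D_eq_zero (h : stmt9D lam eta p q ≤ 0) : q = p := by
  have h1 : ∀ i, q.1 i = p.1 i := by
    intro i
    have := (stmt9D_fst_le p q i).trans h
    have : ‖q.1 i - p.1 i‖ ≤ 0 := by
      nlinarith [norm_nonneg (q.1 i - p.1 i), inv_pos.2 hlam]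
    exact sub_eq_zero.1 (norm_le_zero_iff.1 this)
  have h2 : q.2 = p.2 := by
    have := (stmt9D_snd_le p q).trans h
    have : ‖q.2 - p.2‖ ≤ 0 := by
      nlinarith [norm_nonneg (q.2 - p.2), inv_pos.2 heta]
    exact sub_eq_zero.1 (norm_le_zero_iff.1 this)
  exact Prod.ext (funext h1) h2

include hlam heta in
lemma stmt9D_dist_le : dist p q ≤ max lam eta * stmt9D lam eta p q := by
  have hD := stmt9D_nonneg (lam := lam) heta p q
  rw [Prod.dist_eq]
  apply max_le
  · rw [dist_pi_le_iff (mul_nonneg (le_trans hlam.le (le_max_left _ _)) hD)]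
    intro i
    have h1 := stmt9D_fst_le (lam := lam) (eta := eta) p q i
    have : dist (p.1 i) (q.1 i) = ‖q.1 i - p.1 i‖ := by rw [dist_comm, dist_eq_norm]
    rw [this]
    calc ‖q.1 i - p.1 i‖ = lam * (lam⁻¹ * ‖q.1 i - p.1 i‖) := by
          field_simp
      _ ≤ lam * stmt9D lam eta p q := by gcongr
      _ ≤ max lam eta * stmt9D lam eta p q :=
          mul_le_mul_of_nonneg_right (le_max_left _ _) hD
  · have h1 := stmt9D_snd_le (lam := lam) (eta := eta) p q
    have : dist p.2 q.2 = ‖q.2 - p.2‖ := by rw [dist_comm, dist_eq_norm]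
    rw [this]
    calc ‖q.2 - p.2‖ = eta * (eta⁻¹ * ‖q.2 - p.2‖) := by field_simp
      _ ≤ eta * stmt9D lam eta p q := by gcongr
      _ ≤ max lam eta * stmt9D lam eta p q :=
          mul_le_mul_of_nonneg_right (le_max_right _ _) hD

include hlam heta in
lemma stmt9D_le_dist : stmt9D lam eta p q ≤ max lam⁻¹ eta⁻¹ * dist p q := by
  apply max_le
  · apply ciSup_le
    intro i
    calc lam⁻¹ * ‖q.1 i - p.1 i‖ = lam⁻¹ * dist (p.1 i) (q.1 i) := by
          rw [dist_comm, dist_eq_norm]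
      _ ≤ lam⁻¹ * dist p.1 q.1 := by gcongr; exact dist_le_pi_dist _ _ i
      _ ≤ lam⁻¹ * dist p q := by gcongr; exact le_max_left _ _
      _ ≤ max lam⁻¹ eta⁻¹ * dist p q := by gcongr; exact le_max_left _ _
  · calc eta⁻¹ * ‖q.2 - p.2‖ = eta⁻¹ * dist p.2 q.2 := by rw [dist_comm, dist_eq_norm]
      _ ≤ eta⁻¹ * dist p q := by gcongr; exact le_max_right _ _
      _ ≤ max lam⁻¹ eta⁻¹ * dist p q := by gcongr; exact le_max_right _ _

end Dlemmas

lemma stmt9_ekeland {X : Type*} [NormedAddCommGroup X] [CompleteSpace X]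
    {m : ℕ} [Nonempty (Fin m)] (Ω : Fin m → Set X) (Ωn : Set X)
    (hΩ : ∀ i, IsClosed (Ω i)) (hΩn : IsClosed Ωn)
    {lam eta c : ℝ} (hlam : 0 < lam) (heta : 0 < eta) (hc : 0 < c)
    (G : (Fin m → X) × X → ℝ) (hG0 : ∀ p, 0 ≤ G p)
    (hGc : ∀ (y : ℕ → (Fin m → X) × X) (p : (Fin m → X) × X),
      Tendsto y atTop (𝓝 p) → Tendsto (fun k => G (y k)) atTop (𝓝 (G p)))
    (x0 : (Fin m → X) × X) (hx01 : ∀ i, x0.1 i ∈ Ω i) (hx02 : x0.2 ∈ Ωn) :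
    ∃ p : (Fin m → X) × X, (∀ i, p.1 i ∈ Ω i) ∧ p.2 ∈ Ωn ∧
      G p + c * stmt9D lam eta x0 p ≤ G x0 ∧
      ∀ q : (Fin m → X) × X, (∀ i, q.1 i ∈ Ω i) → q.2 ∈ Ωn →
        G q + c * stmt9D lam eta p q ≤ G p → q = p := by
  classical
  set Adm : Set ((Fin m → X) × X) := {p | (∀ i, p.1 i ∈ Ω i) ∧ p.2 ∈ Ωn} with hAdm
  have key : ∀ a : {p : ((Fin m → X) × X) // p ∈ Adm}, ∀ δ : ℝ, 0 < δ →
      ∃ b : {p : ((Fin m → X) × X) // p ∈ Adm}, (G b.1 + c * stmt9D lam eta a.1 b.1 ≤ G a.1) ∧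
        ∀ y : {p : ((Fin m → X) × X) // p ∈ Adm}, G y.1 + c * stmt9D lam eta a.1 y.1 ≤ G a.1 →
          G b.1 ≤ G y.1 + δ := by
    intro a δ hδ
    set T : Set ℝ := {r | ∃ y : {p : ((Fin m → X) × X) // p ∈ Adm},
      (G y.1 + c * stmt9D lam eta a.1 y.1 ≤ G a.1) ∧ r = G y.1} with hT
    have hTne : T.Nonempty := ⟨G a.1, a, by rw [stmt9D_self]; simp, rfl⟩
    have hTbdd : BddBelow T := ⟨0, by rintro r ⟨y, -, rfl⟩; exact hG0 _⟩
    obtain ⟨r, hrT, hrlt⟩ := (csInf_lt_iff hTbdd hTne).1 (lt_add_of_pos_right _ hδ)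
    obtain ⟨b, hb1, rfl⟩ := hrT
    refine ⟨b, hb1, fun y hy => ?_⟩
    have := csInf_le hTbdd (Set.mem_setOf.2 ⟨y, hy, rfl⟩)
    linarith
  let x : ℕ → {p : ((Fin m → X) × X) // p ∈ Adm} := fun k =>
    Nat.rec (motive := fun _ => {p : ((Fin m → X) × X) // p ∈ Adm}) ⟨x0, hx01, hx02⟩
      (fun k a => (key a ((1/2 : ℝ)^k) (by positivity)).choose) k
  have hx0 : ((x 0).1 : ((Fin m → X) × X)) = x0 := rfl
  have hx1 : ∀ k, G (x (k+1)).1 + c * stmt9D lam eta (x k).1 (x (k+1)).1 ≤ G (x k).1 :=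
    fun k => (key (x k) ((1/2 : ℝ)^k) (by positivity)).choose_spec.1
  have hx2 : ∀ k, ∀ y : {p : ((Fin m → X) × X) // p ∈ Adm},
      G y.1 + c * stmt9D lam eta (x k).1 y.1 ≤ G (x k).1 →
      G (x (k+1)).1 ≤ G y.1 + (1/2 : ℝ)^k :=
    fun k => (key (x k) ((1/2 : ℝ)^k) (by positivity)).choose_spec.2
  have hdec : ∀ k, G (x (k+1)).1 ≤ G (x k).1 := by
    intro k
    have h := hx1 k
    have hD := stmt9D_nonneg (lam := lam) heta ((x k).1) ((x (k+1)).1)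
    nlinarith
  have hanti : Antitone (fun k => G (x k).1) := antitone_nat_of_succ_le hdec
  have chain : ∀ j k, j ≤ k →
      c * stmt9D lam eta (x j).1 (x k).1 ≤ G (x j).1 - G (x k).1 := by
    intro j k hjk
    induction k, hjk using Nat.le_induction with
    | base => rw [stmt9D_self]; simp
    | succ k hjk ih =>
      have h1 := hx1 k
      have htri := stmt9D_triangle hlam heta ((x j).1) ((x k).1) ((x (k+1)).1)
      have h2 := mul_le_mul_of_nonneg_left htri hc.le
      rw [mul_add] at h2
      linarith
  have hL : ∃ L, Tendsto (fun k => G (x k).1) atTop (𝓝 L) :=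
    ⟨_, tendsto_atTop_ciInf hanti ⟨0, by rintro r ⟨k, rfl⟩; exact hG0 _⟩⟩
  obtain ⟨L, hL⟩ := hL
  have hGcauchy : CauchySeq (fun k => G (x k).1) := hL.cauchySeq
  have hKpos : (0:ℝ) < max lam eta := lt_max_of_lt_left hlam
  have hxc : CauchySeq (fun k => ((x k).1 : ((Fin m → X) × X))) := by
    rw [Metric.cauchySeq_iff']
    intro ε hε
    obtain ⟨N, hN⟩ := Metric.cauchySeq_iff'.1 hGcauchy (c * ε / max lam eta)
      (by positivity)
    refine ⟨N, fun n hn => ?_⟩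
    have h1 := chain N n hn
    have h2 := hN n hn
    rw [Real.dist_eq, abs_lt] at h2
    have h3 : G (x n).1 ≤ G (x N).1 := hanti hn
    have h4 : dist ((x n).1 : ((Fin m → X) × X)) (x N).1 ≤ max lam eta * stmt9D lam eta (x N).1 (x n).1 := by
      rw [dist_comm]
      exact stmt9D_dist_le hlam heta _ _
    have h5 : stmt9D lam eta (x N).1 (x n).1 ≤ (G (x N).1 - G (x n).1) / c :=
      (le_div_iff₀ hc).2 (by linarith)
    have h6 : G (x N).1 - G (x n).1 < c * ε / max lam eta := by linarith
    calc dist ((x n).1 : ((Fin m → X) × X)) (x N).1 ≤ max lam eta * ((G (x N).1 - G (x n).1) / c) := by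
          refine h4.trans ?_; gcongr
      _ < max lam eta * (c * ε / max lam eta / c) := by gcongr
      _ = ε := by field_simp
  obtain ⟨p, hp⟩ := cauchySeq_tendsto_of_complete hxc
  have hAdmClosed : IsClosed Adm := by
    have h1 : IsClosed {p : ((Fin m → X) × X) | ∀ i, p.1 i ∈ Ω i} := by
      have : {p : ((Fin m → X) × X) | ∀ i, p.1 i ∈ Ω i} = ⋂ i, (fun p : ((Fin m → X) × X) => p.1 i) ⁻¹' Ω i := by
        ext p; simp
      rw [this]
      exact isClosed_iInter fun i =>
        (hΩ i).preimage ((continuous_apply i).comp continuous_fst)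
    have h2 : IsClosed {p : ((Fin m → X) × X) | p.2 ∈ Ωn} := hΩn.preimage continuous_snd
    exact h1.inter h2
  have hpAdm : p ∈ Adm :=
    hAdmClosed.mem_of_tendsto hp (Eventually.of_forall fun k => (x k).2)
  have hD0 : Tendsto (fun k => stmt9D lam eta (x k).1 p) atTop (𝓝 0) := by
    have hdist : Tendsto (fun k => max lam⁻¹ eta⁻¹ * dist ((x k).1 : ((Fin m → X) × X)) p) atTop
        (𝓝 (max lam⁻¹ eta⁻¹ * 0)) :=
      (tendsto_iff_dist_tendsto_zero.1 hp).const_mul _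
    rw [mul_zero] at hdist
    exact squeeze_zero (fun k => stmt9D_nonneg (lam := lam) heta _ _)
      (fun k => stmt9D_le_dist hlam heta _ _) hdist
  have hGp : Tendsto (fun k => G (x k).1) atTop (𝓝 (G p)) := hGc _ p hp
  have limchain : ∀ j, c * stmt9D lam eta (x j).1 p ≤ G (x j).1 - G p := by
    intro j
    have hDj : Tendsto (fun k => stmt9D lam eta (x j).1 (x k).1) atTop
        (𝓝 (stmt9D lam eta (x j).1 p)) := by
      rw [tendsto_iff_dist_tendsto_zero]
      refine squeeze_zero (fun k => dist_nonneg) (fun k => ?_) hD0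
      rw [Real.dist_eq, abs_sub_le_iff]
      constructor
      · have := stmt9D_triangle hlam heta ((x j).1) p ((x k).1)
        have hsym : stmt9D lam eta p ((x k).1 : ((Fin m → X) × X)) = stmt9D lam eta (x k).1 p :=
          stmt9D_symm _ _
        linarith
      · have := stmt9D_triangle hlam heta ((x j).1) ((x k).1) p
        linarith
    refine le_of_tendsto_of_tendsto (hDj.const_mul c) (tendsto_const_nhds.sub hGp) ?_
    filter_upwards [eventually_ge_atTop j] with k hk
    exact chain j k hk
  refine ⟨p, hpAdm.1, hpAdm.2, ?_, ?_⟩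
  · have := limchain 0
    rw [hx0] at this
    linarith
  · intro q hq1 hq2 hqle
    have hqS : ∀ k, G q + c * stmt9D lam eta (x k).1 q ≤ G (x k).1 := by
      intro k
      have t1 := stmt9D_triangle hlam heta ((x k).1) p q
      have t2 := limchain k
      have t3 := mul_le_mul_of_nonneg_left t1 hc.le
      rw [mul_add] at t3
      linarith
    have hklt : ∀ k, G (x (k+1)).1 ≤ G q + (1/2 : ℝ)^k :=
      fun k => hx2 k ⟨q, hq1, hq2⟩ (hqS k)
    have hGpq : G p ≤ G q := by
      have h1 : Tendsto (fun k => G (x (k+1)).1) atTop (𝓝 (G p)) :=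
        hGp.comp (tendsto_add_atTop_nat 1)
      have h2 : Tendsto (fun k => G q + (1/2 : ℝ)^k) atTop (𝓝 (G q + 0)) :=
        tendsto_const_nhds.add
          (tendsto_pow_atTop_nhds_zero_of_lt_one (by norm_num) (by norm_num))
      have := le_of_tendsto_of_tendsto h1 h2 (Eventually.of_forall hklt)
      simpa using this
    have hcD : c * stmt9D lam eta p q ≤ 0 := by linarith
    have hDnn : 0 ≤ stmt9D lam eta p q := stmt9D_nonneg (lam := lam) heta _ _
    have hDle : stmt9D lam eta p q ≤ 0 := by nlinarith
    exact stmt9D_eq_zero hlam heta p q hDle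

lemma stmt9S_lip {X : Type*} [NormedAddCommGroup X] {m : ℕ} [Nonempty (Fin m)]
    (p q : (Fin m → X) × X) :
    (⨆ i, ‖p.2 - p.1 i‖) ≤ (⨆ i, ‖q.2 - q.1 i‖) + 2 * dist p q := by
  apply ciSup_le
  intro i
  have e0 : p.2 - p.1 i = (q.2 - q.1 i) + ((p.2 - q.2) + (q.1 i - p.1 i)) := by abel
  have e1 : ‖p.2 - p.1 i‖ ≤ ‖q.2 - q.1 i‖ + (‖p.2 - q.2‖ + ‖q.1 i - p.1 i‖) := by
    rw [e0]
    exact (norm_add_le _ _).trans (add_le_add le_rfl (norm_add_le _ _))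
  have e2 : ‖q.2 - q.1 i‖ ≤ ⨆ j, ‖q.2 - q.1 j‖ :=
    le_ciSup (f := fun j => ‖q.2 - q.1 j‖) (Set.Finite.bddAbove (Set.finite_range _)) i
  have e3 : ‖p.2 - q.2‖ ≤ dist p q := by
    rw [← dist_eq_norm, Prod.dist_eq]
    exact le_max_right _ _
  have e4 : ‖q.1 i - p.1 i‖ ≤ dist p q := by
    have h1 : ‖q.1 i - p.1 i‖ = dist (q.1 i) (p.1 i) := (dist_eq_norm _ _).symm
    have h2 : dist (q.1 i) (p.1 i) ≤ dist q.1 p.1 := dist_le_pi_dist _ _ i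
    have h3 : dist q.1 p.1 = dist p.1 q.1 := dist_comm _ _
    have h4 : dist p.1 q.1 ≤ dist p q := by rw [Prod.dist_eq]; exact le_max_left _ _
    linarith
  linarith


/-- slope necessary conditions for a collection of sets with empty
intersection, around given points `ωᵢ ∈ Ωᵢ`. -/
theorem stmt9 {X : Type*} [NormedAddCommGroup X] [NormedSpace ℝ X] [CompleteSpace X]
    {m : ℕ} (hm : 1 ≤ m) (Ω : Fin m → Set X) (Ωn : Set X)
    (hΩ : ∀ i, IsClosed (Ω i)) (hΩn : IsClosed Ωn)
    (ω : Fin m → X) (ωn : X) (hω : ∀ i, ω i ∈ Ω i) (hωn : ωn ∈ Ωn)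
    (ε : ℝ) (hε : 0 < ε)
    (φ : ℝ → ℝ) (hφmono : StrictMonoOn φ (Set.Ici 0))
    (hφcont : ContinuousOn φ (Set.Ici 0)) (hφ0 : φ 0 = 0)
    (hφtop : Tendsto φ atTop atTop)
    (hne : (⋂ i, Ω i) ∩ Ωn = ∅)
    (hd : φ (⨆ i, ‖ωn - ω i‖) < φ (nonintersectIndex Ω Ωn) + ε) :
    ∀ lam > (0 : ℝ), ∀ eta > (0 : ℝ),
      ∃ (ω' : Fin m → X) (ωn' : X),
        (∀ i, ω' i ∈ Ω i ∩ Metric.ball (ω i) lam) ∧ ωn' ∈ Ωn ∩ Metric.ball ωn eta ∧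
        0 < (⨆ i, ‖ωn' - ω' i‖) ∧ (⨆ i, ‖ωn' - ω' i‖) ≤ (⨆ i, ‖ωn - ω i‖) ∧
        ∃ c < ε, ∀ (u : Fin m → X) (un : X), (∀ i, u i ∈ Ω i) → un ∈ Ωn →
          ¬(u = ω' ∧ un = ωn') →
          φ (⨆ i, ‖ωn' - ω' i‖) - φ (⨆ i, ‖un - u i‖) ≤
            c * max (⨆ i, lam⁻¹ * ‖u i - ω' i‖) (eta⁻¹ * ‖un - ωn'‖) := by
  intro lam hlam eta heta
  haveI : Nonempty (Fin m) := ⟨⟨0, hm⟩⟩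
  have hφle : MonotoneOn φ (Set.Ici 0) := hφmono.monotoneOn
  have hs0 : ∀ p : (Fin m → X) × X, (0:ℝ) ≤ ⨆ i, ‖p.2 - p.1 i‖ :=
    fun p => Real.iSup_nonneg fun i => norm_nonneg _
  have hG0 : ∀ p : (Fin m → X) × X, 0 ≤ φ (⨆ i, ‖p.2 - p.1 i‖) := by
    intro p
    rw [← hφ0]
    exact hφle Set.self_mem_Ici (hs0 p) (hs0 p)
  have hGc : ∀ (y : ℕ → (Fin m → X) × X) (p : (Fin m → X) × X),
      Tendsto y atTop (𝓝 p) →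
      Tendsto (fun k => φ (⨆ i, ‖(y k).2 - (y k).1 i‖)) atTop
        (𝓝 (φ (⨆ i, ‖p.2 - p.1 i‖))) := by
    intro y p hy
    have hdist : Tendsto (fun k => dist (y k) p) atTop (𝓝 0) :=
      tendsto_iff_dist_tendsto_zero.1 hy
    have hsy : Tendsto (fun k => ⨆ i, ‖(y k).2 - (y k).1 i‖) atTop
        (𝓝 (⨆ i, ‖p.2 - p.1 i‖)) := by
      rw [tendsto_iff_dist_tendsto_zero]
      refine squeeze_zero (fun k => dist_nonneg) (fun k => ?_)
        (by simpa using hdist.const_mul 2)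
      rw [Real.dist_eq, abs_sub_le_iff]
      have l1 := stmt9S_lip (y k) p
      have l2 := stmt9S_lip p (y k)
      have hcomm : dist p (y k) = dist (y k) p := dist_comm _ _
      constructor <;> linarith
    have hφt : Tendsto φ (𝓝[Set.Ici 0] (⨆ i, ‖p.2 - p.1 i‖))
        (𝓝 (φ (⨆ i, ‖p.2 - p.1 i‖))) := hφcont _ (hs0 p)
    exact hφt.comp (tendsto_nhdsWithin_iff.2 ⟨hsy, Eventually.of_forall fun k => hs0 _⟩)
  -- facts about the nonintersect index
  have hbddS : BddBelow {r : ℝ | ∃ (u : Fin m → X) (un : X),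
      (∀ i, u i ∈ Ω i) ∧ un ∈ Ωn ∧ r = ⨆ i, ‖un - u i‖} := by
    refine ⟨0, ?_⟩
    rintro r ⟨u, un, hu, hun, rfl⟩
    exact Real.iSup_nonneg fun i => norm_nonneg _
  have hd0 : 0 ≤ nonintersectIndex Ω Ωn := by
    apply Real.sInf_nonneg
    rintro r ⟨u, un, hu, hun, rfl⟩
    exact Real.iSup_nonneg fun i => norm_nonneg _
  have hdle : ∀ (u : Fin m → X) (un : X), (∀ i, u i ∈ Ω i) → un ∈ Ωn →
      nonintersectIndex Ω Ωn ≤ ⨆ i, ‖un - u i‖ := fun u un hu hun =>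
    csInf_le hbddS ⟨u, un, hu, hun, rfl⟩
  have hdF : nonintersectIndex Ω Ωn ≤ ⨆ i, ‖ωn - ω i‖ := hdle ω ωn hω hωn
  have hφdF : φ (nonintersectIndex Ω Ωn) ≤ φ (⨆ i, ‖ωn - ω i‖) :=
    hφle (Set.mem_Ici.2 hd0) (Set.mem_Ici.2 (Real.iSup_nonneg fun i => norm_nonneg _)) hdF
  -- the constants
  set ep : ℝ := (φ (⨆ i, ‖ωn - ω i‖) - φ (nonintersectIndex Ω Ωn) + ε) / 2 with hepdef
  have heppos : 0 < ep := by rw [hepdef]; linarith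
  have heplt : ep < ε := by rw [hepdef]; linarith
  have hgap : φ (⨆ i, ‖ωn - ω i‖) - φ (nonintersectIndex Ω Ωn) < ep := by
    rw [hepdef]; linarith
  set δ' : ℝ := (ep / ε + 1) / 2 with hδdef
  have hepε : ep / ε < 1 := (div_lt_one hε).2 heplt
  have hδpos : 0 < δ' := by rw [hδdef]; positivity
  have hδlt1 : δ' < 1 := by rw [hδdef]; linarith
  have hδgt : ep / ε < δ' := by rw [hδdef]; linarith
  set c : ℝ := ep / δ' with hcdef
  have hcpos : 0 < c := div_pos heppos hδpos
  have hcε : c < ε := by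
    rw [hcdef, div_lt_iff₀ hδpos]
    have := (div_lt_iff₀ hε).1 hδgt
    linarith
  have hcδ : c * δ' = ep := by
    rw [hcdef, div_mul_cancel₀ _ (ne_of_gt hδpos)]
  -- apply the Ekeland-type lemma
  obtain ⟨p, hp1, hp2, hp3, hp4⟩ :=
    stmt9_ekeland Ω Ωn hΩ hΩn hlam heta hcpos
      (fun p => φ (⨆ i, ‖p.2 - p.1 i‖)) hG0 hGc (ω, ωn) hω hωn
  have hp3' : φ (⨆ i, ‖p.2 - p.1 i‖) + c * stmt9D lam eta (ω, ωn) p ≤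
      φ (⨆ i, ‖ωn - ω i‖) := hp3
  have hφdG : φ (nonintersectIndex Ω Ωn) ≤ φ (⨆ i, ‖p.2 - p.1 i‖) :=
    hφle (Set.mem_Ici.2 hd0) (Set.mem_Ici.2 (hs0 p)) (hdle p.1 p.2 hp1 hp2)
  have hDlt : stmt9D lam eta (ω, ωn) p < δ' := by
    have h1 : c * stmt9D lam eta (ω, ωn) p < c * δ' := by
      rw [hcδ]; linarith
    exact lt_of_mul_lt_mul_left h1 hcpos.le
  have hDlt1 : stmt9D lam eta (ω, ωn) p < 1 := hDlt.trans hδlt1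
  refine ⟨p.1, p.2, fun i => ⟨hp1 i, ?_⟩, ⟨hp2, ?_⟩, ?_, ?_, c, hcε, ?_⟩
  · -- ball for first coordinates
    rw [Metric.mem_ball, dist_eq_norm]
    have h : lam⁻¹ * ‖p.1 i - ω i‖ ≤ stmt9D lam eta (ω, ωn) p :=
      stmt9D_fst_le (lam := lam) (eta := eta) (ω, ωn) p i
    have h2 : lam⁻¹ * ‖p.1 i - ω i‖ < 1 := lt_of_le_of_lt h hDlt1
    have h3 : ‖p.1 i - ω i‖ = lam * (lam⁻¹ * ‖p.1 i - ω i‖) := by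
      field_simp
    rw [h3]
    exact mul_lt_of_lt_one_right hlam h2
  · rw [Metric.mem_ball, dist_eq_norm]
    have h : eta⁻¹ * ‖p.2 - ωn‖ ≤ stmt9D lam eta (ω, ωn) p :=
      stmt9D_snd_le (lam := lam) (eta := eta) (ω, ωn) p
    have h2 : eta⁻¹ * ‖p.2 - ωn‖ < 1 := lt_of_le_of_lt h hDlt1
    have h3 : ‖p.2 - ωn‖ = eta * (eta⁻¹ * ‖p.2 - ωn‖) := by field_simp
    rw [h3]
    exact mul_lt_of_lt_one_right heta h2
  · -- positivity
    rcases (hs0 p).lt_or_eq with h | h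
    · exact h
    · exfalso
      have hmem : p.2 ∈ (⋂ i, Ω i) ∩ Ωn := by
        refine ⟨Set.mem_iInter.2 fun i => ?_, hp2⟩
        have hle : ‖p.2 - p.1 i‖ ≤ ⨆ j, ‖p.2 - p.1 j‖ :=
          le_ciSup (f := fun j => ‖p.2 - p.1 j‖)
            (Set.Finite.bddAbove (Set.finite_range _)) i
        have hz : ‖p.2 - p.1 i‖ ≤ 0 := by rw [← h] at hle; exact hle
        have : p.2 = p.1 i := sub_eq_zero.1 (norm_le_zero_iff.1 hz)
        rw [this]; exact hp1 i
      rw [hne] at hmem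
      exact hmem
  · -- decrease
    have hDnn := stmt9D_nonneg (lam := lam) heta (ω, ωn) p
    have hGle : φ (⨆ i, ‖p.2 - p.1 i‖) ≤ φ (⨆ i, ‖ωn - ω i‖) := by
      nlinarith [hp3']
    exact (hφmono.le_iff_le (Set.mem_Ici.2 (hs0 p))
      (Set.mem_Ici.2 (Real.iSup_nonneg fun i => norm_nonneg _))).1 hGle
  · -- slope inequality
    intro u un hu hun hnep
    have hq : (u, un) ≠ p := fun h => hnep ⟨congrArg Prod.fst h, congrArg Prod.snd h⟩
    by_contra hcon
    push_neg at hcon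
    refine hq (hp4 (u, un) hu hun ?_)
    show φ (⨆ i, ‖un - u i‖) +
        c * max (⨆ i, lam⁻¹ * ‖u i - p.1 i‖) (eta⁻¹ * ‖un - p.2‖) ≤
        φ (⨆ i, ‖p.2 - p.1 i‖)
    linarith
end

section
/- Let Ω₁,…,Ωₙ (n≥2) be closed subsets of a Banach space X, x̄ ∈ ∩_{i=1}^n Ωᵢ, a₁,…,a_{n−1} ∈ X, ε > 0 and φ ∈ 𝒞¹. Suppose ∩_{i=1}^{n−1}(Ωᵢ−aᵢ) ∩ Ωₙ = ∅ and φ(max_{1≤i≤n−1}‖aᵢ‖) < φ(d(Ω₁−a₁,…,Ω_{n−1}−a_{n−1},Ωₙ)) + ε. Then for any λ>0 and η>0 there exist points ωᵢ ∈ Ωᵢ ∩ B_λ(x̄) (i=1,…,n−1) and ωₙ ∈ Ωₙ ∩ B_η(x̄) with 0 < max_{1≤i≤n−1}‖ωₙ+aᵢ−ωᵢ‖ ≤ max_{1≤i≤n−1}‖aᵢ‖, and vectors x₁*,…,xₙ* ∈ X* such that Σ_{i=1}^n xᵢ* = 0, Σ_{i=1}^{n−1}‖xᵢ*‖ = 1,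 Σ_{i=1}^{n−1}⟨xᵢ*, ωₙ+aᵢ−ωᵢ⟩ = max_{1≤i≤n−1}‖ωₙ+aᵢ−ωᵢ‖, and φ'(max_{1≤i≤n−1}‖ωₙ+aᵢ−ωᵢ‖)·(λ Σ_{i=1}^{n−1} d(xᵢ*, N^C_{Ωᵢ}(ωᵢ)) + η d(xₙ*, N^C_{Ωₙ}(ωₙ))) < ε, where the distances in X* are with respect to the dual norm. -/
set_option linter.unusedSectionVars false
set_option maxHeartbeats 2000000

open Filter

/-- The Clarke tangent cone to `Ω` at `x`. -/
def clarkeTangent {X : Type*} [NormedAddCommGroup X] [NormedSpace ℝ X]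
    (Ω : Set X) (x : X) : Set X :=
  {z : X | ∀ (xs : ℕ → X) (ts : ℕ → ℝ),
    (∀ k, xs k ∈ Ω) → Tendsto xs atTop (nhds x) →
    (∀ k, 0 < ts k) → Antitone ts → Tendsto ts atTop (nhds 0) →
    ∃ zs : ℕ → X, Tendsto zs atTop (nhds z) ∧ ∀ k, xs k + ts k • zs k ∈ Ω}

/-- The Clarke normal cone to `Ω` at `x` (a subset of the dual space). -/
def clarkeNormal {X : Type*} [NormedAddCommGroup X] [NormedSpace ℝ X]
    (Ω : Set X) (x : X) : Set (X →L[ℝ] ℝ) :=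
  {p : X →L[ℝ] ℝ | ∀ z ∈ clarkeTangent Ω x, p z ≤ 0}

section Nmax
variable {X : Type*} [NormedAddCommGroup X] [NormedSpace ℝ X] {m : ℕ}

noncomputable def nmax (y : Fin m → X) : ℝ := ⨆ i, ‖y i‖

theorem nmax_nonneg (y : Fin m → X) : 0 ≤ nmax y := Real.iSup_nonneg fun _ => norm_nonneg _

theorem norm_le_nmax (y : Fin m → X) (i : Fin m) : ‖y i‖ ≤ nmax y :=
  le_ciSup (f := fun j => ‖y j‖) (Set.Finite.bddAbove (Set.finite_range _)) i

theorem nmax_le [Nonempty (Fin m)] {y : Fin m → X} {r : ℝ} (h : ∀ i, ‖y i‖ ≤ r) :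
    nmax y ≤ r := ciSup_le h

theorem nmax_add_le [Nonempty (Fin m)] (y y' : Fin m → X) :
    nmax (y + y') ≤ nmax y + nmax y' :=
  nmax_le fun i => (norm_add_le _ _).trans (add_le_add (norm_le_nmax y i) (norm_le_nmax y' i))

theorem nmax_smul [Nonempty (Fin m)] {c : ℝ} (hc : 0 ≤ c) (y : Fin m → X) :
    nmax (c • y) = c * nmax y := by
  apply le_antisymm
  · refine nmax_le fun i => ?_
    rw [Pi.smul_apply, norm_smul, Real.norm_eq_abs, abs_of_nonneg hc]
    exact mul_le_mul_of_nonneg_left (norm_le_nmax y i) hc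
  · rcases eq_or_lt_of_le hc with h | h
    · simp [← h, nmax_nonneg]
    · have hb : ∀ i, ‖y i‖ ≤ nmax (c • y) / c := fun i => by
        rw [le_div_iff₀ h]
        have := norm_le_nmax (c • y) i
        rw [Pi.smul_apply, norm_smul, Real.norm_eq_abs, abs_of_pos h] at this
        linarith
      exact (le_div_iff₀' h).mp (nmax_le hb)

theorem nmax_neg (y : Fin m → X) : nmax (-y) = nmax y := by simp [nmax]

theorem nmax_zero [Nonempty (Fin m)] : nmax (0 : Fin m → X) = 0 := by simp [nmax]

theorem abs_nmax_sub_nmax [Nonempty (Fin m)] (y y' : Fin m → X) :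
    |nmax y - nmax y'| ≤ nmax (y - y') := by
  have h1 := nmax_add_le y' (y - y')
  simp only [add_sub_cancel] at h1
  have h3 := nmax_add_le y (y' - y)
  simp only [add_sub_cancel] at h3
  have h2 : nmax (y' - y) = nmax (y - y') := by rw [← nmax_neg (y' - y)]; congr 1; abel
  rw [abs_le]; constructor <;> linarith

theorem nmax_le_sum [Nonempty (Fin m)] (y : Fin m → X) : nmax y ≤ ∑ i, ‖y i‖ :=
  nmax_le fun i => Finset.single_le_sum (fun j _ => norm_nonneg (y j)) (Finset.mem_univ i)

theorem nmax_eq_norm [Nonempty (Fin m)] (y : Fin m → X) : nmax y = ‖y‖ := by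
  apply le_antisymm (nmax_le fun i => norm_le_pi_norm y i)
  rw [pi_norm_le_iff_of_nonneg (nmax_nonneg y)]
  exact norm_le_nmax y

theorem nmax_single [Nonempty (Fin m)] [DecidableEq (Fin m)] (i : Fin m) (x : X) :
    nmax (Pi.single i x) = ‖x‖ := by
  apply le_antisymm
  · refine nmax_le fun j => ?_
    rcases eq_or_ne j i with rfl | h
    · simp
    · simp [Pi.single_eq_of_ne h]
  · simpa using norm_le_nmax (Pi.single i x) i

theorem nmax_continuous [Nonempty (Fin m)] : Continuous (nmax : (Fin m → X) → ℝ) := by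
  refine (LipschitzWith.of_dist_le_mul fun y y' => ?_).continuous (K := 1)
  rw [Real.dist_eq, NNReal.coe_one, one_mul]
  calc |nmax y - nmax y'| ≤ nmax (y - y') := abs_nmax_sub_nmax y y'
  _ = ‖y - y'‖ := nmax_eq_norm _
  _ = dist y y' := (dist_eq_norm y y').symm

end Nmax

section Ekeland
variable {Y : Type*} [NormedAddCommGroup Y] [CompleteSpace Y]

theorem ekeland_aux (W : Set Y) (hW : IsClosed W) (f : Y → ℝ) (hf : Continuous f)
    (D : Y → Y → ℝ) (hD0 : ∀ x, D x x = 0)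
    (hDtri : ∀ x y z, D x z ≤ D x y + D y z)
    {c : ℝ} (hc : 0 < c) (hDnorm : ∀ x y, c * ‖x - y‖ ≤ D x y)
    (hDcont : ∀ x, Continuous fun u => D u x)
    {b : ℝ} (hb : ∀ u ∈ W, b ≤ f u)
    {x₀ : Y} (hx₀ : x₀ ∈ W) {ε' : ℝ} (hε' : 0 < ε')
    (hmin : ∀ u ∈ W, f x₀ ≤ f u + ε') :
    ∃ ω ∈ W, f ω ≤ f x₀ ∧ D ω x₀ ≤ 1 ∧ ∀ u ∈ W, f ω ≤ f u + ε' * D u ω := by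
  have hDnn : ∀ x y, 0 ≤ D x y := fun x y =>
    le_trans (mul_nonneg hc.le (norm_nonneg _)) (hDnorm x y)
  -- the step lemma
  have step : ∀ x ∈ W, ∃ x', x' ∈ W ∧ (f x' + ε' * D x' x ≤ f x) ∧
      ∀ u ∈ W, f u + ε' * D u x ≤ f x → 2 * f x' ≤ f x + f u := by
    intro x hx
    set S : Set Y := {u | u ∈ W ∧ f u + ε' * D u x ≤ f x} with hS
    have hxS : x ∈ S := ⟨hx, by rw [hD0]; simp⟩
    have hSb : ∀ q ∈ f '' S, b ≤ q := by
      rintro q ⟨u, hu, rfl⟩; exact hb u hu.1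
    have hbdd : BddBelow (f '' S) := ⟨b, hSb⟩
    have hne : (f '' S).Nonempty := ⟨f x, x, hxS, rfl⟩
    set μ := sInf (f '' S) with hμ
    have hμx : μ ≤ f x := csInf_le hbdd ⟨x, hxS, rfl⟩
    rcases eq_or_lt_of_le hμx with h | h
    · refine ⟨x, hx, by rw [hD0]; simp, fun u hu hux => ?_⟩
      have : μ ≤ f u := csInf_le hbdd ⟨u, ⟨hu, hux⟩, rfl⟩
      linarith
    · obtain ⟨q, ⟨x', hx'S, rfl⟩, hq⟩ := exists_lt_of_csInf_lt hne (show μ < (f x + μ)/2 by linarith)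
      refine ⟨x', hx'S.1, hx'S.2, fun u hu hux => ?_⟩
      have : μ ≤ f u := csInf_le hbdd ⟨u, ⟨hu, hux⟩, rfl⟩
      linarith
  choose! next hnextW hnextD hnextM using step
  -- the sequence
  let seq : ℕ → Y := fun k => Nat.rec x₀ (fun _ x => next x) k
  have hseq0 : seq 0 = x₀ := rfl
  have hseqS : ∀ k, seq (k + 1) = next (seq k) := fun k => rfl
  have hseqW : ∀ k, seq k ∈ W := by
    intro k; induction k with
    | zero => exact hx₀
    | succ k ih => rw [hseqS]; exact hnextW _ ih
  have hdec : ∀ k, f (seq (k+1)) + ε' * D (seq (k+1)) (seq k) ≤ f (seq k) := by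
    intro k; rw [hseqS]; exact hnextD _ (hseqW k)
  have hfdec : ∀ k, f (seq (k+1)) ≤ f (seq k) := by
    intro k
    have := hdec k
    nlinarith [hDnn (seq (k+1)) (seq k), hε'.le]
  have chain : ∀ k j, k ≤ j → f (seq j) + ε' * D (seq j) (seq k) ≤ f (seq k) := by
    intro k j hkj
    induction j with
    | zero =>
      have : k = 0 := Nat.le_zero.mp hkj
      subst this; rw [hD0]; simp
    | succ j ih =>
      rcases Nat.lt_or_ge k (j+1) with h | h
      · have hkj' : k ≤ j := Nat.lt_succ_iff.mp h
        have h1 := ih hkj'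
        have h2 := hdec j
        have h3 := hDtri (seq (j+1)) (seq j) (seq k)
        nlinarith [hε'.le]
      · have : k = j + 1 := le_antisymm hkj h
        subst this; rw [hD0]; simp
  -- Cauchy
  have hbound : ∀ k, b ≤ f (seq k) := fun k => hb _ (hseqW k)
  have hcauchy : CauchySeq seq := by
    apply cauchySeq_of_dist_le_of_summable
      (fun k => (f (seq k) - f (seq (k+1))) / (c * ε'))
    · intro n
      rw [dist_eq_norm, ← norm_neg]
      have h1 := hDnorm (seq (n+1)) (seq n)
      have h2 := hdec n
      rw [le_div_iff₀ (by positivity)]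
      have : ‖-(seq n - seq (n+1))‖ = ‖seq (n+1) - seq n‖ := by rw [norm_neg, norm_sub_rev]
      rw [this]
      nlinarith [hDnn (seq (n+1)) (seq n)]
    · apply summable_of_sum_range_le (c := (f x₀ - b) / (c * ε'))
      · intro n
        exact div_nonneg (by linarith [hfdec n]) (by positivity)
      · intro n
        rw [← Finset.sum_div]
        have htel : ∑ i ∈ Finset.range n, (f (seq i) - f (seq (i+1))) = f (seq 0) - f (seq n) :=
          Finset.sum_range_sub' (fun i => f (seq i)) n
        rw [htel, hseq0]
        gcongr
        linarith [hbound n]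
  -- limit
  obtain ⟨ω, hωlim⟩ := cauchySeq_tendsto_of_complete hcauchy
  have hωW : ω ∈ W := hW.mem_of_tendsto hωlim (Eventually.of_forall hseqW)
  have hωk : ∀ k, f ω + ε' * D ω (seq k) ≤ f (seq k) := by
    intro k
    have hev : ∀ᶠ j in atTop, f (seq j) + ε' * D (seq j) (seq k) ≤ f (seq k) :=
      eventually_atTop.mpr ⟨k, fun j hj => chain k j hj⟩
    have htend : Tendsto (fun j => f (seq j) + ε' * D (seq j) (seq k)) atTop
        (nhds (f ω + ε' * D ω (seq k))) := by
      exact ((hf.tendsto ω).comp hωlim).add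
        ((((hDcont (seq k)).tendsto ω).comp hωlim).const_mul ε')
    exact le_of_tendsto htend hev
  have hfω : f ω ≤ f x₀ := by
    have := hωk 0
    rw [hseq0] at this
    nlinarith [hDnn ω x₀, hε'.le]
  refine ⟨ω, hωW, hfω, ?_, ?_⟩
  · have h1 := hωk 0
    rw [hseq0] at h1
    have h2 := hmin ω hωW
    have := mul_le_mul_of_nonneg_left (le_refl (1:ℝ)) hε'.le
    nlinarith
  · intro u hu
    by_contra hcon
    push_neg at hcon
    have huk : ∀ k, f u + ε' * D u (seq k) ≤ f (seq k) := by
      intro k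
      have h1 := hDtri u ω (seq k)
      have h2 := hωk k
      nlinarith [hε'.le]
    have hrec : ∀ k, 2 * f (seq (k+1)) ≤ f (seq k) + f u := by
      intro k
      rw [hseqS]
      exact hnextM _ (hseqW k) u hu (huk k)
    have hfl : Tendsto (fun k => f (seq k)) atTop (nhds (f ω)) :=
      (hf.tendsto ω).comp hωlim
    have h2 : Tendsto (fun k => 2 * f (seq (k+1))) atTop (nhds (2 * f ω)) :=
      (hfl.comp (tendsto_add_atTop_nat 1)).const_mul 2
    have h3 : Tendsto (fun k => f (seq k) + f u) atTop (nhds (f ω + f u)) :=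
      hfl.add_const (f u)
    have hle : 2 * f ω ≤ f ω + f u := le_of_tendsto_of_tendsto' h2 h3 hrec
    nlinarith [hDnn u ω]

end Ekeland

section Clarke
variable {X : Type*} [NormedAddCommGroup X] [NormedSpace ℝ X] {Ω : Set X} {x : X}

theorem clarkeTangent_zero : (0 : X) ∈ clarkeTangent Ω x := by
  intro xs ts hxs _ _ _ _
  exact ⟨fun _ => 0, tendsto_const_nhds, fun k => by simpa using hxs k⟩

theorem clarkeTangent_add {z z' : X} (hz : z ∈ clarkeTangent Ω x)
    (hz' : z' ∈ clarkeTangent Ω x) : z + z' ∈ clarkeTangent Ω x := by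
  intro xs ts hxs hlim hpos hanti h0
  obtain ⟨zs, hzs, hmem⟩ := hz xs ts hxs hlim hpos hanti h0
  have hlim' : Tendsto (fun k => xs k + ts k • zs k) atTop (nhds x) := by
    have : Tendsto (fun k => ts k • zs k) atTop (nhds ((0:ℝ) • z)) := h0.smul hzs
    rw [zero_smul] at this
    simpa using hlim.add this
  obtain ⟨zs', hzs', hmem'⟩ := hz' _ ts hmem hlim' hpos hanti h0
  refine ⟨fun k => zs k + zs' k, hzs.add hzs', fun k => ?_⟩
  have := hmem' k
  have heq : xs k + ts k • (zs k + zs' k) = xs k + ts k • zs k + ts k • zs' k := by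
    rw [smul_add]; abel
  rwa [heq]

theorem clarkeTangent_smul {z : X} {r : ℝ} (hr : 0 < r) (hz : z ∈ clarkeTangent Ω x) :
    r • z ∈ clarkeTangent Ω x := by
  intro xs ts hxs hlim hpos hanti h0
  obtain ⟨zs, hzs, hmem⟩ := hz xs (fun k => ts k * r) hxs hlim
    (fun k => mul_pos (hpos k) hr)
    (fun i j hij => mul_le_mul_of_nonneg_right (hanti hij) hr.le)
    (by simpa using h0.mul_const r)
  refine ⟨fun k => r • zs k, hzs.const_smul r, fun k => ?_⟩
  have := hmem k
  have heq : xs k + ts k • r • zs k = xs k + (ts k * r) • zs k := by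
    rw [mul_smul, smul_comm]
  rwa [heq]

end Clarke

section Ndd
variable {X : Type*} [NormedAddCommGroup X] [NormedSpace ℝ X] {m : ℕ} [Nonempty (Fin m)]

noncomputable def nq (v w : Fin m → X) (t : ℝ) : ℝ := (nmax (v + t • w) - nmax v) / t

noncomputable def ndd (v w : Fin m → X) : ℝ := sInf (nq v w '' Set.Ioi 0)

theorem nq_ge (v w : Fin m → X) {t : ℝ} (ht : 0 < t) : -nmax w ≤ nq v w t := by
  have h1 : nmax v ≤ nmax (v + t • w) + t * nmax w := by
    have := nmax_add_le (v + t • w) (-(t • w))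
    simp only [add_neg_cancel_right] at this
    rwa [nmax_neg, nmax_smul ht.le] at this
  rw [nq, le_div_iff₀ ht]
  linarith

theorem nq_mono (v w : Fin m → X) {s t : ℝ} (hs : 0 < s) (hst : s ≤ t) :
    nq v w s ≤ nq v w t := by
  have ht : 0 < t := lt_of_lt_of_le hs hst
  have hkey : nmax (v + s • w) ≤ (1 - s/t) * nmax v + (s/t) * nmax (v + t • w) := by
    have heq : v + s • w = (1 - s/t) • v + (s/t) • (v + t • w) := by
      rw [smul_add, smul_smul, div_mul_cancel₀ _ ht.ne']
      rw [sub_smul, one_smul]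
      abel
    rw [heq]
    calc nmax ((1 - s/t) • v + (s/t) • (v + t • w))
        ≤ nmax ((1 - s/t) • v) + nmax ((s/t) • (v + t • w)) := nmax_add_le _ _
      _ = (1 - s/t) * nmax v + (s/t) * nmax (v + t • w) := by
          have hst1 : s/t ≤ 1 := (div_le_one ht).mpr hst
          rw [nmax_smul (by linarith : (0:ℝ) ≤ 1 - s/t), nmax_smul (by positivity : (0:ℝ) ≤ s/t)]
  rw [nq, nq, div_le_div_iff₀ hs ht]
  have h3 : ((1 - s/t) * nmax v + s/t * nmax (v + t • w)) * t
      = nmax v * t - s * nmax v + s * nmax (v + t • w) := by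
    field_simp
  have h4 := mul_le_mul_of_nonneg_right hkey ht.le
  rw [h3] at h4
  nlinarith

theorem ndd_bddBelow (v w : Fin m → X) : BddBelow (nq v w '' Set.Ioi 0) := by
  refine ⟨-nmax w, ?_⟩
  rintro q ⟨t, ht, rfl⟩
  exact nq_ge v w ht

theorem ndd_nonempty (v w : Fin m → X) : (nq v w '' Set.Ioi 0).Nonempty :=
  ⟨nq v w 1, 1, by norm_num, rfl⟩

theorem ndd_le_nq (v w : Fin m → X) {t : ℝ} (ht : 0 < t) : ndd v w ≤ nq v w t :=
  csInf_le (ndd_bddBelow v w) ⟨t, ht, rfl⟩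

theorem neg_nmax_le_ndd (v w : Fin m → X) : -nmax w ≤ ndd v w :=
  le_csInf (ndd_nonempty v w) (by rintro q ⟨t, ht, rfl⟩; exact nq_ge v w ht)

theorem ndd_tendsto (v w : Fin m → X) {ts : ℕ → ℝ} (hpos : ∀ k, 0 < ts k)
    (hanti : Antitone ts) (h0 : Tendsto ts atTop (nhds 0)) :
    Tendsto (fun k => nq v w (ts k)) atTop (nhds (ndd v w)) := by
  have hganti : Antitone fun k => nq v w (ts k) := fun i j hij =>
    nq_mono v w (hpos j) (hanti hij)
  have hgbdd : BddBelow (Set.range fun k => nq v w (ts k)) := by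
    refine ⟨-nmax w, ?_⟩
    rintro q ⟨k, rfl⟩
    exact nq_ge v w (hpos k)
  have htend := tendsto_atTop_ciInf hganti hgbdd
  have heq : ⨅ k, nq v w (ts k) = ndd v w := by
    apply le_antisymm
    · apply le_csInf (ndd_nonempty v w)
      rintro q ⟨t, ht, rfl⟩
      obtain ⟨k, hk⟩ := (h0.eventually (eventually_lt_nhds ht)).exists
      exact (ciInf_le hgbdd k).trans (nq_mono v w (hpos k) hk.le)
    · exact le_ciInf fun k => ndd_le_nq v w (hpos k)
  rwa [heq] at htend

theorem ndd_le_nmax (v w : Fin m → X) : ndd v w ≤ nmax w := by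
  refine (ndd_le_nq v w one_pos).trans ?_
  rw [nq, one_smul, div_one]
  have := nmax_add_le v w
  linarith

theorem ndd_zero (v : Fin m → X) : ndd v 0 = 0 := by
  have h1 : ndd v 0 ≤ 0 := by
    have := ndd_le_nq v 0 one_pos
    simpa [nq] using this
  have h2 := neg_nmax_le_ndd v 0
  rw [nmax_zero] at h2
  linarith

theorem ndd_neg_self (v : Fin m → X) : ndd v (-v) = -nmax v := by
  apply le_antisymm
  · have := ndd_le_nq v (-v) (by norm_num : (0:ℝ) < 1/2)
    have heq : nq v (-v) (1/2) = -nmax v := by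
      rw [nq]
      have hveq : v + (1/2 : ℝ) • (-v) = (1/2 : ℝ) • v := by module
      rw [hveq, nmax_smul (by norm_num)]
      ring
    rwa [heq] at this
  · have := neg_nmax_le_ndd v (-v)
    rwa [nmax_neg] at this

theorem ndd_add (v w w' : Fin m → X) : ndd v (w + w') ≤ ndd v w + ndd v w' := by
  set ts : ℕ → ℝ := fun k => 1 / (k + 1) with hts
  have hpos : ∀ k, 0 < ts k := fun k => by positivity
  have hanti : Antitone ts := by
    intro i j hij
    apply div_le_div_of_nonneg_left one_pos.le (by positivity)
    exact_mod_cast Nat.add_le_add_right hij 1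
  have h0 : Tendsto ts atTop (nhds 0) := tendsto_one_div_add_atTop_nhds_zero_nat
  have hpos2 : ∀ k, 0 < 2 * ts k := fun k => by positivity
  have hanti2 : Antitone fun k => 2 * ts k := fun i j hij => by
    have := hanti hij; dsimp only; linarith
  have h02 : Tendsto (fun k => 2 * ts k) atTop (nhds 0) := by
    have := h0.const_mul (2:ℝ); rwa [mul_zero] at this
  have hkey : ∀ k, nq v (w + w') (ts k) ≤ nq v w (2 * ts k) + nq v w' (2 * ts k) := by
    intro k
    set t := ts k
    have ht : 0 < t := hpos k
    have hconv : nmax (v + t • (w + w')) ≤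
        (nmax (v + (2*t) • w) + nmax (v + (2*t) • w')) / 2 := by
      have heq : v + t • (w + w') =
          (1/2 : ℝ) • (v + (2*t) • w) + (1/2 : ℝ) • (v + (2*t) • w') := by module
      rw [heq]
      have := nmax_add_le ((1/2 : ℝ) • (v + (2*t) • w)) ((1/2 : ℝ) • (v + (2*t) • w'))
      rw [nmax_smul (by norm_num), nmax_smul (by norm_num)] at this
      linarith
    rw [nq, nq, nq, ← add_div, div_le_div_iff₀ ht (by positivity)]
    nlinarith [hconv, ht]
  have hl : Tendsto (fun k => nq v (w + w') (ts k)) atTop (nhds (ndd v (w + w'))) :=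
    ndd_tendsto v (w + w') hpos hanti h0
  have hr : Tendsto (fun k => nq v w (2 * ts k) + nq v w' (2 * ts k)) atTop
      (nhds (ndd v w + ndd v w')) :=
    (ndd_tendsto v w hpos2 hanti2 h02).add (ndd_tendsto v w' hpos2 hanti2 h02)
  exact le_of_tendsto_of_tendsto' hl hr hkey

theorem ndd_smul (v w : Fin m → X) {r : ℝ} (hr : 0 < r) : ndd v (r • w) = r * ndd v w := by
  set ts : ℕ → ℝ := fun k => 1 / (k + 1) with hts
  have hpos : ∀ k, 0 < ts k := fun k => by positivity
  have hanti : Antitone ts := by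
    intro i j hij
    apply div_le_div_of_nonneg_left one_pos.le (by positivity)
    exact_mod_cast Nat.add_le_add_right hij 1
  have h0 : Tendsto ts atTop (nhds 0) := tendsto_one_div_add_atTop_nhds_zero_nat
  have hposr : ∀ k, 0 < ts k * r := fun k => mul_pos (hpos k) hr
  have hantir : Antitone fun k => ts k * r := fun i j hij =>
    mul_le_mul_of_nonneg_right (hanti hij) hr.le
  have h0r : Tendsto (fun k => ts k * r) atTop (nhds 0) := by
    have := h0.mul_const r; rwa [zero_mul] at this
  have hkey : ∀ k, nq v (r • w) (ts k) = r * nq v w (ts k * r) := by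
    intro k
    rw [nq, nq, smul_smul]
    have h1 : ts k ≠ 0 := (hpos k).ne'
    have h2 : ts k * r ≠ 0 := (hposr k).ne'
    field_simp
  have hl := ndd_tendsto v (r • w) hpos hanti h0
  have hr2 := (ndd_tendsto v w hposr hantir h0r).const_mul r
  exact tendsto_nhds_unique hl (hr2.congr fun k => (hkey k).symm)


end Ndd

/-- dual (generalized separation) necessary conditions, in terms of
Clarke normal cones, for the non-intersection property `⋂ᵢ(Ωᵢ−aᵢ) ∩ Ωₙ = ∅`,
with a nonlinear function `φ ∈ 𝒞¹` (given together with its derivative `φ'`). -/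
theorem stmt10 {X : Type*} [NormedAddCommGroup X] [NormedSpace ℝ X] [CompleteSpace X]
    {m : ℕ} (hm : 1 ≤ m) (Ω : Fin m → Set X) (Ωn : Set X)
    (hΩ : ∀ i, IsClosed (Ω i)) (hΩn : IsClosed Ωn)
    (xbar : X) (hxbar : ∀ i, xbar ∈ Ω i) (hxbarn : xbar ∈ Ωn)
    (a : Fin m → X) (ε : ℝ) (hε : 0 < ε)
    (φ φ' : ℝ → ℝ) (hφmono : StrictMonoOn φ (Set.Ici 0))
    (hφcont : ContinuousOn φ (Set.Ici 0)) (hφ0 : φ 0 = 0)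
    (hφtop : Tendsto φ atTop atTop)
    (hφderiv : ∀ t > (0 : ℝ), HasDerivAt φ (φ' t) t)
    (hφ'cont : ContinuousOn φ' (Set.Ioi 0)) (hφ'pos : ∀ t > (0 : ℝ), 0 < φ' t)
    (hne : (⋂ i, (fun z => z - a i) '' Ω i) ∩ Ωn = ∅)
    (hd : φ (⨆ i, ‖a i‖) <
      φ (nonintersectIndex (fun i => (fun z => z - a i) '' Ω i) Ωn) + ε) :
    ∀ lam > (0 : ℝ), ∀ eta > (0 : ℝ),
      ∃ (ω : Fin m → X) (ωn : X),
        (∀ i, ω i ∈ Ω i ∩ Metric.ball xbar lam) ∧ ωn ∈ Ωn ∩ Metric.ball xbar eta ∧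
        0 < (⨆ i, ‖ωn + a i - ω i‖) ∧ (⨆ i, ‖ωn + a i - ω i‖) ≤ (⨆ i, ‖a i‖) ∧
        ∃ (xs : Fin m → (X →L[ℝ] ℝ)) (xn : X →L[ℝ] ℝ),
          (∑ i, xs i) + xn = 0 ∧ (∑ i, ‖xs i‖) = 1 ∧
          (∑ i, xs i (ωn + a i - ω i)) = (⨆ i, ‖ωn + a i - ω i‖) ∧
          φ' (⨆ i, ‖ωn + a i - ω i‖) *
            (lam * (∑ i, Metric.infDist (xs i) (clarkeNormal (Ω i) (ω i))) +
              eta * Metric.infDist xn (clarkeNormal Ωn ωn)) < ε := by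
  intro lam hlam eta heta
  haveI : Nonempty (Fin m) := ⟨⟨0, hm⟩⟩
  classical
  -- basic setup
  set sx : (Fin m → X) × X → Fin m → X := fun z => fun i => z.2 + a i - z.1 i with hsx
  set f : (Fin m → X) × X → ℝ := fun z => φ (nmax (sx z)) with hf
  set W : Set ((Fin m → X) × X) := {z | (∀ i, z.1 i ∈ Ω i) ∧ z.2 ∈ Ωn} with hWdef
  have hWclosed : IsClosed W := by
    have h1 : W = (⋂ i, (fun z : (Fin m → X) × X => z.1 i) ⁻¹' Ω i) ∩
        ((fun z : (Fin m → X) × X => z.2) ⁻¹' Ωn) := by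
      ext z; simp [hWdef, Set.mem_iInter]
    rw [h1]
    exact (isClosed_iInter fun i =>
      (hΩ i).preimage ((continuous_apply i).comp continuous_fst)).inter
      (hΩn.preimage continuous_snd)
  have hsxcont : Continuous sx :=
    continuous_pi fun i => (continuous_snd.add continuous_const).sub
      ((continuous_apply i).comp continuous_fst)
  have hfcont : Continuous f :=
    hφcont.comp_continuous (nmax_continuous.comp hsxcont) fun z => nmax_nonneg _
  -- the nonintersect index
  set dd := nonintersectIndex (fun i => (fun z => z - a i) '' Ω i) Ωn with hdd
  have hSlb : ∀ r ∈ {r : ℝ | ∃ (u : Fin m → X) (un : X),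
      (∀ i, u i ∈ (fun i => (fun z => z - a i) '' Ω i) i) ∧ un ∈ Ωn ∧
        r = ⨆ i, ‖un - u i‖}, (0:ℝ) ≤ r := by
    rintro r ⟨u, un, _, _, rfl⟩
    exact Real.iSup_nonneg fun _ => norm_nonneg _
  have hdd0 : 0 ≤ dd := by
    apply le_csInf
    · exact ⟨⨆ i, ‖xbar - (xbar - a i)‖, fun i => xbar - a i, xbar, fun i => ⟨xbar, hxbar i, rfl⟩, hxbarn, rfl⟩
    · exact hSlb
  have hddle : ∀ z ∈ W, dd ≤ nmax (sx z) := by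
    intro z hz
    apply csInf_le ⟨0, hSlb⟩
    refine ⟨fun i => z.1 i - a i, z.2, fun i => ⟨z.1 i, hz.1 i, rfl⟩, hz.2, ?_⟩
    show nmax (sx z) = ⨆ i, ‖z.2 - (z.1 i - a i)‖
    unfold nmax
    congr 1
    funext i
    congr 1
    show z.2 + a i - z.1 i = z.2 - (z.1 i - a i)
    abel
  have hmono : MonotoneOn φ (Set.Ici 0) := hφmono.monotoneOn
  have hb : ∀ z ∈ W, φ dd ≤ f z := fun z hz =>
    hmono (Set.mem_Ici.mpr hdd0) (Set.mem_Ici.mpr (nmax_nonneg _)) (hddle z hz)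
  -- the base point
  set x₀ : (Fin m → X) × X := (fun _ => xbar, xbar) with hx₀def
  have hx₀W : x₀ ∈ W := ⟨fun i => hxbar i, hxbarn⟩
  set s₀ := nmax a with hs₀
  have hsx₀ : sx x₀ = a := by funext i; show xbar + a i - xbar = a i; abel
  have hfx₀ : f x₀ = φ s₀ := by rw [hf]; simp only [hsx₀, hs₀]
  have hd' : φ s₀ < φ dd + ε := hd
  -- choice of ε' and θ
  set ε' := max (φ s₀ - φ dd) (ε/2) with hε'def
  have hε'pos : 0 < ε' := lt_of_lt_of_le (by linarith) (le_max_right _ _)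
  have hε'lt : ε' < ε := max_lt (by linarith) (by linarith)
  have hmin : ∀ u ∈ W, f x₀ ≤ f u + ε' := by
    intro u hu
    have h1 := hb u hu
    have h2 : φ s₀ - φ dd ≤ ε' := le_max_left _ _
    rw [hfx₀]; linarith
  set θ := (ε'/ε + 1)/2 with hθdef
  have hθpos : 0 < θ := by
    have : 0 < ε'/ε := div_pos hε'pos hε
    rw [hθdef]; linarith
  have hθlt : θ < 1 := by
    have : ε'/ε < 1 := (div_lt_one hε).mpr hε'lt
    rw [hθdef]; linarith
  have hε'θ : ε' < θ * ε := by
    have hθε : θ * ε = (ε' + ε)/2 := by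
      rw [hθdef]; field_simp
    rw [hθε]; linarith
  -- the weighted metric
  set α := (θ * lam)⁻¹ with hα
  set β := (θ * eta)⁻¹ with hβ
  have hαpos : 0 < α := by rw [hα]; positivity
  have hβpos : 0 < β := by rw [hβ]; positivity
  set D : ((Fin m → X) × X) → ((Fin m → X) × X) → ℝ :=
    fun z w => max (α * nmax (z.1 - w.1)) (β * ‖z.2 - w.2‖) with hDdef
  have hD0 : ∀ z, D z z = 0 := by
    intro z; rw [hDdef]; simp [nmax_zero]
  have hDtri : ∀ x y z, D x z ≤ D x y + D y z := by
    intro x y z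
    rw [hDdef]
    apply max_le
    · have h1 : nmax (x.1 - z.1) ≤ nmax (x.1 - y.1) + nmax (y.1 - z.1) := by
        have := nmax_add_le (x.1 - y.1) (y.1 - z.1)
        rwa [sub_add_sub_cancel] at this
      calc α * nmax (x.1 - z.1) ≤ α * nmax (x.1 - y.1) + α * nmax (y.1 - z.1) := by
            rw [← mul_add]; exact mul_le_mul_of_nonneg_left h1 hαpos.le
        _ ≤ _ := add_le_add (le_max_left _ _) (le_max_left _ _)
    · have h1 : ‖x.2 - z.2‖ ≤ ‖x.2 - y.2‖ + ‖y.2 - z.2‖ := norm_sub_le_norm_sub_add_norm_sub _ _ _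
      calc β * ‖x.2 - z.2‖ ≤ β * ‖x.2 - y.2‖ + β * ‖y.2 - z.2‖ := by
            rw [← mul_add]; exact mul_le_mul_of_nonneg_left h1 hβpos.le
        _ ≤ _ := add_le_add (le_max_right _ _) (le_max_right _ _)
  set c₀ := min α β with hc₀
  have hc₀pos : 0 < c₀ := lt_min hαpos hβpos
  have hDnorm : ∀ x y, c₀ * ‖x - y‖ ≤ D x y := by
    intro x y
    rw [hDdef]
    have hxy : ‖x - y‖ = max ‖x.1 - y.1‖ ‖x.2 - y.2‖ := by
      rw [Prod.norm_def]; rfl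
    rw [hxy, mul_max_of_nonneg _ _ hc₀pos.le]
    apply max_le_max
    · rw [← nmax_eq_norm]
      exact mul_le_mul_of_nonneg_right (min_le_left _ _) (nmax_nonneg _)
    · exact mul_le_mul_of_nonneg_right (min_le_right _ _) (norm_nonneg _)
  have hDcont : ∀ x, Continuous fun u => D u x := by
    intro x
    rw [hDdef]
    apply Continuous.max
    · exact (continuous_const.mul (nmax_continuous.comp (continuous_fst.sub continuous_const)))
    · exact (continuous_const.mul ((continuous_snd.sub continuous_const).norm))
  -- apply Ekeland
  obtain ⟨ωz, hωW, hfω, hDω, hEk⟩ := ekeland_aux W hWclosed f hfcont D hD0 hDtri hc₀pos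
    hDnorm hDcont hb hx₀W hε'pos hmin
  set ω : Fin m → X := ωz.1 with hωdef
  set ωn : X := ωz.2 with hωndef
  set v : Fin m → X := fun i => ωn + a i - ω i with hvdef
  have hsxω : sx ωz = v := rfl
  set σ := nmax v with hσdef
  have hσ0 : 0 ≤ σ := nmax_nonneg v
  have hfωz : f ωz = φ σ := by
    show φ (nmax (sx ωz)) = φ σ
    rw [hsxω]
  -- σ ≤ s₀
  have hσs₀ : σ ≤ s₀ := by
    by_contra hcon
    push_neg at hcon
    have := hφmono (Set.mem_Ici.mpr (nmax_nonneg a)) (Set.mem_Ici.mpr hσ0) hcon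
    rw [hfωz, hfx₀] at hfω
    linarith
  -- σ > 0
  have hσpos : 0 < σ := by
    rcases eq_or_lt_of_le hσ0 with h | h
    · exfalso
      have hv0 : ∀ i, v i = 0 := by
        intro i
        have h1 := norm_le_nmax v i
        rw [← hσdef, ← h] at h1
        exact norm_eq_zero.mp (le_antisymm h1 (norm_nonneg _))
      have hmem : ωn ∈ (⋂ i, (fun z => z - a i) '' Ω i) ∩ Ωn := by
        refine ⟨Set.mem_iInter.mpr fun i => ⟨ω i, hωW.1 i, ?_⟩, hωW.2⟩
        have := hv0 i
        rw [hvdef] at this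
        simp only at this
        show ω i - a i = ωn
        have : ωn + a i - ω i = 0 := this
        abel_nf
        abel_nf at this
        linear_combination (norm := abel_nf) -this
      rw [hne] at hmem
      exact hmem
    · exact h
  -- ball memberships
  have hballω : ∀ i, ω i ∈ Ω i ∩ Metric.ball xbar lam := by
    intro i
    refine ⟨hωW.1 i, ?_⟩
    rw [Metric.mem_ball, dist_eq_norm]
    have h1 : α * nmax (ω - fun _ => xbar) ≤ 1 := le_trans (le_max_left _ _) hDω
    have h2 : nmax (ω - fun _ => xbar) ≤ θ * lam := by
      rw [hα] at h1
      rw [← inv_inv (θ * lam)]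
      rw [← one_div, le_div_iff₀ (by positivity)]
      linarith [mul_comm ((θ * lam)⁻¹) (nmax (ω - fun _ => xbar))]
    have h3 : ‖ω i - xbar‖ ≤ θ * lam := by
      have := norm_le_nmax (ω - fun _ => xbar) i
      simp only [Pi.sub_apply] at this
      linarith
    have : θ * lam < lam := by nlinarith
    linarith
  have hballωn : ωn ∈ Ωn ∩ Metric.ball xbar eta := by
    refine ⟨hωW.2, ?_⟩
    rw [Metric.mem_ball, dist_eq_norm]
    have h1 : β * ‖ωn - xbar‖ ≤ 1 := le_trans (le_max_right _ _) hDω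
    have h2 : ‖ωn - xbar‖ ≤ θ * eta := by
      rw [hβ] at h1
      rw [← inv_inv (θ * eta), ← one_div, le_div_iff₀ (by positivity)]
      linarith [mul_comm ((θ * eta)⁻¹) ‖ωn - xbar‖]
    have : θ * eta < eta := by nlinarith
    linarith
  -- the derivative coefficient
  set c := φ' σ with hcdef
  have hcpos : 0 < c := hφ'pos σ hσpos
  -- the product tangent cone and sublinear functions
  set A : ((Fin m → X) × X) → (Fin m → X) := fun z => fun i => z.2 - z.1 i with hAdef
  set K : Set ((Fin m → X) × X) :=
    {z | (∀ i, z.1 i ∈ clarkeTangent (Ω i) (ω i)) ∧ z.2 ∈ clarkeTangent Ωn ωn} with hKdef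
  set Dn : ((Fin m → X) × X) → ℝ := fun z => max (α * nmax z.1) (β * ‖z.2‖) with hDndef
  set q₁ : ((Fin m → X) × X) → ℝ := fun z => c * ndd v (A z) with hq₁def
  set q₂ : ((Fin m → X) × X) → ℝ := fun z => ε' * Dn z with hq₂def
  set p : ((Fin m → X) × X) → ℝ := fun z => q₁ z + q₂ z with hpdef
  -- the sequence of scales
  set ts : ℕ → ℝ := fun k => 1 / (k + 1) with hts
  have hpos : ∀ k, 0 < ts k := fun k => by rw [hts]; positivity
  have hanti : Antitone ts := by
    intro i j hij
    rw [hts]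
    apply div_le_div_of_nonneg_left one_pos.le (by positivity)
    exact_mod_cast Nat.add_le_add_right hij 1
  have h0 : Tendsto ts atTop (nhds 0) := by
    rw [hts]; exact tendsto_one_div_add_atTop_nhds_zero_nat
  -- the key variational inequality on the tangent cone
  have hpK : ∀ z ∈ K, 0 ≤ p z := by
    rintro z ⟨hz1, hz2⟩
    set w : Fin m → X := A z with hwdef
    have hch : ∀ i, ∃ zs : ℕ → X, Tendsto zs atTop (nhds (z.1 i)) ∧
        ∀ k, ω i + ts k • zs k ∈ Ω i :=
      fun i => hz1 i (fun _ => ω i) ts (fun _ => hωW.1 i) tendsto_const_nhds hpos hanti h0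
    choose zsF hzsF hzsFmem using hch
    obtain ⟨zsn, hzsn, hzsnmem⟩ :=
      hz2 (fun _ => ωn) ts (fun _ => hωW.2) tendsto_const_nhds hpos hanti h0
    set uk : ℕ → (Fin m → X) × X :=
      fun k => (fun i => ω i + ts k • zsF i k, ωn + ts k • zsn k) with hukdef
    have hukW : ∀ k, uk k ∈ W := fun k => ⟨fun i => hzsFmem i k, hzsnmem k⟩
    set wk : ℕ → Fin m → X := fun k => fun i => zsn k - zsF i k with hwkdef
    have hsxuk : ∀ k, sx (uk k) = v + ts k • wk k := by
      intro k
      funext i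
      show (ωn + ts k • zsn k) + a i - (ω i + ts k • zsF i k)
        = (ωn + a i - ω i) + ts k • (zsn k - zsF i k)
      rw [smul_sub]
      abel
    set qk : ℕ → ℝ := fun k => nq v (wk k) (ts k) with hqkdef
    set rk : ℕ → ℝ := fun k => nq v w (ts k) with hrkdef
    have hrk : Tendsto rk atTop (nhds (ndd v w)) := ndd_tendsto v w hpos hanti h0
    -- the difference of quotients tends to 0
    have hwk0 : Tendsto (fun k => nmax (wk k - w)) atTop (nhds 0) := by
      have hcomp : ∀ i, Tendsto (fun k => ‖(wk k - w) i‖) atTop (nhds 0) := by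
        intro i
        have h1 : Tendsto (fun k => zsn k - zsF i k) atTop (nhds (z.2 - z.1 i)) :=
          hzsn.sub (hzsF i)
        have h2 : Tendsto (fun k => (zsn k - zsF i k) - (z.2 - z.1 i)) atTop (nhds 0) := by
          have := h1.sub_const (z.2 - z.1 i)
          simpa using this
        have h3 := h2.norm
        rw [norm_zero] at h3
        have heq : (fun k => ‖(wk k - w) i‖)
            = fun k => ‖(zsn k - zsF i k) - (z.2 - z.1 i)‖ := rfl
        rw [heq]
        exact h3
      have hsum : Tendsto (fun k => ∑ i, ‖(wk k - w) i‖) atTop (nhds 0) := by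
        have := tendsto_finset_sum Finset.univ (fun i _ => hcomp i)
        simpa using this
      exact squeeze_zero (fun k => nmax_nonneg _) (fun k => nmax_le_sum _) hsum
    have hdiff : ∀ k, |qk k - rk k| ≤ nmax (wk k - w) := by
      intro k
      have h2 : (v + ts k • wk k) - (v + ts k • w) = ts k • (wk k - w) := by
        rw [smul_sub]; abel
      have h1 := abs_nmax_sub_nmax (v + ts k • wk k) (v + ts k • w)
      rw [h2, nmax_smul (hpos k).le] at h1
      have h3 : qk k - rk k
          = (nmax (v + ts k • wk k) - nmax (v + ts k • w)) / ts k := by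
        simp only [hqkdef, hrkdef, nq]
        ring
      rw [h3, abs_div, abs_of_pos (hpos k), div_le_iff₀ (hpos k)]
      linarith [h1]
    have hqk : Tendsto qk atTop (nhds (ndd v w)) := by
      have hz0 : Tendsto (fun k => qk k - rk k) atTop (nhds 0) :=
        squeeze_zero_norm hdiff hwk0
      have := hrk.add hz0
      rw [add_zero] at this
      exact this.congr fun k => by ring
    -- identify f (uk k)
    set yk : ℕ → ℝ := fun k => σ + ts k * qk k with hyk
    have hnmaxuk : ∀ k, nmax (sx (uk k)) = yk k := by
      intro k
      rw [hyk]
      show nmax (sx (uk k)) = σ + ts k * qk k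
      rw [hsxuk k]
      simp only [hqkdef, nq]
      rw [mul_div_assoc', mul_div_cancel_left₀ _ (hpos k).ne', hσdef]; ring
    have hfuk : ∀ k, f (uk k) = φ (yk k) := by
      intro k
      show φ (nmax (sx (uk k))) = φ (yk k)
      rw [hnmaxuk k]
    -- identify D (uk k) ωz
    set Dnk : ℕ → ℝ := fun k => max (α * nmax (fun i => zsF i k)) (β * ‖zsn k‖) with hDnkdef
    have hDuk : ∀ k, D (uk k) ωz = ts k * Dnk k := by
      intro k
      show max (α * nmax ((uk k).1 - ωz.1)) (β * ‖(uk k).2 - ωz.2‖) = ts k * Dnk k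
      have e1 : (uk k).1 - ωz.1 = ts k • fun i => zsF i k := by
        funext i
        show (ω i + ts k • zsF i k) - ω i = ts k • zsF i k
        abel
      have e2 : (uk k).2 - ωz.2 = ts k • zsn k := by
        show (ωn + ts k • zsn k) - ωn = ts k • zsn k
        abel
      rw [e1, e2, nmax_smul (hpos k).le, norm_smul, Real.norm_eq_abs, abs_of_pos (hpos k)]
      rw [hDnkdef, mul_max_of_nonneg _ _ (hpos k).le]
      congr 1 <;> ring
    -- limit of Dnk
    have hDnk_lim : Tendsto Dnk atTop (nhds (Dn z)) := by
      have hA1 : Tendsto (fun k => nmax (fun i => zsF i k)) atTop (nhds (nmax z.1)) := by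
        have hd0 : Tendsto (fun k => nmax ((fun i => zsF i k) - z.1)) atTop (nhds 0) := by
          have hcomp : ∀ i, Tendsto (fun k => ‖((fun i => zsF i k) - z.1) i‖) atTop (nhds 0) := by
            intro i
            have h2 := (hzsF i).sub_const (z.1 i)
            simp only [sub_self] at h2
            have h3 := h2.norm
            rw [norm_zero] at h3
            exact h3
          have hsum : Tendsto (fun k => ∑ i, ‖((fun i => zsF i k) - z.1) i‖) atTop (nhds 0) := by
            have := tendsto_finset_sum Finset.univ (fun i _ => hcomp i)
            simpa using this
          exact squeeze_zero (fun k => nmax_nonneg _) (fun k => nmax_le_sum _) hsum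
        have hd1 : Tendsto (fun k => nmax (fun i => zsF i k) - nmax z.1) atTop (nhds 0) :=
          squeeze_zero_norm (fun k => abs_nmax_sub_nmax _ _) hd0
        have := hd1.add_const (nmax z.1)
        simp only [sub_add_cancel, zero_add] at this
        exact this
      have hB1 : Tendsto (fun k => ‖zsn k‖) atTop (nhds ‖z.2‖) := hzsn.norm
      exact (hA1.const_mul α).max (hB1.const_mul β)
    -- derivative estimate
    have hyk_lim : Tendsto yk atTop (nhds σ) := by
      have h1 : Tendsto (fun k => ts k * qk k) atTop (nhds 0) := by
        have := h0.mul hqk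
        rwa [zero_mul] at this
      have := h1.const_add σ
      rwa [add_zero] at this
    have hder := hφderiv σ hσpos
    have hlittle := (hasDerivAt_iff_isLittleO.mp hder).comp_tendsto hyk_lim
    have hykσ : ∀ k, yk k - σ = ts k * qk k := fun k => by rw [hyk]; ring
    have hbigO : (fun k => yk k - σ) =O[atTop] ts := by
      have h1 : qk =O[atTop] (fun _ => (1:ℝ)) := hqk.isBigO_one ℝ
      have h2 := h1.mul (Asymptotics.isBigO_refl ts atTop)
      simp only [one_mul] at h2
      have heq : (fun k => yk k - σ) = fun k => qk k * ts k :=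
        funext fun k => by rw [hykσ k]; ring
      rw [heq]
      exact h2
    have hlittle2 : (fun k => φ (yk k) - φ σ - (yk k - σ) * c) =o[atTop] ts := by
      have := hlittle.trans_isBigO hbigO
      refine this.congr' (Eventually.of_forall fun k => ?_) (Eventually.of_forall fun k => rfl)
      show φ (yk k) - φ σ - (yk k - σ) • c = φ (yk k) - φ σ - (yk k - σ) * c
      rw [smul_eq_mul]
    have hdiv : Tendsto (fun k => (φ (yk k) - φ σ - (yk k - σ) * c) / ts k) atTop (nhds 0) :=
      hlittle2.tendsto_div_nhds_zero
    -- per-k inequality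
    have hineq : ∀ k, 0 ≤ c * qk k + (φ (yk k) - φ σ - (yk k - σ) * c) / ts k + ε' * Dnk k := by
      intro k
      have h1 := hEk (uk k) (hukW k)
      rw [hfωz, hfuk k, hDuk k] at h1
      have ht := hpos k
      have h2 : 0 ≤ (φ (yk k) - φ σ) + ε' * (ts k * Dnk k) := by linarith
      have h3 : c * qk k + (φ (yk k) - φ σ - (yk k - σ) * c) / ts k + ε' * Dnk k
          = ((φ (yk k) - φ σ) + ε' * (ts k * Dnk k)) / ts k := by
        rw [hykσ k]
        field_simp
        ring
      rw [h3]
      exact div_nonneg h2 ht.le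
    have hrhs : Tendsto (fun k => c * qk k + (φ (yk k) - φ σ - (yk k - σ) * c) / ts k
        + ε' * Dnk k) atTop (nhds (c * ndd v w + 0 + ε' * Dn z)) :=
      ((hqk.const_mul c).add hdiv).add (hDnk_lim.const_mul ε')
    have hfinal := le_of_tendsto_of_tendsto' tendsto_const_nhds hrhs hineq
    rw [hpdef]
    show 0 ≤ c * ndd v (A z) + ε' * Dn z
    rw [← hwdef]
    linarith [hfinal]
  -- linearity facts
  have hAadd : ∀ z z', A (z + z') = A z + A z' := by
    intro z z'; funext i
    show (z + z').2 - (z + z').1 i = (z.2 - z.1 i) + (z'.2 - z'.1 i)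
    simp only [Prod.snd_add, Prod.fst_add, Pi.add_apply]
    abel
  have hAsmul : ∀ (r : ℝ) z, A (r • z) = r • A z := by
    intro r z; funext i
    show (r • z).2 - (r • z).1 i = r • (z.2 - z.1 i)
    simp only [Prod.smul_snd, Prod.smul_fst, Pi.smul_apply, smul_sub]
  have hA0 : A 0 = 0 := by funext i; show (0:X) - 0 = 0; simp
  have hDn_nonneg : ∀ z, 0 ≤ Dn z := fun z =>
    le_trans (mul_nonneg hαpos.le (nmax_nonneg _)) (le_max_left _ _)
  have hDnadd : ∀ z z', Dn (z + z') ≤ Dn z + Dn z' := by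
    intro z z'
    rw [hDndef]
    apply max_le
    · have h1 : nmax ((z + z').1) ≤ nmax z.1 + nmax z'.1 := nmax_add_le z.1 z'.1
      calc α * nmax ((z+z').1) ≤ α * nmax z.1 + α * nmax z'.1 := by
            rw [← mul_add]; exact mul_le_mul_of_nonneg_left h1 hαpos.le
        _ ≤ _ := add_le_add (le_max_left _ _) (le_max_left _ _)
    · have h1 : ‖(z + z').2‖ ≤ ‖z.2‖ + ‖z'.2‖ := norm_add_le z.2 z'.2
      calc β * ‖(z+z').2‖ ≤ β * ‖z.2‖ + β * ‖z'.2‖ := by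
            rw [← mul_add]; exact mul_le_mul_of_nonneg_left h1 hβpos.le
        _ ≤ _ := add_le_add (le_max_right _ _) (le_max_right _ _)
  have hDnsmul : ∀ (r : ℝ), 0 ≤ r → ∀ z, Dn (r • z) = r * Dn z := by
    intro r hr z
    rw [hDndef]
    show max (α * nmax ((r • z).1)) (β * ‖(r • z).2‖) = r * max (α * nmax z.1) (β * ‖z.2‖)
    have e1 : (r • z).1 = r • z.1 := rfl
    have e2 : (r • z).2 = r • z.2 := rfl
    rw [e1, e2, nmax_smul hr, norm_smul, Real.norm_eq_abs, abs_of_nonneg hr,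
      mul_max_of_nonneg _ _ hr]
    congr 1 <;> ring
  have hDn0 : Dn 0 = 0 := by
    show max (α * nmax ((0 : (Fin m → X) × X).1)) (β * ‖(0 : (Fin m → X) × X).2‖) = 0
    have e1 : ((0 : (Fin m → X) × X)).1 = 0 := rfl
    rw [e1, nmax_zero]
    simp
  have hp_add : ∀ z z', p (z + z') ≤ p z + p z' := by
    intro z z'
    rw [hpdef]
    show q₁ (z + z') + q₂ (z + z') ≤ (q₁ z + q₂ z) + (q₁ z' + q₂ z')
    have h1 : q₁ (z + z') ≤ q₁ z + q₁ z' := by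
      show c * ndd v (A (z + z')) ≤ c * ndd v (A z) + c * ndd v (A z')
      rw [hAadd, ← mul_add]
      exact mul_le_mul_of_nonneg_left (ndd_add v (A z) (A z')) hcpos.le
    have h2 : q₂ (z + z') ≤ q₂ z + q₂ z' := by
      show ε' * Dn (z + z') ≤ ε' * Dn z + ε' * Dn z'
      rw [← mul_add]
      exact mul_le_mul_of_nonneg_left (hDnadd z z') hε'pos.le
    linarith
  have hp_smul : ∀ r : ℝ, 0 < r → ∀ z, p (r • z) = r * p z := by
    intro r hr z
    rw [hpdef]
    show q₁ (r • z) + q₂ (r • z) = r * (q₁ z + q₂ z)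
    have h1 : q₁ (r • z) = r * q₁ z := by
      show c * ndd v (A (r • z)) = r * (c * ndd v (A z))
      rw [hAsmul, ndd_smul v (A z) hr]; ring
    have h2 : q₂ (r • z) = r * q₂ z := by
      show ε' * Dn (r • z) = r * (ε' * Dn z)
      rw [hDnsmul r hr.le]; ring
    rw [h1, h2]; ring
  have hp_zero : p 0 = 0 := by
    rw [hpdef]
    show c * ndd v (A 0) + ε' * Dn 0 = 0
    rw [hA0, ndd_zero, hDn0]; ring
  -- cone properties of K
  have hK0 : (0 : (Fin m → X) × X) ∈ K := by
    refine ⟨fun i => ?_, ?_⟩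
    · show (0:X) ∈ clarkeTangent (Ω i) (ω i); exact clarkeTangent_zero
    · show (0:X) ∈ clarkeTangent Ωn ωn; exact clarkeTangent_zero
  have hKadd : ∀ {z z'}, z ∈ K → z' ∈ K → z + z' ∈ K := by
    rintro z z' ⟨h1, h2⟩ ⟨h1', h2'⟩
    exact ⟨fun i => clarkeTangent_add (h1 i) (h1' i), clarkeTangent_add h2 h2'⟩
  have hKsmul : ∀ {r : ℝ}, 0 < r → ∀ {z}, z ∈ K → r • z ∈ K := by
    rintro r hr z ⟨h1, h2⟩
    exact ⟨fun i => clarkeTangent_smul hr (h1 i), clarkeTangent_smul hr h2⟩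
  -- the inf-convolution
  set SP : ((Fin m → X) × X) → Set ℝ := fun z => (fun k => p (z + k)) '' K with hSP
  have hSPne : ∀ z, (SP z).Nonempty := fun z => ⟨p (z + 0), 0, hK0, rfl⟩
  have hSPbdd : ∀ z, BddBelow (SP z) := by
    intro z
    refine ⟨-p (-z), ?_⟩
    rintro q ⟨k, hk, rfl⟩
    have h1 : p k ≤ p (z + k) + p (-z) := by
      have := hp_add (z + k) (-z)
      have heq : (z + k) + -z = k := by abel
      rwa [heq] at this
    have h2 : 0 ≤ p k := hpK k hk
    linarith
  set pt : ((Fin m → X) × X) → ℝ := fun z => sInf (SP z) with hptdef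
  have hpt_le : ∀ z, ∀ k ∈ K, pt z ≤ p (z + k) := fun z k hk =>
    csInf_le (hSPbdd z) ⟨k, hk, rfl⟩
  have hpt_le_p : ∀ z, pt z ≤ p z := fun z => by
    have := hpt_le z 0 hK0; simpa using this
  have hpt_ge : ∀ z q, (∀ k ∈ K, q ≤ p (z + k)) → q ≤ pt z := fun z q h =>
    le_csInf (hSPne z) (by rintro r ⟨k, hk, rfl⟩; exact h k hk)
  have hpt0 : 0 ≤ pt 0 := hpt_ge 0 0 fun k hk => by
    rw [zero_add]; exact hpK k hk
  have hptadd : ∀ z z', pt (z + z') ≤ pt z + pt z' := by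
    intro z z'
    have key : ∀ k ∈ K, ∀ k' ∈ K, pt (z + z') ≤ p (z + k) + p (z' + k') := by
      intro k hk k' hk'
      have h1 : pt (z + z') ≤ p ((z + z') + (k + k')) := hpt_le _ _ (hKadd hk hk')
      have h2 : p ((z + z') + (k + k')) ≤ p (z + k) + p (z' + k') := by
        have := hp_add (z + k) (z' + k')
        have heq : (z + k) + (z' + k') = (z + z') + (k + k') := by abel
        rwa [heq] at this
      linarith
    have st1 : ∀ k ∈ K, pt (z + z') - p (z + k) ≤ pt z' := by
      intro k hk
      apply hpt_ge
      intro k' hk'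
      linarith [key k hk k' hk']
    have st2 : pt (z + z') - pt z' ≤ pt z := by
      apply hpt_ge
      intro k hk
      linarith [st1 k hk]
    linarith
  have hptsmul : ∀ r : ℝ, 0 < r → ∀ z, pt (r • z) = r * pt z := by
    intro r hr z
    apply le_antisymm
    · have h1 : ∀ k ∈ K, pt (r • z) ≤ r * p (z + k) := by
        intro k hk
        have := hpt_le (r • z) (r • k) (hKsmul hr hk)
        rwa [← smul_add, hp_smul r hr] at this
      have h2 : pt (r • z) / r ≤ pt z := by
        apply hpt_ge
        intro k hk
        rw [div_le_iff₀ hr]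
        linarith [h1 k hk, mul_comm (p (z + k)) r]
      calc pt (r • z) = (pt (r • z) / r) * r := by field_simp
        _ ≤ pt z * r := mul_le_mul_of_nonneg_right h2 hr.le
        _ = r * pt z := by ring
    · apply hpt_ge
      intro k hk
      have hk' : r⁻¹ • k ∈ K := hKsmul (by positivity) hk
      have h1 : pt z ≤ p (z + r⁻¹ • k) := hpt_le z _ hk'
      have h2 : p (r • z + k) = r * p (z + r⁻¹ • k) := by
        rw [← hp_smul r hr]
        congr 1
        rw [smul_add, smul_inv_smul₀ hr.ne']
      rw [h2]
      exact mul_le_mul_of_nonneg_left h1 hr.le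
  have hptK : ∀ k ∈ K, pt (-k) ≤ 0 := by
    intro k hk
    have := hpt_le (-k) k hk
    rw [neg_add_cancel, hp_zero] at this
    exact this
  -- Hahn-Banach: a linear functional below pt
  obtain ⟨g, -, hgle⟩ := exists_extension_of_le_sublinear
    (⊥ : ((Fin m → X) × X) →ₗ.[ℝ] ℝ) pt (fun r hr z => hptsmul r hr z) hptadd
    (by
      intro x
      have hx0 : (x : (Fin m → X) × X) = 0 := (Submodule.mem_bot ℝ).mp x.2
      rw [hx0]
      have hv0 : (⊥ : ((Fin m → X) × X) →ₗ.[ℝ] ℝ) x = 0 := rfl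
      rw [hv0]
      exact hpt0)
  have hgp : ∀ z, g z ≤ p z := fun z => (hgle z).trans (hpt_le_p z)
  have hgK : ∀ k ∈ K, 0 ≤ g k := by
    intro k hk
    have h1 : g (-k) ≤ pt (-k) := hgle (-k)
    have h2 := hptK k hk
    rw [map_neg] at h1
    linarith
  -- separate homogeneity/subadditivity of q₁, q₂
  have hq₁smul : ∀ r : ℝ, 0 < r → ∀ z, q₁ (r • z) = r * q₁ z := by
    intro r hr z
    show c * ndd v (A (r • z)) = r * (c * ndd v (A z))
    rw [hAsmul, ndd_smul v (A z) hr]; ring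
  have hq₂smul : ∀ r : ℝ, 0 < r → ∀ z, q₂ (r • z) = r * q₂ z := by
    intro r hr z
    show ε' * Dn (r • z) = r * (ε' * Dn z)
    rw [hDnsmul r hr.le]; ring
  have hq₁add : ∀ z z', q₁ (z + z') ≤ q₁ z + q₁ z' := by
    intro z z'
    show c * ndd v (A (z + z')) ≤ c * ndd v (A z) + c * ndd v (A z')
    rw [hAadd, ← mul_add]
    exact mul_le_mul_of_nonneg_left (ndd_add v (A z) (A z')) hcpos.le
  have hq₂add : ∀ z z', q₂ (z + z') ≤ q₂ z + q₂ z' := by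
    intro z z'
    show ε' * Dn (z + z') ≤ ε' * Dn z + ε' * Dn z'
    rw [← mul_add]
    exact mul_le_mul_of_nonneg_left (hDnadd z z') hε'pos.le
  -- HB2 : split g below q₁ + q₂ via the diagonal
  set dMap : ((Fin m → X) × X) →ₗ[ℝ] ((Fin m → X) × X) × ((Fin m → X) × X) :=
    LinearMap.prod LinearMap.id LinearMap.id with hdMap
  set Δ := LinearMap.range dMap with hΔ
  set f2 : (((Fin m → X) × X) × ((Fin m → X) × X)) →ₗ.[ℝ] ℝ :=
    ⟨Δ, g ∘ₗ ((LinearMap.fst ℝ _ _) ∘ₗ Δ.subtype)⟩ with hf2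
  set Q : (((Fin m → X) × X) × ((Fin m → X) × X)) → ℝ := fun y => q₁ y.1 + q₂ y.2 with hQ
  have hQhom : ∀ r : ℝ, 0 < r → ∀ y, Q (r • y) = r * Q y := by
    intro r hr y
    show q₁ ((r • y).1) + q₂ ((r • y).2) = r * (q₁ y.1 + q₂ y.2)
    have e1 : (r • y).1 = r • y.1 := rfl
    have e2 : (r • y).2 = r • y.2 := rfl
    rw [e1, e2, hq₁smul r hr, hq₂smul r hr]; ring
  have hQadd : ∀ y y', Q (y + y') ≤ Q y + Q y' := by
    intro y y'
    show q₁ ((y + y').1) + q₂ ((y + y').2) ≤ (q₁ y.1 + q₂ y.2) + (q₁ y'.1 + q₂ y'.2)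
    have e1 : (y + y').1 = y.1 + y'.1 := rfl
    have e2 : (y + y').2 = y.2 + y'.2 := rfl
    rw [e1, e2]
    linarith [hq₁add y.1 y'.1, hq₂add y.2 y'.2]
  have hf2le : ∀ x : f2.domain, f2 x ≤ Q x := by
    intro x
    obtain ⟨y, hy⟩ := x.2
    have hval : f2 x = g (x : (((Fin m → X) × X) × ((Fin m → X) × X))).1 := rfl
    have h1 : ((x : (((Fin m → X) × X) × ((Fin m → X) × X)))).1 = y := by rw [← hy]; rfl
    have h2 : ((x : (((Fin m → X) × X) × ((Fin m → X) × X)))).2 = y := by rw [← hy]; rfl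
    rw [hval, h1]
    show g y ≤ q₁ _ + q₂ _
    rw [h1, h2]
    exact hgp y
  obtain ⟨G, hGext, hGle⟩ := exists_extension_of_le_sublinear f2 Q hQhom hQadd hf2le
  have hGdiag : ∀ z, G (z, z) = g z := by
    intro z
    have hmem : ((z, z) : (((Fin m → X) × X) × ((Fin m → X) × X))) ∈ Δ := ⟨z, rfl⟩
    have := hGext ⟨(z, z), hmem⟩
    exact this
  set ℓ₁ : ((Fin m → X) × X) →ₗ[ℝ] ℝ := G ∘ₗ (LinearMap.inl ℝ _ _) with hℓ₁
  set ℓ₂ : ((Fin m → X) × X) →ₗ[ℝ] ℝ := G ∘ₗ (LinearMap.inr ℝ _ _) with hℓ₂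
  have hℓ₁app : ∀ z, ℓ₁ z = G (z, 0) := fun z => rfl
  have hℓ₂app : ∀ z, ℓ₂ z = G (0, z) := fun z => rfl
  have hq₂0 : q₂ 0 = 0 := by show ε' * Dn 0 = 0; rw [hDn0]; ring
  have hq₁0 : q₁ 0 = 0 := by show c * ndd v (A 0) = 0; rw [hA0, ndd_zero]; ring
  have hℓ₁le : ∀ z, ℓ₁ z ≤ q₁ z := by
    intro z
    calc ℓ₁ z = G (z, 0) := rfl
      _ ≤ Q (z, 0) := hGle _
      _ = q₁ z + q₂ 0 := rfl
      _ = q₁ z := by rw [hq₂0, add_zero]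
  have hℓ₂le : ∀ z, ℓ₂ z ≤ q₂ z := by
    intro z
    calc ℓ₂ z = G (0, z) := rfl
      _ ≤ Q (0, z) := hGle _
      _ = q₁ 0 + q₂ z := rfl
      _ = q₂ z := by rw [hq₁0, zero_add]
  have hsplit : ∀ z, ℓ₁ z + ℓ₂ z = g z := by
    intro z
    calc ℓ₁ z + ℓ₂ z = G ((z, 0) + (0, z)) := (map_add G _ _).symm
      _ = G (z, z) := by rw [Prod.mk_add_mk, add_zero, zero_add]
      _ = g z := hGdiag z
  -- the functional ξ
  set ξ : (Fin m → X) →ₗ[ℝ] ℝ :=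
    (c⁻¹) • (ℓ₁ ∘ₗ (LinearMap.prod (-LinearMap.id) 0)) with hξdef
  have hξapp : ∀ y, ξ y = c⁻¹ * ℓ₁ (-y, 0) := fun y => rfl
  have hξle : ∀ y, ξ y ≤ ndd v y := by
    intro y
    have h1 : ℓ₁ (-y, 0) ≤ q₁ (-y, 0) := hℓ₁le _
    have h2 : A ((-y, 0) : (Fin m → X) × X) = y := by
      funext i
      show (0 : X) - (-y) i = y i
      simp
    have h3 : q₁ ((-y, 0) : (Fin m → X) × X) = c * ndd v y := by
      show c * ndd v (A ((-y, 0) : (Fin m → X) × X)) = _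
      rw [h2]
    rw [h3] at h1
    rw [hξapp]
    calc c⁻¹ * ℓ₁ (-y, 0) ≤ c⁻¹ * (c * ndd v y) :=
        mul_le_mul_of_nonneg_left h1 (inv_nonneg.mpr hcpos.le)
      _ = ndd v y := by field_simp
  have hker : ∀ z, A z = 0 → ℓ₁ z = 0 := by
    intro z hz
    have h1 : ℓ₁ z ≤ q₁ z := hℓ₁le z
    have h2 : ℓ₁ (-z) ≤ q₁ (-z) := hℓ₁le (-z)
    have hq : q₁ z = 0 := by show c * ndd v (A z) = 0; rw [hz, ndd_zero]; ring
    have hAneg : A (-z) = 0 := by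
      funext i
      show (-z).2 - (-z).1 i = 0
      have h3 : (-z).2 = -z.2 := rfl
      have h4 : (-z).1 i = -(z.1 i) := rfl
      have h5 : z.2 - z.1 i = 0 := congrFun hz i
      rw [h3, h4]
      have : -z.2 - -z.1 i = -(z.2 - z.1 i) := by abel
      rw [this, h5, neg_zero]
    have hq' : q₁ (-z) = 0 := by show c * ndd v (A (-z)) = 0; rw [hAneg, ndd_zero]; ring
    have h6 : ℓ₁ (-z) = -ℓ₁ z := map_neg ℓ₁ z
    rw [hq] at h1
    rw [hq', h6] at h2
    linarith
  have hfact : ∀ z, ℓ₁ z = c * ξ (A z) := by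
    intro z
    have hkerz : A (z - ((-(A z), 0) : (Fin m → X) × X)) = 0 := by
      funext i
      show (z - ((-(A z), 0) : (Fin m → X) × X)).2
        - (z - ((-(A z), 0) : (Fin m → X) × X)).1 i = 0
      have e1 : (z - ((-(A z), 0) : (Fin m → X) × X)).2 = z.2 - 0 := rfl
      have e2 : (z - ((-(A z), 0) : (Fin m → X) × X)).1 i = z.1 i - (-(A z) i) := rfl
      rw [e1, e2]
      have e3 : A z i = z.2 - z.1 i := rfl
      rw [e3]
      abel
    have h0 := hker _ hkerz
    have h1 : ℓ₁ z = ℓ₁ ((-(A z), 0) : (Fin m → X) × X)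
        + ℓ₁ (z - ((-(A z), 0) : (Fin m → X) × X)) := by
      rw [← map_add]
      congr 1
      abel
    rw [h0, add_zero] at h1
    rw [h1, hξapp]
    field_simp
  -- continuous components of ξ
  have hξbound : ∀ (i : Fin m) (x : X), ‖ξ (Pi.single i x)‖ ≤ 1 * ‖x‖ := by
    intro i x
    have h1 : ξ (Pi.single i x) ≤ ‖x‖ :=
      (hξle _).trans ((ndd_le_nmax v _).trans_eq (nmax_single i x))
    have h1' : ξ (Pi.single i (-x)) ≤ ‖x‖ := by
      have := (hξle (Pi.single i (-x))).trans ((ndd_le_nmax v _).trans_eq (nmax_single i (-x)))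
      rwa [norm_neg] at this
    have h3 : ξ (Pi.single i (-x)) = -ξ (Pi.single i x) := by
      rw [← map_neg]
      congr 1
      funext j
      rcases eq_or_ne j i with rfl | hji
      · simp
      · simp [Pi.single_eq_of_ne hji]
    rw [h3] at h1'
    rw [one_mul, Real.norm_eq_abs, abs_le]
    constructor <;> linarith
  set ξc : Fin m → (X →L[ℝ] ℝ) := fun i =>
    LinearMap.mkContinuous (ξ ∘ₗ LinearMap.single ℝ (fun _ => X) i) 1 (hξbound i) with hξcdef
  have hξcapp : ∀ i x, ξc i x = ξ (Pi.single i x) := fun i x => rfl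
  have hξsum : ∀ y : Fin m → X, ξ y = ∑ i, ξc i (y i) := by
    intro y
    conv_lhs => rw [← Finset.univ_sum_single y]
    rw [map_sum]
    rfl
  -- approximation of operator norms
  have happrox : ∀ (T : X →L[ℝ] ℝ) (δ : ℝ), 0 < δ → ∃ x : X, ‖x‖ ≤ 1 ∧ ‖T‖ - δ < T x := by
    intro T δ hδ
    rcases lt_or_ge (‖T‖ - δ) 0 with h | h
    · exact ⟨0, by simp, by simpa using h⟩
    · obtain ⟨x, hx1, hx2⟩ := T.exists_lt_apply_of_lt_opNorm (show ‖T‖ - δ < ‖T‖ by linarith)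
      rcases le_or_gt 0 (T x) with hp | hn
      · exact ⟨x, hx1.le, by rwa [Real.norm_eq_abs, abs_of_nonneg hp] at hx2⟩
      · refine ⟨-x, by simpa using hx1.le, ?_⟩
        rw [map_neg]
        rw [Real.norm_eq_abs, abs_of_neg hn] at hx2
        linarith
  -- normalization
  have hξv_ge : σ ≤ ξ v := by
    have h1 : ξ (-v) ≤ ndd v (-v) := hξle _
    rw [ndd_neg_self, map_neg] at h1
    rw [hσdef]
    linarith
  have hm0 : (1:ℝ) ≤ (m:ℝ) := by exact_mod_cast hm
  have hnorm_le1 : ∑ i, ‖ξc i‖ ≤ 1 := by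
    by_contra hcon
    push_neg at hcon
    set δ := (∑ i, ‖ξc i‖ - 1) / (2 * m) with hδdef
    have hδpos : 0 < δ := by
      rw [hδdef]
      apply div_pos (by linarith) (by positivity)
    have hch : ∀ i, ∃ x : X, ‖x‖ ≤ 1 ∧ ‖ξc i‖ - δ < ξc i x := fun i => happrox (ξc i) δ hδpos
    choose xx hxx1 hxx2 using hch
    have h1 : ξ (fun i => xx i) ≤ 1 :=
      (hξle _).trans ((ndd_le_nmax v _).trans (nmax_le fun i => hxx1 i))
    have h2 : ∑ i, (‖ξc i‖ - δ) ≤ ξ (fun i => xx i) := by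
      rw [hξsum]
      exact Finset.sum_le_sum fun i _ => (hxx2 i).le
    rw [Finset.sum_sub_distrib, Finset.sum_const, Finset.card_univ, Fintype.card_fin,
      nsmul_eq_mul] at h2
    have hmne : (m:ℝ) ≠ 0 := by linarith
    have h4 : (m:ℝ) * δ = (∑ i, ‖ξc i‖ - 1) / 2 := by
      rw [hδdef]
      field_simp
    linarith
  have hξv_le : ξ v ≤ (∑ i, ‖ξc i‖) * σ := by
    rw [hξsum]
    have hterm : ∀ i, ξc i (v i) ≤ ‖ξc i‖ * σ := by
      intro i
      have h1 : ξc i (v i) ≤ ‖ξc i (v i)‖ := le_abs_self _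
      have h2 : ‖ξc i (v i)‖ ≤ ‖ξc i‖ * ‖v i‖ := (ξc i).le_opNorm _
      have h3 : ‖ξc i‖ * ‖v i‖ ≤ ‖ξc i‖ * σ :=
        mul_le_mul_of_nonneg_left (by rw [hσdef]; exact norm_le_nmax v i) (norm_nonneg _)
      linarith
    calc ∑ i, ξc i (v i) ≤ ∑ i, ‖ξc i‖ * σ := Finset.sum_le_sum fun i _ => hterm i
      _ = (∑ i, ‖ξc i‖) * σ := by rw [Finset.sum_mul]
  have hsum1 : ∑ i, ‖ξc i‖ = 1 := by
    apply le_antisymm hnorm_le1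
    by_contra hcon
    push_neg at hcon
    have h1 : (∑ i, ‖ξc i‖) * σ < σ := by nlinarith
    linarith [hξv_ge, hξv_le]
  have hξveq : ξ v = σ := by
    apply le_antisymm _ hξv_ge
    calc ξ v ≤ (∑ i, ‖ξc i‖) * σ := hξv_le
      _ = σ := by rw [hsum1, one_mul]
  -- continuous components of ℓ₂
  have hDnsingle : ∀ (i : Fin m) (x : X),
      Dn ((Pi.single i x, 0) : (Fin m → X) × X) = α * ‖x‖ := by
    intro i x
    show max (α * nmax (Pi.single i x)) (β * ‖(0:X)‖) = α * ‖x‖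
    rw [nmax_single, norm_zero, mul_zero]
    exact max_eq_left (by positivity)
  have hℓ₂sb : ∀ (i : Fin m) (x : X),
      ‖ℓ₂ ((Pi.single i x, 0) : (Fin m → X) × X)‖ ≤ (ε' * α) * ‖x‖ := by
    intro i x
    have h1 : ℓ₂ ((Pi.single i x, 0) : (Fin m → X) × X) ≤ ε' * α * ‖x‖ := by
      have := hℓ₂le ((Pi.single i x, 0))
      have h2 : q₂ ((Pi.single i x, 0) : (Fin m → X) × X) = ε' * (α * ‖x‖) := by
        show ε' * Dn _ = _
        rw [hDnsingle]
      rw [h2] at this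
      linarith [this]
    have h1' : ℓ₂ ((Pi.single i (-x), 0) : (Fin m → X) × X) ≤ ε' * α * ‖x‖ := by
      have := hℓ₂le ((Pi.single i (-x), 0))
      have h2 : q₂ ((Pi.single i (-x), 0) : (Fin m → X) × X) = ε' * (α * ‖x‖) := by
        show ε' * Dn _ = _
        rw [hDnsingle, norm_neg]
      rw [h2] at this
      linarith [this]
    have h3 : ℓ₂ ((Pi.single i (-x), 0) : (Fin m → X) × X)
        = -ℓ₂ ((Pi.single i x, 0) : (Fin m → X) × X) := by
      rw [← map_neg]
      congr 1
      rw [Prod.neg_mk, neg_zero]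
      congr 1
      funext j
      rcases eq_or_ne j i with rfl | hji
      · simp
      · simp [Pi.single_eq_of_ne hji]
    rw [h3] at h1'
    rw [Real.norm_eq_abs, abs_le]
    constructor <;> linarith
  set ℓ₂c : Fin m → (X →L[ℝ] ℝ) := fun i =>
    LinearMap.mkContinuous
      (ℓ₂ ∘ₗ ((LinearMap.single ℝ (fun _ => X) i).prod 0)) (ε' * α) (hℓ₂sb i) with hℓ₂cdef
  have hℓ₂capp : ∀ i x, ℓ₂c i x = ℓ₂ ((Pi.single i x, 0) : (Fin m → X) × X) := fun i x => rfl
  have hℓ₂nb : ∀ x : X, ‖ℓ₂ ((0, x) : (Fin m → X) × X)‖ ≤ (ε' * β) * ‖x‖ := by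
    intro x
    have hDn0x : ∀ y : X, Dn ((0, y) : (Fin m → X) × X) = β * ‖y‖ := by
      intro y
      show max (α * nmax (0 : Fin m → X)) (β * ‖y‖) = β * ‖y‖
      rw [nmax_zero, mul_zero]
      exact max_eq_right (by positivity)
    have h1 : ℓ₂ ((0, x) : (Fin m → X) × X) ≤ ε' * β * ‖x‖ := by
      have := hℓ₂le ((0, x))
      have h2 : q₂ ((0, x) : (Fin m → X) × X) = ε' * (β * ‖x‖) := by
        show ε' * Dn _ = _
        rw [hDn0x]
      rw [h2] at this
      linarith [this]
    have h1' : ℓ₂ ((0, -x) : (Fin m → X) × X) ≤ ε' * β * ‖x‖ := by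
      have := hℓ₂le ((0, -x))
      have h2 : q₂ ((0, -x) : (Fin m → X) × X) = ε' * (β * ‖x‖) := by
        show ε' * Dn _ = _
        rw [hDn0x, norm_neg]
      rw [h2] at this
      linarith [this]
    have h3 : ℓ₂ ((0, -x) : (Fin m → X) × X) = -ℓ₂ ((0, x) : (Fin m → X) × X) := by
      rw [← map_neg]
      congr 1
      rw [Prod.neg_mk, neg_zero]
    rw [h3] at h1'
    rw [Real.norm_eq_abs, abs_le]
    constructor <;> linarith
  set ℓ₂n : X →L[ℝ] ℝ :=
    LinearMap.mkContinuous
      (ℓ₂ ∘ₗ ((0 : X →ₗ[ℝ] (Fin m → X)).prod LinearMap.id)) (ε' * β) hℓ₂nb with hℓ₂ndef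
  have hℓ₂napp : ∀ x, ℓ₂n x = ℓ₂ ((0, x) : (Fin m → X) × X) := fun x => rfl
  -- values of ℓ₁ on coordinate blocks
  have hℓ₁single : ∀ (i : Fin m) (x : X),
      ℓ₁ ((Pi.single i x, 0) : (Fin m → X) × X) = -(c * ξc i x) := by
    intro i x
    have h1 : ℓ₁ ((Pi.single i x, 0) : (Fin m → X) × X)
        = -ℓ₁ ((-(Pi.single i x), 0) : (Fin m → X) × X) := by
      rw [← map_neg]
      congr 1
      rw [Prod.neg_mk, neg_neg, neg_zero]
    rw [h1]
    have h2 : ℓ₁ ((-(Pi.single i x), 0) : (Fin m → X) × X) = c * ξ (Pi.single i x) := by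
      rw [hξapp]
      field_simp
    rw [h2, hξcapp]
  have hℓ₁n : ∀ x : X, ℓ₁ ((0, x) : (Fin m → X) × X) = c * ∑ i, ξc i x := by
    intro x
    rw [hfact ((0, x))]
    have hh : A ((0, x) : (Fin m → X) × X) = fun _ => x := by
      funext i
      show x - 0 = x
      simp
    rw [hh]
    have := hξsum (fun _ => x)
    rw [this]
  -- normal cone memberships
  set xn : X →L[ℝ] ℝ := -∑ i, ξc i with hxndef
  have hmemI : ∀ i, (ξc i - c⁻¹ • ℓ₂c i) ∈ clarkeNormal (Ω i) (ω i) := by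
    intro i t ht
    have hKmem : ((Pi.single i t, 0) : (Fin m → X) × X) ∈ K := by
      refine ⟨fun j => ?_, clarkeTangent_zero⟩
      rcases eq_or_ne j i with rfl | hji
      · show (Pi.single j t : Fin m → X) j ∈ clarkeTangent (Ω j) (ω j)
        rw [Pi.single_eq_same]
        exact ht
      · show (Pi.single i t : Fin m → X) j ∈ clarkeTangent (Ω j) (ω j)
        rw [Pi.single_eq_of_ne hji]
        exact clarkeTangent_zero
    have hg0 := hgK _ hKmem
    have hsp := hsplit ((Pi.single i t, 0))
    rw [hℓ₁single i t] at hsp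
    have hval : (ξc i - c⁻¹ • ℓ₂c i) t
        = -(c⁻¹ * g ((Pi.single i t, 0) : (Fin m → X) × X)) := by
      have e1 : (ξc i - c⁻¹ • ℓ₂c i) t = ξc i t - c⁻¹ * ℓ₂c i t := rfl
      rw [e1, hℓ₂capp, ← hsp]
      field_simp
      ring
    rw [hval]
    have : 0 ≤ c⁻¹ * g ((Pi.single i t, 0) : (Fin m → X) × X) :=
      mul_nonneg (inv_nonneg.mpr hcpos.le) hg0
    linarith
  have hmemN : (xn - c⁻¹ • ℓ₂n) ∈ clarkeNormal Ωn ωn := by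
    intro t ht
    have hKmem : ((0, t) : (Fin m → X) × X) ∈ K := by
      refine ⟨fun j => ?_, ht⟩
      show (0:X) ∈ clarkeTangent (Ω j) (ω j)
      exact clarkeTangent_zero
    have hg0 := hgK _ hKmem
    have hsp := hsplit ((0, t))
    rw [hℓ₁n t] at hsp
    have hval : (xn - c⁻¹ • ℓ₂n) t = -(c⁻¹ * g ((0, t) : (Fin m → X) × X)) := by
      have e1 : (xn - c⁻¹ • ℓ₂n) t = -(∑ i, ξc i t) - c⁻¹ * ℓ₂n t := by
        rw [hxndef]
        show (-(∑ i, ξc i) - c⁻¹ • ℓ₂n) t = _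
        rw [ContinuousLinearMap.sub_apply, ContinuousLinearMap.neg_apply,
          ContinuousLinearMap.smul_apply, ContinuousLinearMap.sum_apply, smul_eq_mul]
      rw [e1, hℓ₂napp, ← hsp]
      field_simp
      ring
    rw [hval]
    have : 0 ≤ c⁻¹ * g ((0, t) : (Fin m → X) × X) :=
      mul_nonneg (inv_nonneg.mpr hcpos.le) hg0
    linarith
  -- distance estimates
  have hdistI : ∀ i, Metric.infDist (ξc i) (clarkeNormal (Ω i) (ω i)) ≤ c⁻¹ * ‖ℓ₂c i‖ := by
    intro i
    refine (Metric.infDist_le_dist_of_mem (hmemI i)).trans ?_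
    rw [dist_eq_norm]
    have e1 : ξc i - (ξc i - c⁻¹ • ℓ₂c i) = c⁻¹ • ℓ₂c i := by abel
    rw [e1]
    rw [norm_smul c⁻¹ (ℓ₂c i), Real.norm_eq_abs, abs_of_nonneg (inv_nonneg.mpr hcpos.le)]
  have hdistN : Metric.infDist xn (clarkeNormal Ωn ωn) ≤ c⁻¹ * ‖ℓ₂n‖ := by
    refine (Metric.infDist_le_dist_of_mem hmemN).trans ?_
    rw [dist_eq_norm]
    have e1 : xn - (xn - c⁻¹ • ℓ₂n) = c⁻¹ • ℓ₂n := by abel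
    rw [e1]
    rw [norm_smul c⁻¹ ℓ₂n, Real.norm_eq_abs, abs_of_nonneg (inv_nonneg.mpr hcpos.le)]
  -- dual estimate
  have hdual : lam * (∑ i, ‖ℓ₂c i‖) + eta * ‖ℓ₂n‖ ≤ ε' / θ := by
    rw [le_div_iff₀ hθpos]
    apply le_of_forall_pos_le_add
    intro δ0 hδ0
    set δ := δ0 / (θ * lam * m + θ * eta + 1) with hδdef
    have hden : 0 < θ * lam * m + θ * eta + 1 := by positivity
    have hδpos : 0 < δ := div_pos hδ0 hden
    choose xx hxx1 hxx2 using fun i => happrox (ℓ₂c i) δ hδpos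
    obtain ⟨xxn, hxxn1, hxxn2⟩ := happrox ℓ₂n δ hδpos
    set z : (Fin m → X) × X := ((θ * lam) • (fun i => xx i), (θ * eta) • xxn) with hzdef
    have hzval : ℓ₂ z = (θ * lam) * (∑ i, ℓ₂c i (xx i)) + (θ * eta) * ℓ₂n xxn := by
      have e0 : z = ((θ * lam) • ((fun i => xx i, 0) : (Fin m → X) × X))
          + ((θ * eta) • ((0, xxn) : (Fin m → X) × X)) := by
        rw [hzdef, Prod.smul_mk, Prod.smul_mk, Prod.mk_add_mk, smul_zero, smul_zero,
          add_zero, zero_add]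
      have hfirst : ℓ₂ ((fun i => xx i, 0) : (Fin m → X) × X) = ∑ i, ℓ₂c i (xx i) := by
        have e1 : ((fun i => xx i, 0) : (Fin m → X) × X)
            = ∑ i, ((Pi.single i (xx i), 0) : (Fin m → X) × X) := by
          apply Prod.ext
          · rw [Prod.fst_sum]
            exact (Finset.univ_sum_single _).symm
          · rw [Prod.snd_sum]
            simp
        rw [e1, map_sum]
        exact Finset.sum_congr rfl fun i _ => (hℓ₂capp i (xx i)).symm
      rw [e0, map_add, map_smul, map_smul, smul_eq_mul, smul_eq_mul, hfirst, ← hℓ₂napp xxn]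
    have hzbound : ℓ₂ z ≤ ε' := by
      refine (hℓ₂le z).trans ?_
      show ε' * Dn z ≤ ε'
      have hDnz : Dn z ≤ 1 := by
        show max (α * nmax z.1) (β * ‖z.2‖) ≤ 1
        apply max_le
        · have e1 : z.1 = (θ * lam) • (fun i => xx i) := rfl
          rw [e1, nmax_smul (by positivity : (0:ℝ) ≤ θ * lam)]
          have h2 : nmax (fun i => xx i) ≤ 1 := nmax_le fun i => hxx1 i
          rw [hα]
          calc (θ * lam)⁻¹ * (θ * lam * nmax fun i => xx i)
              = nmax (fun i => xx i) := by field_simp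
            _ ≤ 1 := h2
        · have e2 : z.2 = (θ * eta) • xxn := rfl
          rw [e2, norm_smul, Real.norm_eq_abs, abs_of_pos (by positivity : (0:ℝ) < θ * eta)]
          rw [hβ]
          calc (θ * eta)⁻¹ * (θ * eta * ‖xxn‖) = ‖xxn‖ := by field_simp
            _ ≤ 1 := hxxn1
      calc ε' * Dn z ≤ ε' * 1 := mul_le_mul_of_nonneg_left hDnz hε'pos.le
        _ = ε' := mul_one ε'
    have hlow : (θ * lam) * (∑ i, (‖ℓ₂c i‖ - δ)) + (θ * eta) * (‖ℓ₂n‖ - δ) ≤ ℓ₂ z := by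
      rw [hzval]
      have h1 : ∑ i, (‖ℓ₂c i‖ - δ) ≤ ∑ i, ℓ₂c i (xx i) :=
        Finset.sum_le_sum fun i _ => (hxx2 i).le
      have h2 : ‖ℓ₂n‖ - δ ≤ ℓ₂n xxn := (hxxn2).le
      have h3 : 0 ≤ θ * lam := by positivity
      have h4 : 0 ≤ θ * eta := by positivity
      exact add_le_add (mul_le_mul_of_nonneg_left h1 h3) (mul_le_mul_of_nonneg_left h2 h4)
    rw [Finset.sum_sub_distrib, Finset.sum_const, Finset.card_univ, Fintype.card_fin,
      nsmul_eq_mul] at hlow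
    have hδb : δ * (θ * lam * m + θ * eta) ≤ δ0 := by
      rw [hδdef]
      rw [div_mul_eq_mul_div, div_le_iff₀ hden]
      have h5 : θ * lam * m + θ * eta ≤ θ * lam * ↑m + θ * eta + 1 := by linarith
      calc δ0 * (θ * lam * ↑m + θ * eta) ≤ δ0 * (θ * lam * ↑m + θ * eta + 1) :=
            mul_le_mul_of_nonneg_left h5 hδ0.le
        _ = δ0 * (θ * lam * ↑m + θ * eta + 1) := rfl
    have hexp : θ * lam * (∑ i, ‖ℓ₂c i‖ - (m:ℝ) * δ) + θ * eta * (‖ℓ₂n‖ - δ)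
        = θ * lam * (∑ i, ‖ℓ₂c i‖) + θ * eta * ‖ℓ₂n‖ - δ * (θ * lam * ↑m + θ * eta) := by
      ring
    rw [hexp] at hlow
    have hgoal' : (lam * (∑ i, ‖ℓ₂c i‖) + eta * ‖ℓ₂n‖) * θ
        = θ * lam * (∑ i, ‖ℓ₂c i‖) + θ * eta * ‖ℓ₂n‖ := by ring
    rw [hgoal']
    linarith [hlow, hzbound, hδb]
  -- final assembly
  have hgoalσ : (⨆ i, ‖ωn + a i - ω i‖) = σ := rfl
  refine ⟨ω, ωn, hballω, hballωn, ?_, ?_, ξc, xn, ?_, hsum1, ?_, ?_⟩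
  · rw [hgoalσ]; exact hσpos
  · rw [hgoalσ]; exact hσs₀
  · rw [hxndef]; simp
  · show ∑ i, ξc i (v i) = ⨆ i, ‖ωn + a i - ω i‖
    rw [hgoalσ, ← hξsum, hξveq]
  · rw [hgoalσ]
    show c * (lam * (∑ i, Metric.infDist (ξc i) (clarkeNormal (Ω i) (ω i)))
      + eta * Metric.infDist xn (clarkeNormal Ωn ωn)) < ε
    have hsum_le : ∑ i, Metric.infDist (ξc i) (clarkeNormal (Ω i) (ω i))
        ≤ c⁻¹ * ∑ i, ‖ℓ₂c i‖ := by
      rw [Finset.mul_sum]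
      exact Finset.sum_le_sum fun i _ => hdistI i
    have h1 : c * (lam * (∑ i, Metric.infDist (ξc i) (clarkeNormal (Ω i) (ω i)))
        + eta * Metric.infDist xn (clarkeNormal Ωn ωn))
        ≤ c * (lam * (c⁻¹ * ∑ i, ‖ℓ₂c i‖) + eta * (c⁻¹ * ‖ℓ₂n‖)) := by
      apply mul_le_mul_of_nonneg_left _ hcpos.le
      exact add_le_add (mul_le_mul_of_nonneg_left hsum_le hlam.le)
        (mul_le_mul_of_nonneg_left hdistN heta.le)
    have h2 : c * (lam * (c⁻¹ * ∑ i, ‖ℓ₂c i‖) + eta * (c⁻¹ * ‖ℓ₂n‖))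
        = lam * (∑ i, ‖ℓ₂c i‖) + eta * ‖ℓ₂n‖ := by
      field_simp
    have h3 : ε' / θ < ε := by
      rw [div_lt_iff₀ hθpos]
      linarith [hε'θ, mul_comm θ ε]
    linarith [hdual]
end
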